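/- arXiv:0805.1964 — 4 statements merged into one kernel-verified Lean document; each statement's English description precedes it below -/
import Mathlib

section
/- For all n ≥ 0 and k ≥ 1, the number of 132-avoiding permutations of length n avoiding the increasing pattern 12···k equals the number of alternating, 132-avoiding permutations of length 2n+1 avoiding the increasing pattern 12···(k+1): s_n(132, 12···k) = a_{2n+1}(132, 12···(k+1)). -/
set_option maxRecDepth 10000


open Equiv

/-- The word `w` contains the pattern `p`: some subsequence of `w` is
order-isomorphic to `p`. -/
def Contains {α β : Type*} [LT α] [LT β] {n k : ℕ} (w : Fin n → α) (p : Fin k → β) : Prop :=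
  ∃ f : Fin k → Fin n, StrictMono f ∧ ∀ i j : Fin k, p i < p j ↔ w (f i) < w (f j)

/-- The pattern 132 (written with 0-indexed values as (0,2,1)). -/
def pat132 : Fin 3 → ℕ := ![0, 2, 1]

/-- `w` avoids the pattern 132. -/
def Avoids132 {n : ℕ} (w : Equiv.Perm (Fin n)) : Prop :=
  ¬ Contains (fun i => w i) pat132

/-- Pattern containment between permutations. -/
def ContainsP {n k : ℕ} (w : Equiv.Perm (Fin n)) (p : Equiv.Perm (Fin k)) : Prop :=
  Contains (fun i => w i) (fun i => p i)

/-- `w` is (up-down) alternating: `w 0 < w 1 > w 2 < w 3 > ⋯` (0-indexed). -/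
def Alternating {m : ℕ} (w : Equiv.Perm (Fin m)) : Prop :=
  ∀ i : ℕ, ∀ h : i + 1 < m,
    (i % 2 = 0 → w ⟨i, by omega⟩ < w ⟨i + 1, h⟩) ∧
    (i % 2 = 1 → w ⟨i + 1, h⟩ < w ⟨i, by omega⟩)

/-- The even-indexed (in 1-indexed terms: `w₂, w₄, …, w₂ₙ`) entries of `w`
are order-isomorphic to `u`. -/
def OrderIsoEven {n : ℕ} (w : Equiv.Perm (Fin (2 * n + 1))) (u : Equiv.Perm (Fin n)) : Prop :=
  ∀ i j : Fin n, u i < u j ↔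
    w ⟨2 * (i : ℕ) + 1, by have := i.isLt; omega⟩ < w ⟨2 * (j : ℕ) + 1, by have := j.isLt; omega⟩

open Equiv Finset

namespace Stmt14

/-- ℕ-valued word of a permutation of `Fin m`. -/
def pv {m : ℕ} (w : Perm (Fin m)) : ℕ → ℕ := fun q => if h : q < m then (w ⟨q, h⟩ : ℕ) else 0

/-- increasing subsequence of length `k` within first `N` letters. -/
def Chain (x : ℕ → ℕ) (N k : ℕ) : Prop :=
  ∃ g : ℕ → ℕ, (∀ a b, a < b → b < k → g a < g b) ∧ (∀ a, a < k → g a < N) ∧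
    (∀ a b, a < b → b < k → x (g a) < x (g b))

def Has132N (x : ℕ → ℕ) (N : ℕ) : Prop :=
  ∃ q1 q2 q3, q1 < q2 ∧ q2 < q3 ∧ q3 < N ∧ x q1 < x q3 ∧ x q3 < x q2

lemma pv_lt {m : ℕ} (w : Perm (Fin m)) {q : ℕ} (h : q < m) : pv w q < m := by
  simp only [pv, dif_pos h]; exact (w ⟨q, h⟩).isLt

lemma pv_inj {m : ℕ} (w : Perm (Fin m)) {q q' : ℕ} (h : q < m) (h' : q' < m)
    (he : pv w q = pv w q') : q = q' := by
  simp only [pv, dif_pos h, dif_pos h'] at he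
  have : w ⟨q, h⟩ = w ⟨q', h'⟩ := Fin.val_injective he
  have := w.injective this
  exact congrArg Fin.val this

lemma pv_surj {m : ℕ} (w : Perm (Fin m)) {t : ℕ} (h : t < m) : ∃ q, q < m ∧ pv w q = t := by
  refine ⟨(w.symm ⟨t, h⟩ : Fin m), (w.symm ⟨t, h⟩).isLt, ?_⟩
  simp only [pv, dif_pos (w.symm ⟨t, h⟩).isLt]
  simp

/-- cards of filters over `range m` vs `univ : Finset (Fin m)`. -/
lemma card_range_filter {m : ℕ} (p : ℕ → Prop) [DecidablePred p] :
    ((range m).filter p).card = (univ.filter fun q : Fin m => p q.val).card := by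
  symm
  refine Finset.card_nbij (fun x : Fin m => (x : ℕ)) ?_ ?_ ?_
  · intro a ha
    simp only [mem_coe, mem_filter, mem_univ, true_and] at ha
    simp [mem_filter, a.isLt, ha]
  · intro a _ b _ hab
    exact Fin.val_injective hab
  · intro x hx
    simp only [mem_coe, mem_filter, mem_range] at hx
    exact ⟨⟨x, hx.1⟩, by simp [mem_filter, hx.2], rfl⟩

lemma card_filter_comp_perm {m : ℕ} (σ : Perm (Fin m)) (p : Fin m → Prop) [DecidablePred p] :
    (univ.filter fun j => p (σ j)).card = (univ.filter p).card := by
  have himg : Finset.image σ (univ.filter fun j => p (σ j)) = univ.filter p := by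
    ext y
    simp only [mem_image, mem_filter, mem_univ, true_and]
    constructor
    · rintro ⟨j, hj, rfl⟩; exact hj
    · intro hy; exact ⟨σ.symm y, by simpa using hy, by simp⟩
  rw [← himg, Finset.card_image_of_injective _ σ.injective]

/-- rank identity for permutation values -/
lemma count_lt_perm {m : ℕ} (σ : Perm (Fin m)) (x : Fin m) :
    (univ.filter fun j => σ j < σ x).card = (σ x : ℕ) := by
  rw [card_filter_comp_perm σ (fun y => y < σ x)]
  have : (univ.filter fun y : Fin m => y < σ x) = Finset.Iio (σ x) := by
    ext y; simp
  rw [this, Fin.card_Iio]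

lemma count_gt_perm {m : ℕ} (σ : Perm (Fin m)) (x : Fin m) :
    (univ.filter fun j => σ x < σ j).card = m - 1 - (σ x : ℕ) := by
  rw [card_filter_comp_perm σ (fun y => σ x < y)]
  have : (univ.filter fun y : Fin m => σ x < y) = Finset.Ioi (σ x) := by
    ext y; simp
  rw [this, Fin.card_Ioi]

lemma perm_eq_of_orderIso {m : ℕ} (σ τ : Perm (Fin m))
    (h : ∀ i j, σ i < σ j ↔ τ i < τ j) : σ = τ := by
  apply Equiv.ext
  intro x
  apply Fin.val_injective
  rw [← count_lt_perm σ x, ← count_lt_perm τ x]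
  congr 1
  apply Finset.filter_congr
  intro j _
  simpa using h j x


section Bridges

lemma one_lt_iff {k : ℕ} (i j : Fin k) : (1 : Perm (Fin k)) i < (1 : Perm (Fin k)) j ↔ i < j := by
  simp

lemma contains132_iff {m : ℕ} (w : Perm (Fin m)) :
    Contains (fun i => w i) pat132 ↔
      ∃ q1 q2 q3 : Fin m, q1 < q2 ∧ q2 < q3 ∧ w q1 < w q3 ∧ w q3 < w q2 := by
  constructor
  · rintro ⟨f, hf, hiff⟩
    refine ⟨f 0, f 1, f 2, hf (by decide), hf (by decide), ?_, ?_⟩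
    · exact (hiff 0 2).mp (by decide)
    · exact (hiff 2 1).mp (by decide)
  · rintro ⟨q1, q2, q3, h12, h23, hv13, hv32⟩
    have hv12 : w q1 < w q2 := lt_trans hv13 hv32
    refine ⟨![q1, q2, q3], ?_, ?_⟩
    · intro i j hij
      fin_cases i <;> fin_cases j <;>
        first
          | exact absurd hij (by decide)
          | exact h12
          | exact h23
          | exact lt_trans h12 h23
    · intro i j
      fin_cases i <;> fin_cases j <;> constructor <;> intro h <;>
        first
          | exact hv12
          | exact hv13
          | exact hv32
          | exact absurd h (lt_irrefl _)
          | exact absurd h (lt_asymm hv12)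
          | exact absurd h (lt_asymm hv13)
          | exact absurd h (lt_asymm hv32)
          | exact absurd h (by decide)
          | decide

lemma pv_eq {m : ℕ} (w : Perm (Fin m)) {q : ℕ} (h : q < m) : pv w q = (w ⟨q, h⟩ : ℕ) :=
  dif_pos h

lemma avoids132_iff {m : ℕ} (w : Perm (Fin m)) :
    Avoids132 w ↔ ¬ Has132N (pv w) m := by
  rw [Avoids132, contains132_iff]
  constructor
  · intro h ⟨q1, q2, q3, h12, h23, h3, hv13, hv32⟩
    have h1 : q1 < m := by omega
    have h2 : q2 < m := by omega
    rw [pv_eq w h1, pv_eq w h3] at hv13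
    rw [pv_eq w h2, pv_eq w h3] at hv32
    exact h ⟨⟨q1, h1⟩, ⟨q2, h2⟩, ⟨q3, h3⟩, h12, h23, hv13, hv32⟩
  · intro h ⟨q1, q2, q3, h12, h23, hv13, hv32⟩
    refine h ⟨q1, q2, q3, h12, h23, q3.isLt, ?_, ?_⟩
    · rw [pv_eq w q1.isLt, pv_eq w q3.isLt]; exact hv13
    · rw [pv_eq w q2.isLt, pv_eq w q3.isLt]; exact hv32

lemma containsP_one_iff {m k : ℕ} (w : Perm (Fin m)) :
    ContainsP w (1 : Perm (Fin k)) ↔ Chain (pv w) m k := by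
  constructor
  · rintro ⟨f, hf, hiff⟩
    refine ⟨fun a => if h : a < k then (f ⟨a, h⟩ : ℕ) else 0, ?_, ?_, ?_⟩
    · intro a b hab hb
      simp only [dif_pos hb, dif_pos (lt_trans hab hb)]
      exact hf (show (⟨a, lt_trans hab hb⟩ : Fin k) < ⟨b, hb⟩ from hab)
    · intro a ha
      simp only [dif_pos ha]; exact (f ⟨a, ha⟩).isLt
    · intro a b hab hb
      have ha := lt_trans hab hb
      simp only [dif_pos hb, dif_pos ha]
      rw [pv_eq w (f ⟨a, ha⟩).isLt, pv_eq w (f ⟨b, hb⟩).isLt]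
      have : (1 : Perm (Fin k)) ⟨a, ha⟩ < (1 : Perm (Fin k)) ⟨b, hb⟩ := by
        simpa using (show (⟨a, ha⟩ : Fin k) < ⟨b, hb⟩ from hab)
      exact (hiff ⟨a, ha⟩ ⟨b, hb⟩).mp this
  · rintro ⟨g, hg, hgN, hgx⟩
    refine ⟨fun i => ⟨g i, hgN i i.isLt⟩, ?_, ?_⟩
    · intro a b hab
      exact hg a b hab b.isLt
    · intro i j
      have key : ∀ a b : Fin k, a < b → w ⟨g a, hgN a a.isLt⟩ < w ⟨g b, hgN b b.isLt⟩ := by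
        intro a b hab
        have := hgx a b hab b.isLt
        rw [pv_eq w (hgN a a.isLt), pv_eq w (hgN b b.isLt)] at this
        exact this
      simp only [one_lt_iff]
      constructor
      · exact key i j
      · intro h
        rcases lt_trichotomy i j with hlt | heq | hgt
        · exact hlt
        · subst heq; exact absurd h (lt_irrefl _)
        · exact absurd (lt_trans h (key j i hgt)) (lt_irrefl _)

lemma alternating_iff {m : ℕ} (w : Perm (Fin m)) :
    Alternating w ↔ ∀ i, i + 1 < m →
      (i % 2 = 0 → pv w i < pv w (i + 1)) ∧ (i % 2 = 1 → pv w (i + 1) < pv w i) := by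
  constructor
  · intro h i hi
    obtain ⟨h0, h1⟩ := h i hi
    have hi' : i < m := by omega
    rw [pv_eq w hi', pv_eq w hi]
    exact ⟨fun hp => h0 hp, fun hp => h1 hp⟩
  · intro h i hi
    obtain ⟨h0, h1⟩ := h i hi
    have hi' : i < m := by omega
    rw [pv_eq w hi', pv_eq w hi] at h0 h1
    exact ⟨fun hp => h0 hp, fun hp => h1 hp⟩

end Bridges

section Construction

variable {n : ℕ} (u : Perm (Fin n))

/-- number of smaller earlier entries -/
def bC (i : ℕ) : ℕ := ((range i).filter fun j => pv u j < pv u i).card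
/-- number of bigger earlier entries -/
def aC (i : ℕ) : ℕ := ((range i).filter fun j => pv u i < pv u j).card
def cC (i : ℕ) : ℕ := n + 1 + pv u i + bC u i
/-- peak values -/
def PC (i : ℕ) : ℕ := cC u i - i
def MC : ℕ → ℕ
  | 0 => cC u 0
  | (i+1) => if i + 1 < n then min (MC i) (cC u (i+1)) else MC i
/-- valley values -/
def VC (i : ℕ) : ℕ := MC u i - 1 - i
/-- the alternating word -/
def WC (q : ℕ) : ℕ := if q % 2 = 1 then PC u (q / 2) else VC u (q / 2)

lemma WC_even (t : ℕ) : WC u (2 * t) = VC u t := by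
  have h1 : (2 * t) % 2 = 0 := by omega
  have h2 : 2 * t / 2 = t := by omega
  simp [WC, h1, h2]

lemma WC_odd (t : ℕ) : WC u (2 * t + 1) = PC u t := by
  have h1 : (2 * t + 1) % 2 = 1 := by omega
  have h2 : (2 * t + 1) / 2 = t := by omega
  simp [WC, h1, h2]

lemma uv_tri {i j : ℕ} (hi : i < n) (hj : j < n) (hij : i ≠ j) :
    pv u i < pv u j ∨ pv u j < pv u i := by
  rcases lt_trichotomy (pv u i) (pv u j) with h | h | h
  · exact Or.inl h
  · exact absurd (pv_inj u hi hj h) hij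
  · exact Or.inr h

lemma ab_sum {i : ℕ} (hi : i < n) : aC u i + bC u i = i := by
  classical
  have h := Finset.card_filter_add_card_filter_not
    (s := range i) (p := fun j => pv u i < pv u j)
  rw [Finset.card_range] at h
  have : (range i).filter (fun j => ¬ pv u i < pv u j) =
      (range i).filter (fun j => pv u j < pv u i) := by
    apply Finset.filter_congr
    intro j hj
    simp only [mem_range] at hj
    have hji : j ≠ i := by omega
    rcases uv_tri u (by omega) hi hji with h' | h'
    · simp [h', not_lt_of_gt h']
    · simp [h', not_lt_of_gt h']
  rw [this] at h
  exact h

lemma count_gt_range {i : ℕ} (hi : i < n) :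
    ((range n).filter fun j => pv u i < pv u j).card = n - 1 - pv u i := by
  rw [card_range_filter]
  have : (univ.filter fun q : Fin n => pv u i < pv u q.val) =
      (univ.filter fun q : Fin n => u ⟨i, hi⟩ < u q) := by
    apply Finset.filter_congr
    intro q _
    rw [pv_eq u hi, pv_eq u q.isLt]
    constructor
    · intro h; exact h
    · intro h; exact h
  rw [this, count_gt_perm u ⟨i, hi⟩, pv_eq u hi]

lemma aC_le {i : ℕ} (hi : i < n) : aC u i + pv u i + 1 ≤ n := by
  have h1 : aC u i ≤ ((range n).filter fun j => pv u i < pv u j).card := by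
    apply Finset.card_le_card
    exact Finset.filter_subset_filter _ (Finset.range_subset_range.mpr (by omega))
  rw [count_gt_range u hi] at h1
  have h2 := pv_lt u hi
  omega

lemma bC_le (i : ℕ) : bC u i ≤ i := by
  have := Finset.card_filter_le (range i) (fun j => pv u j < pv u i)
  simpa [bC] using this

lemma cC_ge (i : ℕ) : n + 1 ≤ cC u i := by
  simp only [cC]; omega

lemma PC_add {i : ℕ} (hi : i < n) : PC u i + i = cC u i := by
  have := cC_ge u i
  simp only [PC]; omega

lemma PC_eq {i : ℕ} (hi : i < n) : PC u i + aC u i = n + 1 + pv u i := by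
  have h1 := PC_add u hi
  have h2 := ab_sum u hi
  simp only [cC] at h1
  omega

lemma PC_le {i : ℕ} (hi : i < n) : PC u i ≤ 2 * n := by
  have h1 := PC_add u hi
  have h2 := bC_le u i
  have h3 := pv_lt u hi
  simp only [cC] at h1
  omega

lemma PC_pos {i : ℕ} (hi : i < n) : 2 ≤ PC u i := by
  have h1 := PC_add u hi
  have := cC_ge u i
  omega

lemma L1 (H : ¬ Has132N (pv u) n) {i j : ℕ} (hi : i < n) (hj : j < n)
    (hij : pv u i < pv u j) : aC u j ≤ aC u i ∧ PC u i < PC u j := by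
  have ha : aC u j ≤ aC u i := by
    apply Finset.card_le_card
    intro l hl
    simp only [mem_filter, mem_range] at hl ⊢
    obtain ⟨hlj, hvl⟩ := hl
    have hln : l < n := by omega
    have hli : l < i := by
      by_contra hc
      push_neg at hc
      rcases eq_or_lt_of_le hc with heq | hlt
      · subst heq; omega
      · exact H ⟨i, l, j, hlt, hlj, hj, hij, hvl⟩
    exact ⟨hli, lt_trans hij hvl⟩
  refine ⟨ha, ?_⟩
  have h1 := PC_eq u hi
  have h2 := PC_eq u hj
  omega

lemma PC_iff (H : ¬ Has132N (pv u) n) {i j : ℕ} (hi : i < n) (hj : j < n) :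
    pv u i < pv u j ↔ PC u i < PC u j := by
  constructor
  · intro h; exact (L1 u H hi hj h).2
  · intro h
    rcases lt_trichotomy i j with hij | rfl | hij
    · rcases uv_tri u hi hj (by omega) with h' | h'
      · exact h'
      · exact absurd (L1 u H hj hi h').2 (by omega)
    · omega
    · rcases uv_tri u hi hj (by omega) with h' | h'
      · exact h'
      · exact absurd (L1 u H hj hi h').2 (by omega)

lemma MC_le {i j : ℕ} (hj : j < n) (hji : j ≤ i) : MC u i ≤ cC u j := by
  induction i with
  | zero =>
    have : j = 0 := by omega
    subst this
    simp [MC]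
  | succ i ih =>
    rcases Nat.lt_or_ge j (i + 1) with h | h
    · have := ih (by omega)
      simp only [MC]
      split
      · exact le_trans (min_le_left _ _) this
      · exact this
    · have : j = i + 1 := by omega
      subst this
      simp only [MC, if_pos hj]
      exact min_le_right _ _

lemma MC_ge (i : ℕ) : n + 1 ≤ MC u i := by
  induction i with
  | zero => simpa [MC] using cC_ge u 0
  | succ i ih =>
    simp only [MC]
    split
    · exact le_min ih (cC_ge u _)
    · exact ih

lemma MC_mono {i j : ℕ} (hij : i ≤ j) : MC u j ≤ MC u i := by
  induction j with
  | zero =>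
    have hi0 : i = 0 := by omega
    subst hi0
    exact le_refl _
  | succ j ih =>
    rcases Nat.lt_or_ge i (j + 1) with h | h
    · have := ih (by omega)
      simp only [MC]
      split
      · exact le_trans (min_le_left _ _) this
      · exact this
    · have : i = j + 1 := by omega
      subst this
      exact le_refl _

lemma MC_mem (hn : 0 < n) (i : ℕ) :
    ∃ r, r ≤ i ∧ r < n ∧ MC u i = cC u r := by
  induction i with
  | zero => exact ⟨0, le_refl _, hn, rfl⟩
  | succ i ih =>
    obtain ⟨r, hr1, hr2, hr3⟩ := ih
    simp only [MC]
    split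
    · rcases le_total (MC u i) (cC u (i + 1)) with h | h
      · exact ⟨r, by omega, hr2, by rw [min_eq_left h]; exact hr3⟩
      · next h' => exact ⟨i + 1, le_refl _, h', by rw [min_eq_right h]⟩
    · exact ⟨r, by omega, hr2, hr3⟩

lemma VC_add {i : ℕ} (hi : i ≤ n) : VC u i + 1 + i = MC u i := by
  have := MC_ge u i
  simp only [VC]; omega

lemma VC_dec {i j : ℕ} (hij : i < j) (hj : j ≤ n) : VC u j + (j - i) ≤ VC u i := by
  have h1 := VC_add u hj
  have h2 := VC_add u (le_of_lt (lt_of_lt_of_le hij hj))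
  have h3 := MC_mono u (le_of_lt hij)
  omega

lemma VP {i : ℕ} (hi : i < n) : VC u i < PC u i := by
  have h1 := PC_add u hi
  have h2 := VC_add u (le_of_lt hi)
  have h3 := MC_le u hi (le_refl i)
  omega

lemma PV_succ {i : ℕ} (hi : i + 1 ≤ n) : VC u (i + 1) + 2 ≤ PC u i := by
  have h1 := PC_add u (by omega : i < n)
  have h2 := VC_add u hi
  have h3 := MC_le u (by omega : i < n) (by omega : i ≤ i + 1)
  omega

lemma VC_le (hn : 0 < n) {i : ℕ} (hi : i ≤ n) : VC u i + 1 ≤ 2 * n := by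
  have h1 := VC_add u hi
  have h2 := MC_le u hn (by omega : 0 ≤ i)
  have h3 : bC u 0 = 0 := by simp [bC]
  have h4 := pv_lt u hn
  simp only [cC, h3] at h2
  omega

/-- everything before position 2m is bigger than the valley there -/
lemma Eii {m q : ℕ} (hm : m ≤ n) (hq : q < 2 * m) : VC u m < WC u q := by
  rcases Nat.even_or_odd q with ⟨t, ht⟩ | ⟨t, ht⟩
  · subst ht
    have ht' : t < m := by omega
    rw [show t + t = 2 * t by omega, WC_even]
    have := VC_dec u ht' hm
    omega
  · subst ht
    have ht' : t < m := by omega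
    rw [WC_odd]
    have h1 := PC_add u (by omega : t < n)
    have h2 := VC_add u hm
    have h3 := MC_le u (by omega : t < n) (by omega : t ≤ m)
    omega

/-- the master lemma -/
lemma L2 (H : ¬ Has132N (pv u) n) {r m j : ℕ} (hj : j < n) (hrm : r ≤ m) (hmj : m < j)
    (hmin : ∀ t, t ≤ m → t < n → cC u r ≤ cC u t)
    (hyp : cC u r + j ≤ cC u j + m + 1) :
    pv u r < pv u j ∧ cC u r + (j - r) + 1 ≤ cC u j := by
  have hr : r < n := by omega
  have hrj : pv u r ≠ pv u j := fun h => by have := pv_inj u hr hj h; omega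
  -- rule out pv u j < pv u r
  have hkey : pv u r < pv u j := by
    rcases lt_or_gt_of_ne hrj with h | hjr
    · exact h
    exfalso
    -- Claim A : no s in (r, m] with pv u s < pv u j
    have claimA : ∀ s, r < s → s ≤ m → ¬ (pv u s < pv u j) := by
      by_contra hc
      push_neg at hc
      obtain ⟨s0, hs0r, hs0m, hs0v⟩ := hc
      set T := (range (m + 1)).filter (fun s => r < s ∧ pv u s < pv u j) with hT
      have hTne : T.Nonempty := ⟨s0, by simp [hT, mem_filter, mem_range]; exact ⟨by omega, hs0r, hs0v⟩⟩
      obtain ⟨s, hsT, hsmin⟩ := Finset.exists_min_image T (fun s => pv u s) hTne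
      simp only [hT, mem_filter, mem_range] at hsT
      obtain ⟨hsm, hrs, hsv⟩ := hsT
      have hsn : s < n := by omega
      have hge : cC u r ≤ cC u s := hmin s (by omega) hsn
      have hble : bC u s ≤ bC u r := by
        apply Finset.card_le_card
        intro l hl
        simp only [mem_filter, mem_range] at hl ⊢
        obtain ⟨hls, hlv⟩ := hl
        have hln : l < n := by omega
        have hlr : l < r := by
          by_contra hc'
          push_neg at hc'
          rcases eq_or_lt_of_le hc' with heq | hlt
          · subst heq; omega
          · -- r < l < s, l ∈ T with smaller value: contradiction with minimality
            have hlT : l ∈ T := by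
              simp [hT, mem_filter, mem_range]
              exact ⟨by omega, hlt, by omega⟩
            have := hsmin l hlT
            omega
        exact ⟨hlr, by omega⟩
      simp only [cC] at hge
      omega
    -- now bound bC u j
    have hble : bC u j ≤ bC u r + (j - m - 1) := by
      have hsub : (range j).filter (fun l => pv u l < pv u j) ⊆
          ((range r).filter (fun l => pv u l < pv u r)) ∪ (Finset.Ico (m + 1) j) := by
        intro l hl
        simp only [mem_filter, mem_range] at hl
        obtain ⟨hlj, hlv⟩ := hl
        simp only [Finset.mem_union, mem_filter, mem_range, Finset.mem_Ico]
        rcases Nat.lt_or_ge l r with h' | h'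
        · exact Or.inl ⟨h', by omega⟩
        · rcases eq_or_lt_of_le h' with heq | hlt
          · exfalso; subst heq; omega
          · rcases Nat.lt_or_ge m l with h'' | h''
            · exact Or.inr ⟨by omega, hlj⟩
            · exact absurd hlv (claimA l hlt h'')
      calc bC u j ≤ (((range r).filter (fun l => pv u l < pv u r)) ∪ (Finset.Ico (m + 1) j)).card :=
            Finset.card_le_card hsub
        _ ≤ bC u r + (j - m - 1) := by
            refine le_trans (Finset.card_union_le _ _) ?_
            rw [Nat.card_Ico]
            have : ((range r).filter (fun l => pv u l < pv u r)).card = bC u r := rfl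
            omega
    have e1 : cC u j = n + 1 + pv u j + bC u j := rfl
    have e2 : cC u r = n + 1 + pv u r + bC u r := rfl
    omega
  refine ⟨hkey, ?_⟩
  -- now all entries strictly between r and j are smaller than pv u j
  have hmid : ∀ s, r ≤ s → s < j → pv u s < pv u j := by
    intro s hrs hsj
    rcases eq_or_lt_of_le hrs with heq | hlt
    · subst heq; exact hkey
    · have hsn : s < n := by omega
      have hsnej : pv u s ≠ pv u j := fun h => by have := pv_inj u hsn hj h; omega
      rcases lt_or_gt_of_ne hsnej with h | h
      · exact h
      · exact absurd ⟨r, s, j, hlt, hsj, hj, hkey, h⟩ H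
  have hbge : bC u r + (j - r) ≤ bC u j := by
    have hsub : ((range r).filter (fun l => pv u l < pv u r)) ∪ (Finset.Ico r j) ⊆
        (range j).filter (fun l => pv u l < pv u j) := by
      intro l hl
      simp only [Finset.mem_union, mem_filter, mem_range, Finset.mem_Ico] at hl
      simp only [mem_filter, mem_range]
      rcases hl with ⟨hlr, hlv⟩ | ⟨hrl, hlj⟩
      · exact ⟨by omega, lt_trans hlv hkey⟩
      · exact ⟨hlj, hmid l hrl hlj⟩
    have hdisj : Disjoint ((range r).filter (fun l => pv u l < pv u r)) (Finset.Ico r j) := by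
      rw [Finset.disjoint_left]
      intro l hl hl'
      simp only [mem_filter, mem_range] at hl
      simp only [Finset.mem_Ico] at hl'
      omega
    have h1 := Finset.card_le_card hsub
    rw [Finset.card_union_of_disjoint hdisj, Nat.card_Ico] at h1
    simpa [bC] using h1
  simp only [cC]
  omega

/-- corollary: a later peak above an earlier valley dominates some early peak -/
lemma Kcor (H : ¬ Has132N (pv u) n) (hn : 0 < n) {m j : ℕ} (hmj : m < j) (hj : j < n)
    (hVP : VC u m < PC u j) :
    ∃ r, r ≤ m ∧ r < n ∧ PC u r < PC u j ∧ pv u r < pv u j := by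
  obtain ⟨r, hr1, hr2, hr3⟩ := MC_mem u hn m
  have hmin : ∀ t, t ≤ m → t < n → cC u r ≤ cC u t := by
    intro t ht htn
    rw [← hr3]; exact MC_le u htn ht
  have hva := VC_add u (by omega : m ≤ n)
  have hpa := PC_add u hj
  have hpar := PC_add u hr2
  have hyp : cC u r + j ≤ cC u j + m + 1 := by omega
  obtain ⟨h1, h2⟩ := L2 u H hj hr1 hmj hmin hyp
  exact ⟨r, hr1, hr2, by omega, h1⟩

lemma PC_ne_VC (H : ¬ Has132N (pv u) n) (hn : 0 < n) {i j : ℕ} (hi : i < n) (hj : j ≤ n) :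
    PC u i ≠ VC u j := by
  intro heq
  rcases le_or_gt i j with h | h
  · have h1 := PC_add u hi
    have h2 := VC_add u hj
    have h3 := MC_le u hi h
    omega
  · -- j < i
    obtain ⟨r, hr1, hr2, hr3⟩ := MC_mem u hn j
    have hmin : ∀ t, t ≤ j → t < n → cC u r ≤ cC u t := by
      intro t ht htn
      rw [← hr3]; exact MC_le u htn ht
    have hva := VC_add u hj
    have hpa := PC_add u hi
    have hyp : cC u r + i ≤ cC u i + j + 1 := by omega
    obtain ⟨h1, h2⟩ := L2 u H hi hr1 h hmin hyp
    omega

lemma WC_lt (hn : 0 < n) {q : ℕ} (hq : q ≤ 2 * n) : WC u q < 2 * n + 1 := by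
  rcases Nat.even_or_odd q with ⟨t, ht⟩ | ⟨t, ht⟩
  · subst ht
    rw [show t + t = 2 * t by omega, WC_even]
    have := VC_le u hn (by omega : t ≤ n)
    omega
  · subst ht
    rw [WC_odd]
    have := PC_le u (by omega : t < n)
    omega

lemma PC_injj (H : ¬ Has132N (pv u) n) {i j : ℕ} (hi : i < n) (hj : j < n)
    (h : PC u i = PC u j) : i = j := by
  by_contra hc
  rcases uv_tri u hi hj hc with h' | h'
  · exact absurd (L1 u H hi hj h').2 (by omega)
  · exact absurd (L1 u H hj hi h').2 (by omega)

lemma WC_inj (H : ¬ Has132N (pv u) n) (hn : 0 < n) {q q' : ℕ} (hq : q ≤ 2 * n)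
    (hq' : q' ≤ 2 * n) (h : WC u q = WC u q') : q = q' := by
  rcases Nat.even_or_odd q with ⟨t, ht⟩ | ⟨t, ht⟩ <;>
    rcases Nat.even_or_odd q' with ⟨t', ht'⟩ | ⟨t', ht'⟩ <;> subst ht <;> subst ht'
  · rw [show t + t = 2 * t by omega, WC_even, show t' + t' = 2 * t' by omega, WC_even] at h
    by_contra hc
    have hne : t ≠ t' := by omega
    rcases Nat.lt_or_ge t t' with h' | h'
    · have := VC_dec u h' (by omega : t' ≤ n); omega
    · have := VC_dec u (by omega : t' < t) (by omega : t ≤ n); omega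
  · rw [show t + t = 2 * t by omega, WC_even, WC_odd] at h
    exact absurd h.symm (PC_ne_VC u H hn (by omega) (by omega))
  · rw [WC_odd, show t' + t' = 2 * t' by omega, WC_even] at h
    exact absurd h (PC_ne_VC u H hn (by omega) (by omega))
  · rw [WC_odd, WC_odd] at h
    have := PC_injj u H (by omega : t < n) (by omega : t' < n) h
    omega

lemma altW : ∀ i, i + 1 < 2 * n + 1 →
    (i % 2 = 0 → WC u i < WC u (i + 1)) ∧ (i % 2 = 1 → WC u (i + 1) < WC u i) := by
  intro i hi
  constructor
  · intro hp
    obtain ⟨t, ht⟩ : ∃ t, i = 2 * t := ⟨i / 2, by omega⟩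
    subst ht
    rw [WC_even, WC_odd]
    exact VP u (by omega)
  · intro hp
    obtain ⟨t, ht⟩ : ∃ t, i = 2 * t + 1 := ⟨i / 2, by omega⟩
    subst ht
    rw [WC_odd, show 2 * t + 1 + 1 = 2 * (t + 1) by omega, WC_even]
    have := PV_succ u (by omega : t + 1 ≤ n)
    omega

lemma no132W (H : ¬ Has132N (pv u) n) (hn : 0 < n) : ¬ Has132N (WC u) (2 * n + 1) := by
  rintro ⟨q1, q2, q3, h12, h23, h3, hv13, hv32⟩
  -- q3 must be odd
  rcases Nat.even_or_odd q3 with ⟨l, hl⟩ | ⟨l, hl⟩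
  · subst hl
    rw [show l + l = 2 * l by omega, WC_even] at hv13
    have := Eii u (by omega : l ≤ n) (by omega : q1 < 2 * l)
    omega
  subst hl
  rw [WC_odd] at hv13 hv32
  have hln : l < n := by omega
  -- q2 must be odd
  rcases Nat.even_or_odd q2 with ⟨j, hj⟩ | ⟨j, hj⟩
  · subst hj
    rw [show j + j = 2 * j by omega, WC_even] at hv32
    have := Eii u (by omega : j ≤ n) (by omega : q1 < 2 * j)
    omega
  subst hj
  rw [WC_odd] at hv32
  have hjl : j < l := by omega
  have hjn : j < n := by omega
  -- q1 cases
  rcases Nat.even_or_odd q1 with ⟨i, hi⟩ | ⟨i, hi⟩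
  · subst hi
    rw [show i + i = 2 * i by omega, WC_even] at hv13
    have hij : i ≤ j := by omega
    obtain ⟨r, hr1, hr2, hr3, hr4⟩ := Kcor u H hn (by omega : i < l) hln hv13
    rcases Nat.lt_or_ge r j with hrj | hrj
    · refine H ⟨r, j, l, hrj, hjl, hln, hr4, ?_⟩
      exact (PC_iff u H hln hjn).mpr hv32
    · have : r = j := by omega
      subst this
      omega
  · subst hi
    rw [WC_odd] at hv13
    have hij : i < j := by omega
    exact H ⟨i, j, l, hij, hjl, hln,
      (PC_iff u H (by omega) hln).mpr hv13, (PC_iff u H hln hjn).mpr hv32⟩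

end Construction

section ChainLift

variable {n : ℕ} (u : Perm (Fin n))

lemma chainW_of_chain (H : ¬ Has132N (pv u) n) (hn : 0 < n) {k : ℕ} (hk : 1 ≤ k)
    (hc : Chain (pv u) n k) : Chain (WC u) (2 * n + 1) (k + 1) := by
  obtain ⟨g, hg, hgN, hgx⟩ := hc
  refine ⟨fun a => match a with | 0 => 2 * g 0 | (t + 1) => 2 * g t + 1, ?_, ?_, ?_⟩
  · intro a b hab hb
    match a, b with
    | 0, (t + 1) =>
      show 2 * g 0 < 2 * g t + 1
      rcases Nat.eq_zero_or_pos t with rfl | ht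
      · omega
      · have := hg 0 t (by omega) (by omega)
        omega
    | (s + 1), (t + 1) =>
      show 2 * g s + 1 < 2 * g t + 1
      have := hg s t (by omega) (by omega)
      omega
  · intro a ha
    match a with
    | 0 =>
      show 2 * g 0 < 2 * n + 1
      have := hgN 0 (by omega)
      omega
    | (t + 1) =>
      show 2 * g t + 1 < 2 * n + 1
      have := hgN t (by omega)
      omega
  · intro a b hab hb
    match a, b with
    | 0, (t + 1) =>
      show WC u (2 * g 0) < WC u (2 * g t + 1)
      rw [WC_even, WC_odd]
      have hVP := VP u (hgN 0 (by omega))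
      rcases Nat.eq_zero_or_pos t with rfl | ht
      · exact hVP
      · have hval := hgx 0 t (by omega) (by omega)
        have := (PC_iff u H (hgN 0 (by omega)) (hgN t (by omega))).mp hval
        omega
    | (s + 1), (t + 1) =>
      show WC u (2 * g s + 1) < WC u (2 * g t + 1)
      rw [WC_odd, WC_odd]
      have hval := hgx s t (by omega) (by omega)
      exact (PC_iff u H (hgN s (by omega)) (hgN t (by omega))).mp hval

lemma chain_of_chainW (H : ¬ Has132N (pv u) n) (hn : 0 < n) {k : ℕ} (hk : 1 ≤ k)
    (hc : Chain (WC u) (2 * n + 1) (k + 1)) : Chain (pv u) n k := by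
  obtain ⟨g, hg, hgN, hgx⟩ := hc
  -- all entries from index 1 on are odd positions (peaks)
  have hodd : ∀ a, 1 ≤ a → a < k + 1 → g a % 2 = 1 := by
    intro a ha hak
    by_contra hc'
    obtain ⟨t, ht⟩ : ∃ t, g a = 2 * t := ⟨g a / 2, by omega⟩
    have htn : t ≤ n := by have := hgN a hak; omega
    have h1 : g (a - 1) < g a := hg (a - 1) a (by omega) hak
    have h2 : WC u (g (a - 1)) < WC u (g a) := hgx (a - 1) a (by omega) hak
    rw [ht, WC_even] at h2
    have := Eii u htn (by omega : g (a - 1) < 2 * t)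
    omega
  have hpeak : ∀ a, 1 ≤ a → a < k + 1 → g a = 2 * (g a / 2) + 1 := by
    intro a ha hak
    have := hodd a ha hak
    omega
  have hjlt : ∀ a, 1 ≤ a → a < k + 1 → g a / 2 < n := by
    intro a ha hak
    have h1 := hgN a hak
    have h2 := hpeak a ha hak
    omega
  have hjval : ∀ a b, 1 ≤ a → a < b → b < k + 1 → pv u (g a / 2) < pv u (g b / 2) := by
    intro a b ha hab hbk
    have h2 := hgx a b hab hbk
    rw [hpeak a ha (by omega), hpeak b (by omega) hbk] at h2
    rw [WC_odd, WC_odd] at h2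
    exact (PC_iff u H (hjlt a ha (by omega)) (hjlt b (by omega) hbk)).mpr h2
  rcases Nat.even_or_odd (g 0) with ⟨t0, ht0⟩ | ⟨t0, ht0⟩
  · -- g 0 is a valley position
    have ht0' : g 0 = 2 * t0 := by omega
    have ht0n : t0 ≤ n := by have := hgN 0 (by omega); omega
    have hv0 : WC u (g 0) < WC u (g 1) := hgx 0 1 (by omega) (by omega)
    have hj0 : g 1 = 2 * (g 1 / 2) + 1 := hpeak 1 (le_refl _) (by omega)
    have hj0n : g 1 / 2 < n := hjlt 1 (le_refl _) (by omega)
    rw [ht0', WC_even, hj0, WC_odd] at hv0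
    have ht0j : t0 ≤ g 1 / 2 := by
      have := hg 0 1 (by omega) (by omega)
      omega
    rcases eq_or_lt_of_le ht0j with heq | hlt
    · -- drop the valley, the k peaks form the chain
      refine ⟨fun a => g (a + 1) / 2, ?_, ?_, ?_⟩
      · intro a b hab hb
        show g (a + 1) / 2 < g (b + 1) / 2
        have h1 := hpeak (a + 1) (by omega) (by omega)
        have h2 := hpeak (b + 1) (by omega) (by omega)
        have := hg (a + 1) (b + 1) (by omega) (by omega)
        omega
      · intro a ha
        show g (a + 1) / 2 < n
        exact hjlt (a + 1) (by omega) (by omega)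
      · intro a b hab hb
        show pv u (g (a + 1) / 2) < pv u (g (b + 1) / 2)
        exact hjval (a + 1) (b + 1) (by omega) (by omega) (by omega)
    · -- replace the valley by an earlier peak
      obtain ⟨r, hr1, hr2, hr3, hr4⟩ := Kcor u H hn hlt hj0n hv0
      refine ⟨fun a => match a with | 0 => r | (t + 1) => g (t + 2) / 2, ?_, ?_, ?_⟩
      · intro a b hab hb
        match a, b with
        | 0, (t + 1) =>
          show r < g (t + 2) / 2
          have h2 := hpeak (t + 2) (by omega) (by omega)
          have h3 : g 1 ≤ g (t + 2) := (hg 1 (t + 2) (by omega) (by omega)).le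
          omega
        | (s + 1), (t + 1) =>
          show g (s + 2) / 2 < g (t + 2) / 2
          have h1 := hpeak (s + 2) (by omega) (by omega)
          have h2 := hpeak (t + 2) (by omega) (by omega)
          have := hg (s + 2) (t + 2) (by omega) (by omega)
          omega
      · intro a ha
        match a with
        | 0 => exact hr2
        | (t + 1) =>
          show g (t + 2) / 2 < n
          exact hjlt (t + 2) (by omega) (by omega)
      · intro a b hab hb
        match a, b with
        | 0, (t + 1) =>
          show pv u r < pv u (g (t + 2) / 2)
          exact lt_trans hr4 (hjval 1 (t + 2) (le_refl _) (by omega) (by omega))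
        | (s + 1), (t + 1) =>
          show pv u (g (s + 2) / 2) < pv u (g (t + 2) / 2)
          exact hjval (s + 2) (t + 2) (by omega) (by omega) (by omega)
  · -- g 0 odd as well : k+1 peaks, take the first k
    have hall : ∀ a, a < k + 1 → g a = 2 * (g a / 2) + 1 := by
      intro a hak
      rcases Nat.eq_zero_or_pos a with rfl | ha
      · omega
      · exact hpeak a (by omega) hak
    have halln : ∀ a, a < k + 1 → g a / 2 < n := by
      intro a hak
      have h1 := hgN a hak
      have h2 := hall a hak
      omega
    refine ⟨fun a => g a / 2, ?_, ?_, ?_⟩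
    · intro a b hab hb
      show g a / 2 < g b / 2
      have h1 := hall a (by omega)
      have h2 := hall b (by omega)
      have := hg a b hab (by omega)
      omega
    · intro a ha
      show g a / 2 < n
      exact halln a (by omega)
    · intro a b hab hb
      show pv u (g a / 2) < pv u (g b / 2)
      have h2 := hgx a b hab (by omega)
      rw [hall a (by omega), hall b (by omega), WC_odd, WC_odd] at h2
      exact (PC_iff u H (halln a (by omega)) (halln b (by omega))).mpr h2

/-- the constructed permutation -/
noncomputable def wpermC (hn : 0 < n) (H : ¬ Has132N (pv u) n) : Perm (Fin (2 * n + 1)) :=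
  Equiv.ofBijective (fun q => ⟨WC u q.val, WC_lt u hn (Nat.lt_succ_iff.mp q.isLt)⟩)
    (Finite.injective_iff_bijective.mp (fun q q' h => by
      apply Fin.val_injective
      exact WC_inj u H hn (Nat.lt_succ_iff.mp q.isLt) (Nat.lt_succ_iff.mp q'.isLt)
        (congrArg Fin.val h)))

lemma pv_wpermC (hn : 0 < n) (H : ¬ Has132N (pv u) n) {q : ℕ} (hq : q < 2 * n + 1) :
    pv (wpermC u hn H) q = WC u q := by
  rw [pv_eq _ hq]
  simp [wpermC]

lemma chain_congr {x y : ℕ → ℕ} {N k : ℕ} (h : ∀ q, q < N → x q = y q) :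
    Chain x N k → Chain y N k := by
  rintro ⟨g, h1, h2, h3⟩
  refine ⟨g, h1, h2, fun a b hab hb => ?_⟩
  rw [← h (g a) (h2 a (by omega)), ← h (g b) (h2 b hb)]
  exact h3 a b hab hb

lemma has132N_congr {x y : ℕ → ℕ} {N : ℕ} (h : ∀ q, q < N → x q = y q) :
    Has132N x N → Has132N y N := by
  rintro ⟨q1, q2, q3, h12, h23, h3, hv13, hv32⟩
  rw [h q1 (by omega), h q3 (by omega)] at hv13
  rw [h q2 (by omega), h q3 (by omega)] at hv32
  exact ⟨q1, q2, q3, h12, h23, h3, hv13, hv32⟩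

end ChainLift

section Reverse

variable {n : ℕ} (w : Perm (Fin (2 * n + 1)))

/-- The ℕ-level alternating property. -/
def AltN (w : Perm (Fin (2 * n + 1))) : Prop :=
  ∀ i, i + 1 < 2 * n + 1 →
    (i % 2 = 0 → pv w i < pv w (i + 1)) ∧ (i % 2 = 1 → pv w (i + 1) < pv w i)

/-- everything before a valley is bigger than it -/
lemma RE (halt : AltN w) (H : ¬ Has132N (pv w) (2 * n + 1)) :
    ∀ i q, i ≤ n → q < 2 * i → pv w (2 * i) < pv w q := by
  intro i
  suffices haux : ∀ d q, q < 2 * i → i ≤ n → 2 * i - q = d → pv w (2 * i) < pv w q by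
    intro q hi hq
    exact haux (2 * i - q) q hq hi rfl
  intro d
  induction d using Nat.strong_induction_on with
  | _ d ih =>
    intro q hq hi hd
    rcases Nat.lt_or_ge (q + 1) (2 * i) with hq1 | hq1
    · -- use induction at q+1 and 132-avoidance
      have h1 : pv w (2 * i) < pv w (q + 1) := ih (2 * i - (q + 1)) (by omega) (q + 1) hq1 hi rfl
      by_contra hc
      push_neg at hc
      rcases eq_or_lt_of_le hc with heq | hlt
      · exact absurd (pv_inj w (by omega) (by omega) heq) (by omega)
      · exact H ⟨q, q + 1, 2 * i, by omega, hq1, by omega, hlt, h1⟩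
    · -- q = 2i - 1, use alternation
      have hq' : q = 2 * i - 1 := by omega
      have hi1 : 1 ≤ i := by omega
      have := (halt (2 * i - 1) (by omega)).2 (by omega)
      have he : 2 * i - 1 + 1 = 2 * i := by omega
      rw [he] at this
      subst hq'
      exact this

lemma Rdec (halt : AltN w) (H : ¬ Has132N (pv w) (2 * n + 1)) {i j : ℕ} (hij : i < j)
    (hj : j ≤ n) : pv w (2 * j) < pv w (2 * i) :=
  RE w halt H j (2 * i) hj (by omega)

lemma Rvp (halt : AltN w) {i : ℕ} (hi : i < n) : pv w (2 * i) < pv w (2 * i + 1) :=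
  (halt (2 * i) (by omega)).1 (by omega)

lemma Rpv (halt : AltN w) {i : ℕ} (hi : i < n) : pv w (2 * i + 2) < pv w (2 * i + 1) := by
  have := (halt (2 * i + 1) (by omega)).2 (by omega)
  exact this

/-- the first valley is one less than the first peak -/
lemma RS0 (halt : AltN w) (H : ¬ Has132N (pv w) (2 * n + 1)) (hn : 0 < n) :
    pv w 0 + 1 = pv w 1 := by
  have h01 : pv w 0 < pv w 1 := by
    have := Rvp w halt hn
    simpa using this
  have hb : pv w 0 + 1 < 2 * n + 1 := by
    have := pv_lt w (by omega : 1 < 2 * n + 1)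
    omega
  obtain ⟨q, hq, hqv⟩ := pv_surj w hb
  rcases Nat.lt_or_ge 1 q with h1 | h1
  · exfalso
    refine H ⟨0, 1, q, by omega, h1, hq, by omega, ?_⟩
    have : pv w q ≠ pv w 1 := fun h => by have := pv_inj w hq (by omega) h; omega
    omega
  · interval_cases q
    · omega
    · omega

/-- middle valleys: `v_{i+1} + 1 = min v_i p_{i+1}` -/
lemma RSmid (halt : AltN w) (H : ¬ Has132N (pv w) (2 * n + 1)) {i : ℕ} (hi : i + 1 < n) :
    pv w (2 * (i + 1)) + 1 = min (pv w (2 * i)) (pv w (2 * (i + 1) + 1)) := by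
  set v := pv w (2 * (i + 1)) with hv
  have hvp : v < pv w (2 * (i + 1) + 1) := Rvp w halt (by omega)
  have hdec : v < pv w (2 * i) := Rdec w halt H (by omega) (by omega)
  have hb : v + 1 < 2 * n + 1 := by
    have := pv_lt w (by omega : 2 * (i + 1) + 1 < 2 * n + 1)
    omega
  obtain ⟨q, hq, hqv⟩ := pv_surj w hb
  have hqne : q ≠ 2 * (i + 1) := fun h => by subst h; omega
  rcases Nat.lt_or_ge (2 * (i + 1) + 1) q with hq1 | hq1
  · -- q after the next peak : 132
    exfalso
    refine H ⟨2 * (i + 1), 2 * (i + 1) + 1, q, by omega, hq1, hq, by omega, ?_⟩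
    have : pv w q ≠ pv w (2 * (i + 1) + 1) := fun h => by
      have := pv_inj w hq (by omega) h; omega
    omega
  rcases eq_or_lt_of_le hq1 with heq | hlt
  · -- the next peak is v+1
    subst heq
    rw [hqv]
    omega
  -- q < 2(i+1) :
  have hlt' : q < 2 * (i + 1) := by omega
  rcases Nat.even_or_odd q with ⟨m, hm⟩ | ⟨m, hm⟩
  · -- q = 2m is an earlier valley ; must be m = i
    have hm' : q = 2 * m := by omega
    have hmi : m ≤ i := by omega
    have hmeq : m = i := by
      by_contra hne
      have h1 : pv w (2 * i) < pv w (2 * m) := Rdec w halt H (by omega) (by omega)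
      rw [← hm'] at h1
      omega
    have h4 : pv w (2 * i) = v + 1 := by rw [← hmeq, ← hm']; exact hqv
    have hne : pv w (2 * (i + 1) + 1) ≠ v + 1 := fun h => by
      have := pv_inj w (by omega : 2 * (i + 1) + 1 < 2 * n + 1) hq (h.trans hqv.symm)
      omega
    omega
  · -- q = 2m+1 an earlier peak : impossible
    exfalso
    have hm' : q = 2 * m + 1 := by omega
    have hmi : m ≤ i := by omega
    have h1 : pv w (2 * m + 2) < pv w (2 * m + 1) := Rpv w halt (by omega)
    rw [← hm', hqv] at h1
    -- pv w (2m+2) ≤ v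
    rcases eq_or_lt_of_le (by omega : m + 1 ≤ i + 1) with heq | hlt2
    · -- m = i : peak right before our valley equals v+1
      have hmeq : m = i := by omega
      have h2 : pv w (2 * i) < pv w (2 * i + 1) := Rvp w halt (by omega)
      have h3 : pv w (2 * i + 1) = v + 1 := by rw [← hmeq, ← hm']; exact hqv
      have h5 : 2 * m + 2 = 2 * (i + 1) := by omega
      rw [h5] at h1
      omega
    · have h2 : pv w (2 * (i + 1)) < pv w (2 * (m + 1)) := Rdec w halt H hlt2 (by omega)
      have h3 : 2 * (m + 1) = 2 * m + 2 := by omega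
      rw [h3] at h2
      omega

/-- last valley: `v_n + 1 = v_{n-1}` -/
lemma RSlast (halt : AltN w) (H : ¬ Has132N (pv w) (2 * n + 1)) (hn : 0 < n) :
    pv w (2 * n) + 1 = pv w (2 * (n - 1)) := by
  set v := pv w (2 * n) with hv
  have hvp : v < pv w (2 * (n - 1) + 1) := by
    have h1 : pv w (2 * (n - 1) + 2) < pv w (2 * (n - 1) + 1) := Rpv w halt (by omega)
    have h2 : 2 * (n - 1) + 2 = 2 * n := by omega
    rw [h2] at h1
    exact h1
  have hdec : v < pv w (2 * (n - 1)) := Rdec w halt H (by omega) (by omega)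
  have hb : v + 1 < 2 * n + 1 := by
    have := pv_lt w (by omega : 2 * (n - 1) + 1 < 2 * n + 1)
    omega
  obtain ⟨q, hq, hqv⟩ := pv_surj w hb
  have hqne : q ≠ 2 * n := fun h => by subst h; omega
  have hlt' : q < 2 * n := by omega
  rcases Nat.even_or_odd q with ⟨m, hm⟩ | ⟨m, hm⟩
  · have hm' : q = 2 * m := by omega
    have hmi : m ≤ n - 1 := by omega
    have hmeq : m = n - 1 := by
      by_contra hne
      have h1 : pv w (2 * (n - 1)) < pv w (2 * m) := Rdec w halt H (by omega) (by omega)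
      rw [← hm'] at h1
      omega
    subst hmeq
    rw [← hm']
    omega
  · exfalso
    have hm' : q = 2 * m + 1 := by omega
    have hmi : m ≤ n - 1 := by omega
    have h1 : pv w (2 * m + 2) < pv w (2 * m + 1) := Rpv w halt (by omega)
    rw [← hm', hqv] at h1
    rcases eq_or_lt_of_le (by omega : m + 1 ≤ n) with heq | hlt2
    · have hmeq : m = n - 1 := by omega
      subst hmeq
      have h2 : pv w (2 * (n - 1)) < pv w (2 * (n - 1) + 1) := Rvp w halt (by omega)
      have h3 : pv w (2 * (n - 1) + 1) = v + 1 := by rw [← hm']; exact hqv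
      have h5 : 2 * (n - 1) + 2 = 2 * n := by omega
      rw [h5] at h1
      omega
    · have h2 : pv w (2 * n) < pv w (2 * (m + 1)) := Rdec w halt H hlt2 (by omega)
      have h3 : 2 * (m + 1) = 2 * m + 2 := by omega
      rw [h3] at h2
      omega

end Reverse

section ConstructionExtra

variable {n : ℕ} (u : Perm (Fin n))

lemma VC_zero (hn : 0 < n) : VC u 0 + 1 = PC u 0 := by
  have h1 := VC_add u (by omega : 0 ≤ n)
  have h2 := PC_add u hn
  have h3 : MC u 0 = cC u 0 := rfl
  omega

lemma VC_rec {i : ℕ} (hi : i + 1 < n) : VC u (i + 1) + 1 = min (VC u i) (PC u (i + 1)) := by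
  have h0 : MC u (i + 1) = min (MC u i) (cC u (i + 1)) := by
    show (if i + 1 < n then min (MC u i) (cC u (i + 1)) else MC u i) = _
    rw [if_pos hi]
  have h1 := VC_add u (by omega : i + 1 ≤ n)
  have h2 := VC_add u (by omega : i ≤ n)
  have h3 := PC_add u hi
  omega

lemma VC_last (hn : 0 < n) : VC u n + 1 = VC u (n - 1) := by
  obtain ⟨m, rfl⟩ : ∃ m, n = m + 1 := ⟨n - 1, by omega⟩
  have h0 : MC u (m + 1) = MC u m := by
    show (if m + 1 < m + 1 then min (MC u m) (cC u (m + 1)) else MC u m) = _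
    rw [if_neg (by omega)]
  have h1 := VC_add u (le_refl (m + 1))
  have h2 := VC_add u (by omega : m ≤ m + 1)
  simp only [Nat.add_sub_cancel]
  omega

lemma perm_lt_iff_pv (i j : Fin n) : u i < u j ↔ pv u i.val < pv u j.val := by
  rw [pv_eq u i.isLt, pv_eq u j.isLt]
  exact Iff.rfl

end ConstructionExtra

section Reverse2

variable {n : ℕ} (w : Perm (Fin (2 * n + 1)))

def rkF (i : Fin n) : ℕ :=
  ((range n).filter fun j => pv w (2 * j + 1) < pv w (2 * (i : ℕ) + 1)).card

lemma rkF_lt (i : Fin n) : rkF w i < n := by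
  have hsub : ((range n).filter fun j => pv w (2 * j + 1) < pv w (2 * (i : ℕ) + 1)) ⊆ range n :=
    Finset.filter_subset _ _
  have hss : ((range n).filter fun j => pv w (2 * j + 1) < pv w (2 * (i : ℕ) + 1)) ⊂ range n := by
    rw [Finset.ssubset_iff_of_subset hsub]
    exact ⟨i, by simp [i.isLt], by simp⟩
  have := Finset.card_lt_card hss
  simpa [rkF] using this

lemma rk_mono {i j : Fin n} (hij : pv w (2 * (i : ℕ) + 1) < pv w (2 * (j : ℕ) + 1)) :
    rkF w i < rkF w j := by
  apply Finset.card_lt_card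
  rw [Finset.ssubset_iff_of_subset]
  · exact ⟨i, by simp [i.isLt, hij], by simp⟩
  · intro l hl
    simp only [mem_filter, mem_range] at hl ⊢
    exact ⟨hl.1, lt_trans hl.2 hij⟩

lemma peak_ne {i j : Fin n} (hij : i ≠ j) : pv w (2 * (i : ℕ) + 1) ≠ pv w (2 * (j : ℕ) + 1) := by
  intro h
  have := pv_inj w (by have := i.isLt; omega) (by have := j.isLt; omega) h
  exact hij (Fin.val_injective (by omega))

noncomputable def rperm : Perm (Fin n) :=
  Equiv.ofBijective (fun i => ⟨rkF w i, rkF_lt w i⟩)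
    (Finite.injective_iff_bijective.mp (fun i j h => by
      by_contra hij
      rcases lt_or_gt_of_ne (peak_ne w hij) with h' | h'
      · have := rk_mono w h'
        simp only [Fin.mk.injEq] at h
        omega
      · have := rk_mono w h'
        simp only [Fin.mk.injEq] at h
        omega))

lemma pv_rperm {i : ℕ} (hi : i < n) : pv (rperm w) i = rkF w ⟨i, hi⟩ := by
  rw [pv_eq _ hi]
  simp [rperm]

lemma rperm_iffN {i j : ℕ} (hi : i < n) (hj : j < n) :
    pv (rperm w) i < pv (rperm w) j ↔ pv w (2 * i + 1) < pv w (2 * j + 1) := by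
  rw [pv_rperm w hi, pv_rperm w hj]
  constructor
  · intro h
    by_contra hc
    push_neg at hc
    rcases eq_or_lt_of_le hc with heq | hlt
    · have hij : (⟨i, hi⟩ : Fin n) = ⟨j, hj⟩ := by
        by_contra hne
        exact peak_ne w hne (by simpa using heq.symm)
      rw [hij] at h
      omega
    · have := rk_mono w (i := ⟨j, hj⟩) (j := ⟨i, hi⟩) hlt
      omega
  · intro h
    exact rk_mono w (i := ⟨i, hi⟩) (j := ⟨j, hj⟩) h

lemma H132r (H : ¬ Has132N (pv w) (2 * n + 1)) : ¬ Has132N (pv (rperm w)) n := by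
  rintro ⟨q1, q2, q3, h12, h23, h3, hv13, hv32⟩
  refine H ⟨2 * q1 + 1, 2 * q2 + 1, 2 * q3 + 1, by omega, by omega, by omega, ?_, ?_⟩
  · exact (rperm_iffN w (by omega) h3).mp hv13
  · exact (rperm_iffN w h3 (by omega)).mp hv32

lemma cardBig {i : ℕ} (hi : i < n) :
    ((range (2 * n + 1)).filter fun q => pv w (2 * i + 1) < pv w q).card
      = 2 * n - pv w (2 * i + 1) := by
  set p := pv w (2 * i + 1) with hp
  have hcard : ((range (2 * n + 1)).filter fun q => p < pv w q).card
      = ((range (2 * n + 1)).filter fun t => p < t).card := by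
    apply Finset.card_nbij (fun q => pv w q)
    · intro q hq
      simp only [mem_coe, mem_filter, mem_range] at hq ⊢
      exact ⟨pv_lt w hq.1, hq.2⟩
    · intro a ha b hb hab
      simp only [mem_coe, mem_filter, mem_range] at ha hb
      exact pv_inj w ha.1 hb.1 hab
    · intro t ht
      simp only [mem_coe, mem_filter, mem_range] at ht
      obtain ⟨q, hq, hqv⟩ := pv_surj w ht.1
      exact ⟨q, by simp [mem_filter, hq, hqv, ht.2]; omega, hqv⟩
  rw [hcard]
  have : ((range (2 * n + 1)).filter fun t => p < t) = Finset.Ico (p + 1) (2 * n + 1) := by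
    ext t
    simp only [mem_filter, mem_range, Finset.mem_Ico]
    omega
  rw [this, Nat.card_Ico]
  omega

lemma parity_split (p : ℕ) :
    ((range (2 * n + 1)).filter fun q => p < pv w q).card
      = ((range n).filter fun j => p < pv w (2 * j + 1)).card
        + ((range (n + 1)).filter fun j => p < pv w (2 * j)).card := by
  classical
  have hsplit := Finset.card_filter_add_card_filter_not
    (s := (range (2 * n + 1)).filter fun q => p < pv w q) (p := fun q => q % 2 = 1)
  have hodd : (((range (2 * n + 1)).filter fun q => p < pv w q).filter fun q => q % 2 = 1).card
      = ((range n).filter fun j => p < pv w (2 * j + 1)).card := by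
    symm
    apply Finset.card_nbij (fun j => 2 * j + 1)
    · intro j hj
      simp only [mem_coe, mem_filter, mem_range] at hj
      show 2 * j + 1 ∈ _
      simp only [mem_coe, mem_filter, mem_range]
      exact ⟨⟨by omega, hj.2⟩, by omega⟩
    · intro a _ b _ hab
      have hab' : 2 * a + 1 = 2 * b + 1 := hab
      omega
    · intro q hq
      simp only [mem_coe, mem_filter, mem_range] at hq
      obtain ⟨⟨hq1, hq2⟩, hq3⟩ := hq
      have hv : 2 * (q / 2) + 1 = q := by omega
      refine ⟨q / 2, ?_, hv⟩
      simp only [mem_coe, mem_filter, mem_range]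
      rw [hv]
      exact ⟨by omega, hq2⟩
  have heven : (((range (2 * n + 1)).filter fun q => p < pv w q).filter fun q => ¬ q % 2 = 1).card
      = ((range (n + 1)).filter fun j => p < pv w (2 * j)).card := by
    symm
    apply Finset.card_nbij (fun j => 2 * j)
    · intro j hj
      simp only [mem_coe, mem_filter, mem_range] at hj
      show 2 * j ∈ _
      simp only [mem_coe, mem_filter, mem_range]
      exact ⟨⟨by omega, hj.2⟩, by omega⟩
    · intro a _ b _ hab
      have hab' : 2 * a = 2 * b := hab
      omega
    · intro q hq
      simp only [mem_coe, mem_filter, mem_range] at hq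
      obtain ⟨⟨hq1, hq2⟩, hq3⟩ := hq
      have hv : 2 * (q / 2) = q := by omega
      refine ⟨q / 2, ?_, hv⟩
      simp only [mem_coe, mem_filter, mem_range]
      rw [hv]
      exact ⟨by omega, hq2⟩
  omega

lemma peakcount {i : ℕ} (hi : i < n) :
    ((range n).filter fun j => pv w (2 * i + 1) < pv w (2 * j + 1)).card
      + rkF w ⟨i, hi⟩ + 1 = n := by
  classical
  have hsplit := Finset.card_filter_add_card_filter_not
    (s := range n) (p := fun j => pv w (2 * j + 1) < pv w (2 * i + 1))
  rw [Finset.card_range] at hsplit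
  have hins : (range n).filter (fun j => ¬ pv w (2 * j + 1) < pv w (2 * i + 1))
      = insert i ((range n).filter fun j => pv w (2 * i + 1) < pv w (2 * j + 1)) := by
    ext j
    simp only [mem_filter, mem_range, Finset.mem_insert]
    constructor
    · rintro ⟨hj, hnlt⟩
      rcases eq_or_ne j i with rfl | hne
      · exact Or.inl rfl
      · refine Or.inr ⟨hj, ?_⟩
        have hne2 : pv w (2 * j + 1) ≠ pv w (2 * i + 1) :=
          peak_ne w (i := ⟨j, hj⟩) (j := ⟨i, hi⟩) (by simp [Fin.ext_iff, hne])
        omega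
    · rintro (rfl | ⟨hj, hlt⟩)
      · exact ⟨hi, by omega⟩
      · exact ⟨hj, by omega⟩
  rw [hins, Finset.card_insert_of_notMem (by simp)] at hsplit
  have : rkF w ⟨i, hi⟩ = ((range n).filter fun j => pv w (2 * j + 1) < pv w (2 * i + 1)).card := rfl
  omega

lemma valleyfilter (halt : AltN w) (H : ¬ Has132N (pv w) (2 * n + 1)) {i : ℕ} (hi : i < n) :
    ((range (n + 1)).filter fun j => pv w (2 * i + 1) < pv w (2 * j)).card
      = ((range i).filter fun j => pv w (2 * i + 1) < pv w (2 * j + 1)).card := by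
  congr 1
  ext j
  simp only [mem_filter, mem_range]
  constructor
  · rintro ⟨hj, hlt⟩
    have hji : j < i := by
      rcases lt_trichotomy j i with h' | rfl | h'
      · exact h'
      · exact absurd (lt_trans hlt (Rvp w halt hi)) (lt_irrefl _)
      · have := RE w halt H j (2 * i + 1) (by omega) (by omega)
        omega
    exact ⟨hji, lt_trans hlt (Rvp w halt (by omega))⟩
  · rintro ⟨hji, hlt⟩
    refine ⟨by omega, ?_⟩
    have hne : pv w (2 * j) ≠ pv w (2 * i + 1) := fun h => by
      have := pv_inj w (by omega) (by omega) h
      omega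
    by_contra hc
    push_neg at hc
    have hc' : pv w (2 * j) < pv w (2 * i + 1) := by omega
    exact H ⟨2 * j, 2 * j + 1, 2 * i + 1, by omega, by omega, by omega, hc', hlt⟩

lemma Rpeak (halt : AltN w) (H : ¬ Has132N (pv w) (2 * n + 1)) {i : ℕ} (hi : i < n) :
    pv w (2 * i + 1) + ((range i).filter fun j => pv w (2 * i + 1) < pv w (2 * j + 1)).card
      = n + 1 + rkF w ⟨i, hi⟩ := by
  have h1 := cardBig w hi
  have h2 := parity_split w (pv w (2 * i + 1))
  have h3 := peakcount w hi
  have h4 := valleyfilter w halt H hi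
  have h5 := pv_lt w (show 2 * i + 1 < 2 * n + 1 by omega)
  omega

lemma reconstruct (halt : AltN w) (H : ¬ Has132N (pv w) (2 * n + 1)) (hn : 0 < n) :
    ∀ q, q < 2 * n + 1 → pv w q = WC (rperm w) q := by
  have hpeak : ∀ i, i < n → PC (rperm w) i = pv w (2 * i + 1) := by
    intro i hi
    have h1 := PC_eq (rperm w) hi
    have h2 := pv_rperm w hi
    have h3 : aC (rperm w) i
        = ((range i).filter fun j => pv w (2 * i + 1) < pv w (2 * j + 1)).card := by
      have hset : ((range i).filter fun j => pv (rperm w) i < pv (rperm w) j)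
          = ((range i).filter fun j => pv w (2 * i + 1) < pv w (2 * j + 1)) := by
        ext j
        simp only [mem_filter, mem_range]
        constructor
        · rintro ⟨hj1, hj2⟩
          exact ⟨hj1, (rperm_iffN w hi (by omega)).mp hj2⟩
        · rintro ⟨hj1, hj2⟩
          exact ⟨hj1, (rperm_iffN w hi (by omega)).mpr hj2⟩
      show ((range i).filter fun j => pv (rperm w) i < pv (rperm w) j).card = _
      rw [hset]
    have h4 := Rpeak w halt H hi
    omega
  have hval : ∀ i, i ≤ n → pv w (2 * i) = VC (rperm w) i := by
    intro i
    induction i with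
    | zero =>
      intro _
      have h1 := RS0 w halt H hn
      have h2 := VC_zero (rperm w) hn
      have h3 := hpeak 0 hn
      have e0 : 2 * 0 = 0 := by omega
      have e1 : 2 * 0 + 1 = 1 := by omega
      rw [e0]
      rw [e1] at h3
      omega
    | succ i ih =>
      intro hsn
      rcases Nat.lt_or_ge (i + 1) n with hlt | hge
      · have h1 := RSmid w halt H hlt
        have h2 := VC_rec (rperm w) hlt
        have h3 := hpeak (i + 1) hlt
        have h4 := ih (by omega)
        omega
      · have hieq : i + 1 = n := by omega
        subst hieq
        have h1 := RSlast w halt H hn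
        have h2 := VC_last (rperm w) hn
        have h4 := ih (by omega)
        have e : i + 1 - 1 = i := by omega
        rw [e] at h1 h2
        omega
  intro q hq
  rcases Nat.even_or_odd q with ⟨t, ht⟩ | ⟨t, ht⟩
  · have ht' : q = 2 * t := by omega
    subst ht'
    rw [WC_even]
    exact hval t (by omega)
  · have ht' : q = 2 * t + 1 := by omega
    subst ht'
    rw [WC_odd]
    exact (hpeak t (by omega)).symm

lemma wpermC_eq (halt : AltN w) (H : ¬ Has132N (pv w) (2 * n + 1)) (hn : 0 < n) :
    wpermC (rperm w) hn (H132r w H) = w := by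
  apply Equiv.ext
  intro q
  apply Fin.val_injective
  have h1 : ((wpermC (rperm w) hn (H132r w H)) q : ℕ) = WC (rperm w) q.val := by
    simp [wpermC]
  rw [h1, ← reconstruct w halt H hn q.val q.isLt, pv_eq w q.isLt]

end Reverse2

section Final

lemma wpermC_inj {n : ℕ} {u u' : Perm (Fin n)} (hn : 0 < n) (H : ¬ Has132N (pv u) n)
    (H' : ¬ Has132N (pv u') n) (h : wpermC u hn H = wpermC u' hn H') : u = u' := by
  have hW : ∀ q, q < 2 * n + 1 → WC u q = WC u' q := by
    intro q hq
    have h2 := congrArg (fun e : Perm (Fin (2 * n + 1)) => ((e ⟨q, hq⟩ : Fin (2 * n + 1)) : ℕ)) h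
    simpa [wpermC] using h2
  have hP : ∀ t, t < n → PC u t = PC u' t := by
    intro t ht
    have h3 := hW (2 * t + 1) (by omega)
    rwa [WC_odd, WC_odd] at h3
  apply perm_eq_of_orderIso
  intro i j
  rw [perm_lt_iff_pv u, perm_lt_iff_pv u',
    PC_iff u H i.isLt j.isLt, PC_iff u' H' i.isLt j.isLt, hP i i.isLt, hP j j.isLt]

lemma wpermC_props {n k : ℕ} (hn : 0 < n) (hk : 1 ≤ k) (u : Perm (Fin n))
    (H : ¬ Has132N (pv u) n) (hcon : ¬ ContainsP u (1 : Perm (Fin k))) :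
    Alternating (wpermC u hn H) ∧ Avoids132 (wpermC u hn H) ∧
      ¬ ContainsP (wpermC u hn H) (1 : Perm (Fin (k + 1))) := by
  have hpv : ∀ q, q < 2 * n + 1 → pv (wpermC u hn H) q = WC u q :=
    fun q hq => pv_wpermC u hn H hq
  refine ⟨?_, ?_, ?_⟩
  · rw [alternating_iff]
    intro i hi
    have h := altW u i hi
    rw [hpv i (by omega), hpv (i + 1) hi]
    exact h
  · rw [avoids132_iff]
    intro hcontra
    exact no132W u H hn (has132N_congr (fun q hq => hpv q hq) hcontra)
  · rw [containsP_one_iff]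
    intro hch
    apply hcon
    rw [containsP_one_iff]
    exact chain_of_chainW u H hn hk (chain_congr (fun q hq => hpv q hq) hch)

lemma main {n k : ℕ} (hn : 0 < n) (hk : 1 ≤ k) :
    Nat.card {u : Perm (Fin n) // Avoids132 u ∧ ¬ ContainsP u (1 : Perm (Fin k))} =
      Nat.card {w : Perm (Fin (2 * n + 1)) // Alternating w ∧ Avoids132 w ∧
        ¬ ContainsP w (1 : Perm (Fin (k + 1)))} := by
  apply Nat.card_eq_of_bijective
    (fun x => ⟨wpermC x.1 hn ((avoids132_iff x.1).mp x.2.1),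
      wpermC_props hn hk x.1 ((avoids132_iff x.1).mp x.2.1) x.2.2⟩)
  constructor
  · intro x x' h
    apply Subtype.ext
    exact wpermC_inj hn ((avoids132_iff x.1).mp x.2.1) ((avoids132_iff x'.1).mp x'.2.1)
      (congrArg Subtype.val h)
  · rintro ⟨w, halt, hav, hcon⟩
    have haltN : AltN w := (alternating_iff w).mp halt
    have H132 : ¬ Has132N (pv w) (2 * n + 1) := (avoids132_iff w).mp hav
    have Hu : ¬ Has132N (pv (rperm w)) n := H132r w H132
    have heq : wpermC (rperm w) hn Hu = w := wpermC_eq w haltN H132 hn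
    have hprop1 : Avoids132 (rperm w) := (avoids132_iff (rperm w)).mpr Hu
    have hprop2 : ¬ ContainsP (rperm w) (1 : Perm (Fin k)) := by
      rw [containsP_one_iff]
      intro hch
      apply hcon
      rw [containsP_one_iff]
      have hWc := chainW_of_chain (rperm w) Hu hn hk hch
      exact chain_congr (fun q hq => (reconstruct w haltN H132 hn q hq).symm) hWc
    exact ⟨⟨rperm w, hprop1, hprop2⟩, Subtype.ext heq⟩

lemma zero_case {k : ℕ} (hk : 1 ≤ k) :
    Nat.card {u : Perm (Fin 0) // Avoids132 u ∧ ¬ ContainsP u (1 : Perm (Fin k))} =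
      Nat.card {w : Perm (Fin (2 * 0 + 1)) // Alternating w ∧ Avoids132 w ∧
        ¬ ContainsP w (1 : Perm (Fin (k + 1)))} := by
  have h1 : Nat.card {u : Perm (Fin 0) //
      Avoids132 u ∧ ¬ ContainsP u (1 : Perm (Fin k))} = 1 := by
    rw [Nat.card_eq_one_iff_unique]
    constructor
    · constructor
      intro x y
      apply Subtype.ext
      apply Equiv.ext
      intro q
      exact q.elim0
    · refine ⟨⟨1, ?_, ?_⟩⟩
      · rintro ⟨f, _, _⟩
        exact (f 0).elim0
      · rintro ⟨f, _, _⟩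
        exact (f ⟨0, hk⟩).elim0
  have h2 : Nat.card {w : Perm (Fin (2 * 0 + 1)) // Alternating w ∧ Avoids132 w ∧
      ¬ ContainsP w (1 : Perm (Fin (k + 1)))} = 1 := by
    rw [Nat.card_eq_one_iff_unique]
    constructor
    · constructor
      intro x y
      apply Subtype.ext
      apply Equiv.ext
      intro q
      apply Fin.val_injective
      have h1 := (x.1 q).isLt
      have h2 := (y.1 q).isLt
      omega
    · refine ⟨⟨1, ?_, ?_, ?_⟩⟩
      · intro i hi
        exact absurd hi (by omega)
      · rintro ⟨f, hf, _⟩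
        have h := hf (show (0 : Fin 3) < 1 by decide)
        have h1 := (f 0).isLt
        have h2 := (f 1).isLt
        rw [Fin.lt_def] at h
        omega
      · rintro ⟨f, hf, _⟩
        have h := hf (show (⟨0, by omega⟩ : Fin (k + 1)) < ⟨1, by omega⟩ by
          simp [Fin.lt_def])
        have h1 := (f ⟨0, by omega⟩).isLt
        have h2 := (f ⟨1, by omega⟩).isLt
        rw [Fin.lt_def] at h
        omega
  rw [h1, h2]

end Final

end Stmt14


/-- `s_n(132, 12⋯k) = a_{2n+1}(132, 12⋯(k+1))` for `n ≥ 0`,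
`k ≥ 1`; the identity permutation is the increasing pattern. -/
theorem stmt14 (n k : ℕ) (hk : 1 ≤ k) :
    Nat.card {w : Equiv.Perm (Fin n) //
        Avoids132 w ∧ ¬ ContainsP w (1 : Equiv.Perm (Fin k))} =
      Nat.card {w : Equiv.Perm (Fin (2 * n + 1)) //
        Alternating w ∧ Avoids132 w ∧
          ¬ ContainsP w (1 : Equiv.Perm (Fin (k + 1)))} := by
  rcases Nat.eq_zero_or_pos n with rfl | hn
  · exact Stmt14.zero_case hk
  · exact Stmt14.main hn hk
end

section
/- Under the bijection φ: S_n(132) → A_{2n+1}(132) (even-indexed entries of φ(w) order-isomorphic to w), a permutation w ∈ S_n(132) has longest increasing subsequence of length exactly k if and only if φ(w) has longest increasing subsequence of length exactly k+1. -/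
open Equiv

lemma contains_one_iff {n k : ℕ} (w : Equiv.Perm (Fin n)) :
    ContainsP w (1 : Equiv.Perm (Fin k)) ↔
      ∃ f : Fin k → Fin n, StrictMono f ∧ StrictMono (fun i => w (f i)) := by
  unfold ContainsP Contains
  simp only [Perm.coe_one, id_eq]
  constructor
  · rintro ⟨f, hf, hiff⟩
    exact ⟨f, hf, fun i j hij => (hiff i j).1 hij⟩
  · rintro ⟨f, hf, hwf⟩
    exact ⟨f, hf, fun i j => ⟨fun h => hwf h, fun h => hwf.lt_iff_lt.mp h⟩⟩

lemma contains_pat132 {α : Type*} [LinearOrder α] {n : ℕ} (v : Fin n → α)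
    (a b c : Fin n) (hab : a < b) (hbc : b < c)
    (h1 : v a < v c) (h2 : v c < v b) : Contains v pat132 := by
  have h3 : v a < v b := h1.trans h2
  refine ⟨fun t => if (t:ℕ) = 0 then a else if (t:ℕ) = 1 then b else c, ?_, ?_⟩
  · intro s t hst
    have hs3 := s.isLt; have ht3 := t.isLt
    have hst' : (s:ℕ) < (t:ℕ) := hst
    dsimp only
    split_ifs <;> first | omega | assumption | exact hab.trans hbc
  · have hpat : ∀ t : Fin 3,
        pat132 t = if (t:ℕ) = 0 then 0 else if (t:ℕ) = 1 then 2 else 1 := by decide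
    intro s t
    rw [hpat s, hpat t]
    dsimp only
    split_ifs <;> simp <;>
      first | exact h1 | exact h2 | exact h3 | exact h1.le | exact h2.le | exact h3.le

lemma not_two_even {n m : ℕ} (φw : Equiv.Perm (Fin (2*n+1)))
    (halt : Alternating φw) (havoid : Avoids132 φw)
    (g : Fin m → Fin (2*n+1)) (hg : StrictMono g)
    (hφg : StrictMono (fun i => φw (g i)))
    (i j : Fin m) (hij : i < j)
    (hi : ((g i : ℕ)) % 2 = 0) (hj : ((g j : ℕ)) % 2 = 0) : False := by
  have hpq : (g i : ℕ) < (g j : ℕ) := hg hij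
  have hqlt : (g j : ℕ) < 2*n+1 := (g j).isLt
  have hq2 : 2 ≤ (g j : ℕ) := by omega
  have hdesc : φw (g j) < φw ⟨(g j : ℕ) - 1, by omega⟩ := by
    have h := (halt ((g j : ℕ)-1) (by omega)).2 (by omega)
    have he : (⟨(g j : ℕ)-1+1, by omega⟩ : Fin (2*n+1)) = g j := Fin.ext (by simp; omega)
    rwa [he] at h
  have hAC : φw (g i) < φw (g j) := hφg hij
  exact havoid (contains_pat132 _ (g i) ⟨(g j : ℕ) - 1, by omega⟩ (g j)
    (by simp only [Fin.lt_def]; omega) (by simp only [Fin.lt_def]; omega) hAC hdesc)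

lemma down {n m : ℕ} (w : Equiv.Perm (Fin n)) (φw : Equiv.Perm (Fin (2*n+1)))
    (halt : Alternating φw) (havoid : Avoids132 φw) (hiso : OrderIsoEven φw w)
    (h : ContainsP φw (1 : Equiv.Perm (Fin (m+1)))) :
    ContainsP w (1 : Equiv.Perm (Fin m)) := by
  rw [contains_one_iff] at h ⊢
  obtain ⟨g, hg, hφg⟩ := h
  classical
  set T : Finset (Fin (m+1)) := Finset.univ.filter (fun i => (g i : ℕ) % 2 = 0) with hT
  have hT1 : T.card ≤ 1 := by
    rw [Finset.card_le_one]
    intro a ha b hb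
    by_contra hne
    simp only [hT, Finset.mem_filter] at ha hb
    rcases lt_or_gt_of_ne hne with h' | h'
    · exact not_two_even φw halt havoid g hg hφg a b h' ha.2 hb.2
    · exact not_two_even φw halt havoid g hg hφg b a h' hb.2 ha.2
  have hcard : m ≤ Tᶜ.card := by
    have := Finset.card_compl T
    simp only [Fintype.card_fin] at this
    omega
  obtain ⟨e, hemono, hmem⟩ : ∃ e : Fin m → Fin (m+1), StrictMono e ∧
      ∀ i, (g (e i) : ℕ) % 2 = 1 := by
    refine ⟨fun i => Tᶜ.orderEmbOfCardLe hcard i,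
      fun a b hab => (Tᶜ.orderEmbOfCardLe hcard).strictMono hab, fun i => ?_⟩
    have hmm := Tᶜ.orderEmbOfCardLe_mem hcard i
    rw [Finset.mem_compl] at hmm
    have hne : ¬ ((g ((Tᶜ.orderEmbOfCardLe hcard) i) : ℕ) % 2 = 0) := fun hcontra =>
      hmm (Finset.mem_filter.mpr ⟨Finset.mem_univ _, hcontra⟩)
    show (g ((Tᶜ.orderEmbOfCardLe hcard) i) : ℕ) % 2 = 1
    omega
  clear_value T
  refine ⟨fun i => ⟨(g (e i) : ℕ) / 2, ?_⟩, ?_, ?_⟩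
  · have h1 := hmem i
    have h2 := (g (e i)).isLt
    omega
  · intro i j hij
    have h1 : e i < e j := hemono hij
    have h2 : (g (e i) : ℕ) < (g (e j) : ℕ) := hg h1
    have h3 := hmem i; have h4 := hmem j
    simp only [Fin.mk_lt_mk]
    omega
  · intro i j hij
    have h1 : e i < e j := hemono hij
    have h2 : φw (g (e i)) < φw (g (e j)) := hφg h1
    have h3 := hmem i; have h4 := hmem j
    have key : ∀ t : Fin m, (⟨2 * ((g (e t) : ℕ) / 2) + 1, by
        have := (g (e t)).isLt; have := hmem t; omega⟩ : Fin (2*n+1)) = g (e t) := by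
      intro t
      exact Fin.ext (by have := hmem t; simp only; omega)
    have := (hiso ⟨(g (e i) : ℕ) / 2, by have := (g (e i)).isLt; have := hmem i; omega⟩
      ⟨(g (e j) : ℕ) / 2, by have := (g (e j)).isLt; have := hmem j; omega⟩).2
    apply this
    rw [show (⟨2 * ((⟨(g (e i) : ℕ) / 2, by have := (g (e i)).isLt; have := hmem i; omega⟩ : Fin n) : ℕ) + 1, by omega⟩ : Fin (2*n+1)) = g (e i) from key i]
    rw [show (⟨2 * ((⟨(g (e j) : ℕ) / 2, by have := (g (e j)).isLt; have := hmem j; omega⟩ : Fin n) : ℕ) + 1, by omega⟩ : Fin (2*n+1)) = g (e j) from key j]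
    exact h2

lemma up {n k : ℕ} (w : Equiv.Perm (Fin n)) (φw : Equiv.Perm (Fin (2*n+1)))
    (halt : Alternating φw) (hiso : OrderIsoEven φw w)
    (h : ContainsP w (1 : Equiv.Perm (Fin k))) :
    ContainsP φw (1 : Equiv.Perm (Fin (k+1))) := by
  rw [contains_one_iff] at h ⊢
  rcases Nat.eq_zero_or_pos k with rfl | hk
  · refine ⟨fun _ => ⟨0, by omega⟩, ?_, ?_⟩ <;>
      · intro a b hab
        have ha := a.isLt; have hb := b.isLt
        have : (a : ℕ) < (b : ℕ) := hab
        omega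
  obtain ⟨f, hf, hwf⟩ := h
  have h0 : 0 < k := hk
  -- g : Fin (k+1) → Fin (2n+1); g 0 = 2*f(0), g (i+1) = 2*f(i)+1
  refine ⟨fun i => if hi : (i : ℕ) = 0 then ⟨2 * (f ⟨0, h0⟩ : ℕ), by have := (f ⟨0, h0⟩).isLt; omega⟩
    else ⟨2 * (f ⟨(i : ℕ) - 1, by have := i.isLt; omega⟩ : ℕ) + 1,
      by have := (f ⟨(i : ℕ) - 1, by have := i.isLt; omega⟩).isLt; omega⟩, ?_, ?_⟩
  · intro a b hab
    have hab' : (a : ℕ) < (b : ℕ) := hab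
    have hb := b.isLt
    dsimp only
    split_ifs with h1 h2 h2
    · omega
    · -- a = 0, b ≠ 0 : 2*f 0 < 2*f(b-1)+1
      have hle : f ⟨0, h0⟩ ≤ f ⟨(b : ℕ) - 1, by omega⟩ :=
        hf.monotone (by simp only [Fin.le_def]; omega)
      simp only [Fin.mk_lt_mk]
      have : (f ⟨0, h0⟩ : ℕ) ≤ (f ⟨(b : ℕ) - 1, by omega⟩ : ℕ) := hle
      omega
    · omega
    · have hlt : f ⟨(a : ℕ) - 1, by omega⟩ < f ⟨(b : ℕ) - 1, by omega⟩ :=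
        hf (by simp only [Fin.lt_def]; omega)
      simp only [Fin.mk_lt_mk]
      have : (f ⟨(a : ℕ) - 1, by omega⟩ : ℕ) < (f ⟨(b : ℕ) - 1, by omega⟩ : ℕ) := hlt
      omega
  · intro a b hab
    have hab' : (a : ℕ) < (b : ℕ) := hab
    have hb := b.isLt
    dsimp only
    -- peak values: φw(2*f(i)+1) comparisons via hiso
    have peak : ∀ s t : Fin k, w (f s) < w (f t) →
        φw ⟨2 * (f s : ℕ) + 1, by have := (f s).isLt; omega⟩ <
        φw ⟨2 * (f t : ℕ) + 1, by have := (f t).isLt; omega⟩ := by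
      intro s t hst
      exact (hiso (f s) (f t)).1 hst
    have asc : ∀ s : Fin k, φw ⟨2 * (f s : ℕ), by have := (f s).isLt; omega⟩ <
        φw ⟨2 * (f s : ℕ) + 1, by have := (f s).isLt; omega⟩ := by
      intro s
      have := (halt (2 * (f s : ℕ)) (by have := (f s).isLt; omega)).1 (by omega)
      exact this
    split_ifs with h1 h2 h2
    · omega
    · -- a = 0, b ≠ 0
      rcases Nat.eq_or_lt_of_le (show 1 ≤ (b : ℕ) by omega) with hb1 | hb1
      · have : (⟨(b : ℕ) - 1, by omega⟩ : Fin k) = ⟨0, h0⟩ := Fin.ext (by simp; omega)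
        simp only [this]
        exact asc ⟨0, h0⟩
      · have hlt : w (f ⟨0, h0⟩) < w (f ⟨(b : ℕ) - 1, by omega⟩) :=
          hwf (by simp only [Fin.lt_def]; omega)
        exact (asc ⟨0, h0⟩).trans (peak _ _ hlt)
    · omega
    · have hlt : w (f ⟨(a : ℕ) - 1, by omega⟩) < w (f ⟨(b : ℕ) - 1, by omega⟩) :=
        hwf (by simp only [Fin.lt_def]; omega)
      exact peak _ _ hlt

/-- `w ∈ S_n(132)` has longest increasing subsequence of length
exactly `k` iff `φ(w)` has longest increasing subsequence of length exactly
`k+1`. -/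
theorem stmt15 (n k : ℕ) (w : Equiv.Perm (Fin n)) (hw : Avoids132 w)
    (φw : Equiv.Perm (Fin (2 * n + 1)))
    (hφ : Alternating φw ∧ Avoids132 φw ∧ OrderIsoEven φw w) :
    (ContainsP w (1 : Equiv.Perm (Fin k)) ∧
        ¬ ContainsP w (1 : Equiv.Perm (Fin (k + 1)))) ↔
      (ContainsP φw (1 : Equiv.Perm (Fin (k + 1))) ∧
        ¬ ContainsP φw (1 : Equiv.Perm (Fin (k + 2)))) := by
  obtain ⟨halt, havoid, hiso⟩ := hφ
  constructor
  · rintro ⟨h1, h2⟩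
    exact ⟨up w φw halt hiso h1, fun hc => h2 (down w φw halt havoid hiso hc)⟩
  · rintro ⟨h1, h2⟩
    exact ⟨down w φw halt havoid hiso h1, fun hc => h2 (up w φw halt hiso hc)⟩
end

section
/- For all n ≥ 0, the number of alternating, 132-avoiding permutations of length 2n+1 that avoid the pattern 1234 equals ⌈2^{n−1}⌉ (with value 1 at n = 0). -/
open Equiv

def Mem {m : ℕ} (w : Equiv.Perm (Fin m)) : Prop :=
  Alternating w ∧ Avoids132 w ∧ ¬ ContainsP w (1 : Equiv.Perm (Fin 4))

lemma fin3_eq (i : Fin 3) : i = 0 ∨ i = 1 ∨ i = 2 := by fin_cases i <;> simp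
lemma fin4_eq (i : Fin 4) : i = 0 ∨ i = 1 ∨ i = 2 ∨ i = 3 := by fin_cases i <;> simp

section helpers
variable {m : ℕ} (w : Equiv.Perm (Fin m))

lemma mk132 {a b c : Fin m} (hab : a < b) (hbc : b < c)
    (h1 : w a < w c) (h2 : w c < w b) : Contains (fun i => w i) pat132 := by
  have k : w a < w b := h1.trans h2
  refine ⟨(fun i => if i = 0 then a else if i = 1 then b else c), ?_, ?_⟩
  · intro i j hij
    rcases fin3_eq i with rfl|rfl|rfl <;> rcases fin3_eq j with rfl|rfl|rfl <;>
      first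
        | exact absurd hij (by decide)
        | (simp (config := { decide := true }) only []
           first
             | exact hab
             | exact hbc
             | exact hab.trans hbc)
  · intro i j
    rcases fin3_eq i with rfl|rfl|rfl <;> rcases fin3_eq j with rfl|rfl|rfl <;>
      (simp (config := { decide := true }) only []
       first
         | exact iff_of_true (by decide) h1
         | exact iff_of_true (by decide) h2
         | exact iff_of_true (by decide) k
         | exact iff_of_false (by decide) (lt_irrefl _)
         | exact iff_of_false (by decide) (asymm h1)
         | exact iff_of_false (by decide) (asymm h2)
         | exact iff_of_false (by decide) (asymm k))

lemma elim132 (h : Contains (fun i => w i) pat132) :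
    ∃ a b c : Fin m, a < b ∧ b < c ∧ w a < w c ∧ w c < w b := by
  obtain ⟨f, hf, hiff⟩ := h
  exact ⟨f 0, f 1, f 2, hf (by decide), hf (by decide),
    (hiff 0 2).mp (by decide), (hiff 2 1).mp (by decide)⟩

lemma mk1234 {a b c d : Fin m} (hab : a < b) (hbc : b < c) (hcd : c < d)
    (h1 : w a < w b) (h2 : w b < w c) (h3 : w c < w d) :
    ContainsP w (1 : Equiv.Perm (Fin 4)) := by
  have k1 : w a < w c := h1.trans h2
  have k2 : w b < w d := h2.trans h3
  have k3 : w a < w d := h1.trans k2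
  refine ⟨(fun i => if i = 0 then a else if i = 1 then b else if i = 2 then c else d), ?_, ?_⟩
  · intro i j hij
    rcases fin4_eq i with rfl|rfl|rfl|rfl <;> rcases fin4_eq j with rfl|rfl|rfl|rfl <;>
      first
        | exact absurd hij (by decide)
        | (simp (config := { decide := true }) only []
           first
             | exact hab
             | exact hbc
             | exact hcd
             | exact hab.trans hbc
             | exact hbc.trans hcd
             | exact (hab.trans hbc).trans hcd)
  · intro i j
    rcases fin4_eq i with rfl|rfl|rfl|rfl <;> rcases fin4_eq j with rfl|rfl|rfl|rfl <;>
      (simp (config := { decide := true }) only [Equiv.Perm.one_apply]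
       first
         | exact iff_of_true (by decide) h1
         | exact iff_of_true (by decide) h2
         | exact iff_of_true (by decide) h3
         | exact iff_of_true (by decide) k1
         | exact iff_of_true (by decide) k2
         | exact iff_of_true (by decide) k3
         | exact iff_of_false (by decide) (lt_irrefl _)
         | exact iff_of_false (by decide) (asymm h1)
         | exact iff_of_false (by decide) (asymm h2)
         | exact iff_of_false (by decide) (asymm h3)
         | exact iff_of_false (by decide) (asymm k1)
         | exact iff_of_false (by decide) (asymm k2)
         | exact iff_of_false (by decide) (asymm k3))

lemma elim1234 (h : ContainsP w (1 : Equiv.Perm (Fin 4))) :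
    ∃ a b c d : Fin m, a < b ∧ b < c ∧ c < d ∧ w a < w b ∧ w b < w c ∧ w c < w d := by
  obtain ⟨f, hf, hiff⟩ := h
  exact ⟨f 0, f 1, f 2, f 3, hf (by decide), hf (by decide), hf (by decide),
    (hiff 0 1).mp (by decide), (hiff 1 2).mp (by decide), (hiff 2 3).mp (by decide)⟩

end helpers

section core
variable {n : ℕ}

/-- the smaller of the two inserted values -/
def mz (b : Bool) (n : ℕ) : ℕ := if b then 2*n else 2*n+1

lemma mz_le (b : Bool) : 2*n ≤ mz b n ∧ mz b n + 1 ≤ 2*n+2 := by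
  unfold mz; cases b <;> simp <;> omega

/-- relabeling of the small values into the big ones -/
def rhoN (b : Bool) (n u : ℕ) : ℕ := if b = true ∧ u = 2*n then 2*n+2 else u

lemma rhoN_lt (b : Bool) {u : ℕ} (hu : u < 2*n+1) : rhoN b n u < 2*n+3 := by
  unfold rhoN; split <;> omega

lemma rhoN_ne_mz (b : Bool) {u : ℕ} (hu : u < 2*n+1) :
    rhoN b n u ≠ mz b n ∧ rhoN b n u ≠ mz b n + 1 := by
  unfold rhoN mz; cases b <;> simp <;> (try split_ifs) <;> omega

lemma rhoN_gt_mz (b : Bool) {u : ℕ} (hu : u < 2*n+1) (h : mz b n < rhoN b n u) :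
    rhoN b n u = 2*n+2 := by
  unfold rhoN mz at *; cases b <;> simp_all <;> (try split_ifs at *) <;> omega

lemma rhoN_lt_iff (b : Bool) {u v : ℕ} (hu : u < 2*n+1) (hv : v < 2*n+1) :
    rhoN b n u < rhoN b n v ↔ u < v := by
  unfold rhoN; cases b <;> simp <;> (try split_ifs) <;> omega

lemma rhoN_inj (b : Bool) {u v : ℕ} (hu : u < 2*n+1) (hv : v < 2*n+1)
    (h : rhoN b n u = rhoN b n v) : u = v := by
  unfold rhoN at h; cases b <;> simp at h <;> (try split_ifs at h) <;> omega

/-- insertion of the two new values at the front -/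
def insF (b : Bool) (v : Equiv.Perm (Fin (2*n+1))) : Fin (2*n+3) → Fin (2*n+3) := fun i =>
  if (i:ℕ) = 0 then ⟨mz b n, by have := mz_le (n := n) b; omega⟩
  else if (i:ℕ) = 1 then ⟨mz b n + 1, by have := mz_le (n := n) b; omega⟩
  else ⟨rhoN b n ((v ⟨(i:ℕ)-2, by have := i.isLt; omega⟩ : Fin (2*n+1)) : ℕ),
    rhoN_lt b (Fin.isLt _)⟩

lemma insF_inj (b : Bool) (v : Equiv.Perm (Fin (2*n+1))) : Function.Injective (insF b v) := by
  intro i j h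
  have hv := congrArg Fin.val h
  have hi := i.isLt; have hj := j.isLt
  unfold insF at hv
  have hmz := mz_le (n := n) b
  split_ifs at hv with h1 h2 h3 h4 h5 <;> simp only [] at hv
  · exact Fin.ext (by omega)
  · omega
  · exact absurd hv.symm (rhoN_ne_mz b (Fin.isLt _)).1
  · omega
  · exact Fin.ext (by omega)
  · exact absurd hv.symm (rhoN_ne_mz b (Fin.isLt _)).2
  · exact absurd hv (rhoN_ne_mz b (Fin.isLt _)).1
  · exact absurd hv (rhoN_ne_mz b (Fin.isLt _)).2
  · have := rhoN_inj b (Fin.isLt _) (Fin.isLt _) hv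
    have := v.injective (Fin.ext this)
    have := congrArg Fin.val this
    simp only [] at this
    exact Fin.ext (by omega)

/-- the doubling insertion map on permutations -/
noncomputable def ins (b : Bool) (v : Equiv.Perm (Fin (2*n+1))) : Equiv.Perm (Fin (2*n+3)) :=
  Equiv.ofBijective _ (Finite.injective_iff_bijective.mp (insF_inj b v))

lemma ins_val0 (b : Bool) (v : Equiv.Perm (Fin (2*n+1))) {i : Fin (2*n+3)} (h : (i:ℕ) = 0) :
    ((ins b v i : Fin (2*n+3)) : ℕ) = mz b n := by
  show ((insF b v i : Fin (2*n+3)) : ℕ) = _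
  unfold insF; split_ifs <;> rfl

lemma ins_val1 (b : Bool) (v : Equiv.Perm (Fin (2*n+1))) {i : Fin (2*n+3)} (h : (i:ℕ) = 1) :
    ((ins b v i : Fin (2*n+3)) : ℕ) = mz b n + 1 := by
  show ((insF b v i : Fin (2*n+3)) : ℕ) = _
  unfold insF; split_ifs <;> first | rfl | omega

lemma ins_val2 (b : Bool) (v : Equiv.Perm (Fin (2*n+1))) {k : ℕ} (h : k + 2 < 2*n+3) :
    ((ins b v ⟨k+2, h⟩ : Fin (2*n+3)) : ℕ) = rhoN b n ((v ⟨k, by omega⟩ : Fin (2*n+1)) : ℕ) := by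
  show ((insF b v ⟨k+2, h⟩ : Fin (2*n+3)) : ℕ) = _
  unfold insF; split_ifs with h1 h2 <;>
    first
      | rfl
      | contradiction
      | (exfalso; simp only [Fin.val_mk] at *; omega)
      | (exfalso
         try rw [show ((⟨k+2, h⟩ : Fin (2*n+3)) : ℕ) = k + 2 from rfl] at h1
         try rw [show ((⟨k+2, h⟩ : Fin (2*n+3)) : ℕ) = k + 2 from rfl] at h2
         omega)

/-- `ℕ`-valued entries of a permutation word. -/
def pv {m : ℕ} (w : Equiv.Perm (Fin m)) (k : ℕ) : ℕ :=
  if h : k < m then ((w ⟨k, h⟩ : Fin m) : ℕ) else 0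

section pvlemmas
variable {m : ℕ} (w : Equiv.Perm (Fin m))

lemma pv_eq (i : Fin m) : pv w (i : ℕ) = ((w i : Fin m) : ℕ) := by
  unfold pv; rw [dif_pos i.isLt]

lemma pv_lt {k : ℕ} (h : k < m) : pv w k < m := by
  unfold pv; rw [dif_pos h]; exact (w _).isLt

lemma pv_inj {k l : ℕ} (hk : k < m) (hl : l < m) (h : pv w k = pv w l) : k = l := by
  unfold pv at h; rw [dif_pos hk, dif_pos hl] at h
  have := w.injective (Fin.ext h)
  exact congrArg Fin.val this

lemma pv_surj {u : ℕ} (hu : u < m) : ∃ k, k < m ∧ pv w k = u := by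
  refine ⟨(w.symm ⟨u, hu⟩ : Fin m), Fin.isLt _, ?_⟩
  rw [pv_eq]
  have : w (w.symm ⟨u, hu⟩) = ⟨u, hu⟩ := w.apply_symm_apply _
  rw [this]

lemma alternating_iff_pv : Alternating w ↔
    ∀ i : ℕ, i + 1 < m →
      (i % 2 = 0 → pv w i < pv w (i+1)) ∧ (i % 2 = 1 → pv w (i+1) < pv w i) := by
  unfold Alternating pv
  constructor
  · intro H i hi
    obtain ⟨H1, H2⟩ := H i hi
    rw [dif_pos hi, dif_pos (by omega : i < m)]
    exact ⟨fun h => H1 h, fun h => H2 h⟩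
  · intro H i hi
    obtain ⟨H1, H2⟩ := H i hi
    rw [dif_pos hi, dif_pos (by omega : i < m)] at H1 H2
    exact ⟨fun h => H1 h, fun h => H2 h⟩

lemma avoids132_iff_pv : Avoids132 w ↔
    ¬ ∃ a b c : ℕ, a < b ∧ b < c ∧ c < m ∧ pv w a < pv w c ∧ pv w c < pv w b := by
  unfold Avoids132
  constructor
  · intro H h
    obtain ⟨a, b, c, hab, hbc, hc, h1, h2⟩ := h
    simp only [pv, dif_pos hc, dif_pos (show a < m by omega), dif_pos (show b < m by omega)]
      at h1 h2
    exact H (mk132 w (a := ⟨a, by omega⟩) (b := ⟨b, by omega⟩) (c := ⟨c, hc⟩)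
      (by simp [Fin.lt_def]; omega) (by simp [Fin.lt_def]; omega)
      (by rw [Fin.lt_def]; exact h1) (by rw [Fin.lt_def]; exact h2))
  · intro H h
    obtain ⟨a, b, c, hab, hbc, h1, h2⟩ := elim132 w h
    refine H ⟨a, b, c, hab, hbc, c.isLt, ?_, ?_⟩ <;>
      rw [pv_eq, pv_eq] <;> exact Fin.lt_def.mp (by assumption)

lemma contains1234_iff_pv : ContainsP w (1 : Equiv.Perm (Fin 4)) ↔
    ∃ a b c d : ℕ, a < b ∧ b < c ∧ c < d ∧ d < m ∧
      pv w a < pv w b ∧ pv w b < pv w c ∧ pv w c < pv w d := by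
  constructor
  · intro h
    obtain ⟨a, b, c, d, hab, hbc, hcd, h1, h2, h3⟩ := elim1234 w h
    refine ⟨a, b, c, d, hab, hbc, hcd, d.isLt, ?_, ?_, ?_⟩ <;>
      rw [pv_eq, pv_eq] <;> exact Fin.lt_def.mp (by assumption)
  · intro h
    obtain ⟨a, b, c, d, hab, hbc, hcd, hd, h1, h2, h3⟩ := h
    simp only [pv, dif_pos hd, dif_pos (show a < m by omega), dif_pos (show b < m by omega),
      dif_pos (show c < m by omega)] at h1 h2 h3
    exact mk1234 w (a := ⟨a, by omega⟩) (b := ⟨b, by omega⟩) (c := ⟨c, by omega⟩) (d := ⟨d, hd⟩)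
      (by simp [Fin.lt_def]; omega) (by simp [Fin.lt_def]; omega) (by simp [Fin.lt_def]; omega)
      (by rw [Fin.lt_def]; exact h1) (by rw [Fin.lt_def]; exact h2) (by rw [Fin.lt_def]; exact h3)

end pvlemmas

lemma pv_ins0 (b : Bool) (v : Equiv.Perm (Fin (2*n+1))) : pv (ins b v) 0 = mz b n := by
  unfold pv; rw [dif_pos (by omega : (0:ℕ) < 2*n+3)]; exact ins_val0 b v rfl

lemma pv_ins1 (b : Bool) (v : Equiv.Perm (Fin (2*n+1))) : pv (ins b v) 1 = mz b n + 1 := by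
  unfold pv; rw [dif_pos (by omega : (1:ℕ) < 2*n+3)]; exact ins_val1 b v rfl

lemma pv_ins2 (b : Bool) (v : Equiv.Perm (Fin (2*n+1))) {k : ℕ} (hk : k < 2*n+1) :
    pv (ins b v) (k+2) = rhoN b n (pv v k) := by
  unfold pv
  rw [dif_pos (by omega : k+2 < 2*n+3), dif_pos hk]
  exact ins_val2 b v (by omega)

lemma pv_ins_gt_mz (b : Bool) (v : Equiv.Perm (Fin (2*n+1))) {i : ℕ} (hi : i < 2*n+3)
    (h : mz b n < pv (ins b v) i) : i = 1 ∨ pv (ins b v) i = 2*n+2 := by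
  rcases (show i = 0 ∨ i = 1 ∨ ∃ k, i = k + 2 ∧ k < 2*n+1 from
    by rcases i with _|_|i; exacts [Or.inl rfl, Or.inr (Or.inl rfl),
      Or.inr (Or.inr ⟨i, rfl, by omega⟩)]) with rfl | rfl | ⟨k, rfl, hk⟩
  · rw [pv_ins0] at h; omega
  · exact Or.inl rfl
  · rw [pv_ins2 b v hk] at h ⊢
    exact Or.inr (rhoN_gt_mz b (pv_lt v hk) h)

theorem ins_mem (hn : 1 ≤ n) (b : Bool) (v : Equiv.Perm (Fin (2*n+1))) (hv : Mem v) :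
    Mem (ins b v) := by
  obtain ⟨hA, h132, h1234⟩ := hv
  rw [alternating_iff_pv] at hA
  rw [avoids132_iff_pv] at h132
  rw [contains1234_iff_pv] at h1234
  have hmz := mz_le (n := n) b
  have hsplit : ∀ i : ℕ, i < 2*n+3 → i = 0 ∨ i = 1 ∨ ∃ k, i = k + 2 ∧ k < 2*n+1 := by
    intro i hi
    rcases i with _|_|i
    exacts [Or.inl rfl, Or.inr (Or.inl rfl), Or.inr (Or.inr ⟨i, rfl, by omega⟩)]
  refine ⟨?_, ?_, ?_⟩
  · -- Alternating
    rw [alternating_iff_pv]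
    intro i hi
    rcases hsplit i (by omega) with rfl | rfl | ⟨k, rfl, hk⟩
    · rw [pv_ins0, pv_ins1]
      exact ⟨fun _ => by omega, fun h => by omega⟩
    · rw [pv_ins1, (show (1:ℕ)+1 = 0+2 from rfl), pv_ins2 b v (by omega)]
      constructor
      · intro h; omega
      · intro _
        -- need rhoN b n (pv v 0) < mz b n + 1
        have h01 : pv v 0 < pv v 1 := (hA 0 (by omega)).1 rfl
        have h1lt : pv v 1 < 2*n+1 := pv_lt v (by omega)
        have : rhoN b n (pv v 0) = pv v 0 := by
          unfold rhoN; split_ifs with h' <;> first | omega | rfl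
        omega
    · rw [pv_ins2 b v hk, (show k+2+1 = (k+1)+2 from rfl), pv_ins2 b v (by omega)]
      have := hA k (by omega)
      rw [rhoN_lt_iff b (pv_lt v hk) (pv_lt v (by omega)),
        rhoN_lt_iff b (pv_lt v (by omega)) (pv_lt v hk)]
      constructor
      · intro h; exact this.1 (by omega)
      · intro h; exact this.2 (by omega)
  · -- Avoids132
    rw [avoids132_iff_pv]
    rintro ⟨a, c, e, hac, hce, he, h1, h2⟩
    rcases hsplit a (by omega) with rfl | rfl | ⟨ka, rfl, hka⟩
    · -- a = 0 : value mz
      rw [pv_ins0] at h1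
      have hc2 : c ≠ 0 := by omega
      have gtc : c = 1 ∨ pv (ins b v) c = 2*n+2 :=
        pv_ins_gt_mz b v (by omega) (by omega)
      have gte : e = 1 ∨ pv (ins b v) e = 2*n+2 :=
        pv_ins_gt_mz b v he (by omega)
      rcases gtc with rfl | hcv
      · -- c = 1 : value mz+1, and pv e strictly between mz and mz+1
        rw [pv_ins1] at h2
        rcases gte with he1 | hev <;> omega
      · rcases gte with rfl | hev
        · omega
        · omega
    · -- a = 1 : value mz+1; then both pv c, pv e > mz+1 so both = 2n+2
      rw [pv_ins1] at h1
      have gtc : c = 1 ∨ pv (ins b v) c = 2*n+2 :=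
        pv_ins_gt_mz b v (by omega) (by omega)
      have gte : e = 1 ∨ pv (ins b v) e = 2*n+2 :=
        pv_ins_gt_mz b v he (by omega)
      rcases gtc with rfl | hcv
      · omega
      · rcases gte with rfl | hev <;> omega
    · -- a = ka + 2 : everything inside v
      obtain ⟨kc, rfl, hkc⟩ : ∃ kc, c = kc + 2 ∧ kc < 2*n+1 := ⟨c - 2, by omega, by omega⟩
      obtain ⟨ke, rfl, hke⟩ : ∃ ke, e = ke + 2 ∧ ke < 2*n+1 := ⟨e - 2, by omega, by omega⟩
      simp only [pv_ins2 b v hka, pv_ins2 b v hkc, pv_ins2 b v hke] at h1 h2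
      rw [rhoN_lt_iff b (pv_lt v hka) (pv_lt v hke)] at h1
      rw [rhoN_lt_iff b (pv_lt v hke) (pv_lt v hkc)] at h2
      exact h132 ⟨ka, kc, ke, by omega, by omega, hke, h1, h2⟩
  · -- 1234
    rw [contains1234_iff_pv]
    rintro ⟨a, c, e, f, hac, hce, hef, hf, h1, h2, h3⟩
    rcases hsplit a (by omega) with rfl | rfl | ⟨ka, rfl, hka⟩
    · rw [pv_ins0] at h1
      -- pv at e and f both exceed mz, with e,f ≥ 2
      have gte : e = 1 ∨ pv (ins b v) e = 2*n+2 :=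
        pv_ins_gt_mz b v (by omega) (by omega)
      have gtf : f = 1 ∨ pv (ins b v) f = 2*n+2 :=
        pv_ins_gt_mz b v hf (by omega)
      rcases gte with rfl | hev
      · omega
      · rcases gtf with rfl | hfv <;> omega
    · rw [pv_ins1] at h1
      have gte : e = 1 ∨ pv (ins b v) e = 2*n+2 :=
        pv_ins_gt_mz b v (by omega) (by omega)
      have gtf : f = 1 ∨ pv (ins b v) f = 2*n+2 :=
        pv_ins_gt_mz b v hf (by omega)
      rcases gte with rfl | hev
      · omega
      · rcases gtf with rfl | hfv <;> omega
    · obtain ⟨kc, rfl, hkc⟩ : ∃ kc, c = kc + 2 ∧ kc < 2*n+1 := ⟨c - 2, by omega, by omega⟩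
      obtain ⟨ke, rfl, hke⟩ : ∃ ke, e = ke + 2 ∧ ke < 2*n+1 := ⟨e - 2, by omega, by omega⟩
      obtain ⟨kf, rfl, hkf⟩ : ∃ kf, f = kf + 2 ∧ kf < 2*n+1 := ⟨f - 2, by omega, by omega⟩
      simp only [pv_ins2 b v hka, pv_ins2 b v hkc, pv_ins2 b v hke, pv_ins2 b v hkf] at h1 h2 h3
      rw [rhoN_lt_iff b (pv_lt v hka) (pv_lt v hkc)] at h1
      rw [rhoN_lt_iff b (pv_lt v hkc) (pv_lt v hke)] at h2
      rw [rhoN_lt_iff b (pv_lt v hke) (pv_lt v hkf)] at h3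
      exact h1234 ⟨ka, kc, ke, kf, by omega, by omega, by omega, hkf, h1, h2, h3⟩

theorem decode (W : Equiv.Perm (Fin (2*n+3))) (hW : Mem W) :
    ∃ (b : Bool) (v : Equiv.Perm (Fin (2*n+1))), Mem v ∧ ins b v = W := by
  obtain ⟨hA, h132, h1234⟩ := hW
  rw [alternating_iff_pv] at hA
  rw [avoids132_iff_pv] at h132
  rw [contains1234_iff_pv] at h1234
  have hub : ∀ j : ℕ, j < 2*n+3 → pv W j < 2*n+3 := fun j hj => pv_lt W hj
  have hd1 : pv W 0 < pv W 1 := (hA 0 (by omega)).1 rfl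
  -- any entry at position ≥ 2 exceeding pv W 1 must be the maximum value
  have hd2 : ∀ j, 2 ≤ j → j < 2*n+3 → pv W 1 < pv W j → pv W j = 2*n+2 := by
    intro j h2 hj hgt
    by_contra hne
    obtain ⟨k, hk, hkv⟩ := pv_surj W (show 2*n+2 < 2*n+3 by omega)
    have hj3 := hub j hj
    have h13 := hub 1 (by omega)
    have h03 := hub 0 (by omega)
    rcases Nat.lt_trichotomy k j with hkj | rfl | hjk
    · rcases (show k = 0 ∨ k = 1 ∨ 2 ≤ k by omega) with rfl | rfl | hk2
      · omega
      · omega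
      · exact h132 ⟨1, k, j, by omega, hkj, hj, by omega, by omega⟩
    · omega
    · exact h1234 ⟨0, 1, j, k, by omega, by omega, hjk, hk, by omega, by omega, by omega⟩
  have hd3 : 2*n+1 ≤ pv W 1 := by
    by_contra h
    obtain ⟨k, hk, hkv⟩ := pv_surj W (show 2*n+1 < 2*n+3 by omega)
    have hk2 : 2 ≤ k := by
      rcases (show k = 0 ∨ k = 1 ∨ 2 ≤ k by omega) with rfl | rfl | hk2 <;> omega
    have := hd2 k hk2 hk (by omega)
    omega
  have hd4 : ∀ j, 2 ≤ j → j < 2*n+3 → pv W j ≠ 2*n+2 → pv W j < pv W 0 := by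
    intro j h2 hj hne
    by_contra hge
    have hj3 := hub j hj
    have hnej : pv W j ≠ pv W 0 := fun h => by
      have := pv_inj W hj (by omega) h; omega
    have hne1 : pv W j ≠ pv W 1 := fun h => by
      have := pv_inj W hj (by omega) h; omega
    have hlt1 : pv W j < pv W 1 := by
      rcases Nat.lt_or_ge (pv W j) (pv W 1) with h | h
      · exact h
      · have := hd2 j h2 hj (by omega); omega
    exact h132 ⟨0, 1, j, by omega, by omega, hj, by omega, hlt1⟩
  have h13 := hub 1 (by omega)
  have hc : pv W 1 = pv W 0 + 1 ∧ 2*n ≤ pv W 0 ∧ pv W 0 ≤ 2*n+1 := by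
    rcases (show pv W 1 = 2*n+1 ∨ pv W 1 = 2*n+2 by omega) with h1 | h1
    · obtain ⟨k, hk, hkv⟩ := pv_surj W (show 2*n < 2*n+3 by omega)
      rcases (show k = 0 ∨ k = 1 ∨ 2 ≤ k by omega) with rfl | rfl | hk2
      · omega
      · omega
      · have := hd4 k hk2 hk (by omega); omega
    · obtain ⟨k, hk, hkv⟩ := pv_surj W (show 2*n+1 < 2*n+3 by omega)
      rcases (show k = 0 ∨ k = 1 ∨ 2 ≤ k by omega) with rfl | rfl | hk2
      · omega
      · omega
      · have := hd4 k hk2 hk (by omega); omega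
  -- entries at positions ≥ 2 avoid the two top-of-front values
  have hvals : ∀ k, k < 2*n+1 → pv W (k+2) ≠ pv W 0 ∧ pv W (k+2) ≠ pv W 1 ∧
      pv W (k+2) < 2*n+3 := by
    intro k hk
    refine ⟨fun h => ?_, fun h => ?_, hub _ (by omega)⟩
    · have := pv_inj W (by omega) (by omega) h; omega
    · have := pv_inj W (by omega) (by omega) h; omega
  -- the bit
  refine ⟨decide (pv W 0 = 2*n), ?_⟩
  set b := decide (pv W 0 = 2*n) with hbdef
  have hmzb : mz b n = pv W 0 := by
    unfold mz
    by_cases h : pv W 0 = 2*n <;> simp [hbdef, h] <;> omega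
  -- the small permutation
  have hbound : ∀ k : Fin (2*n+1), (if pv W ((k:ℕ)+2) < 2*n+1 then pv W ((k:ℕ)+2) else 2*n)
      < 2*n+1 := by
    intro k; split_ifs with h
    · exact h
    · omega
  have finj : Function.Injective
      (fun k : Fin (2*n+1) => (⟨_, hbound k⟩ : Fin (2*n+1))) := by
    intro k l h
    have h' := congrArg Fin.val h
    simp only [] at h'
    have hk := hvals (k:ℕ) k.isLt
    have hl := hvals (l:ℕ) l.isLt
    have : pv W ((k:ℕ)+2) = pv W ((l:ℕ)+2) := by
      split_ifs at h' <;> omega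
    have := pv_inj W (by omega) (by omega) this
    exact Fin.ext (by omega)
  set v : Equiv.Perm (Fin (2*n+1)) :=
    Equiv.ofBijective _ (Finite.injective_iff_bijective.mp finj) with hvdef
  have hpv_v : ∀ k, (hk : k < 2*n+1) →
      pv v k = if pv W (k+2) < 2*n+1 then pv W (k+2) else 2*n := by
    intro k hk
    unfold pv
    rw [dif_pos hk]
    rfl
  have hrr : ∀ k l, k < 2*n+1 → l < 2*n+1 →
      (pv v k < pv v l ↔ pv W (k+2) < pv W (l+2)) := by
    intro k l hk hl
    have hvk := hvals k hk
    have hvl := hvals l hl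
    rw [hpv_v k hk, hpv_v l hl]
    split_ifs <;> omega
  have hrho : ∀ k, k < 2*n+1 → rhoN b n (pv v k) = pv W (k+2) := by
    intro k hk
    have hvk := hvals k hk
    rw [hpv_v k hk]
    unfold rhoN
    simp only [hbdef, decide_eq_true_eq]
    split_ifs <;> omega
  refine ⟨v, ⟨?_, ?_, ?_⟩, ?_⟩
  · -- Alternating v
    rw [alternating_iff_pv]
    intro i hi
    constructor
    · intro hp
      rw [hrr i (i+1) (by omega) (by omega), show i+1+2 = i+2+1 from rfl]
      exact (hA (i+2) (by omega)).1 (by omega)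
    · intro hp
      rw [hrr (i+1) i (by omega) (by omega), show i+1+2 = i+2+1 from rfl]
      exact (hA (i+2) (by omega)).2 (by omega)
  · -- Avoids132 v
    rw [avoids132_iff_pv]
    rintro ⟨a, c, e, hac, hce, he, h1, h2⟩
    rw [hrr a e (by omega) (by omega)] at h1
    rw [hrr e c (by omega) (by omega)] at h2
    exact h132 ⟨a+2, c+2, e+2, by omega, by omega, by omega, h1, h2⟩
  · -- no 1234 in v
    rw [contains1234_iff_pv]
    rintro ⟨a, c, e, f, hac, hce, hef, hf, h1, h2, h3⟩
    rw [hrr a c (by omega) (by omega)] at h1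
    rw [hrr c e (by omega) (by omega)] at h2
    rw [hrr e f (by omega) (by omega)] at h3
    exact h1234 ⟨a+2, c+2, e+2, f+2, by omega, by omega, by omega, by omega, h1, h2, h3⟩
  · -- ins b v = W
    have hpp : ∀ j, j < 2*n+3 → pv (ins b v) j = pv W j := by
      intro j hj
      rcases (show j = 0 ∨ j = 1 ∨ ∃ k, j = k + 2 ∧ k < 2*n+1 from by
        rcases j with _|_|j
        exacts [Or.inl rfl, Or.inr (Or.inl rfl), Or.inr (Or.inr ⟨j, rfl, by omega⟩)])
        with rfl | rfl | ⟨k, rfl, hk⟩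
      · rw [pv_ins0, hmzb]
      · rw [pv_ins1]; omega
      · rw [pv_ins2 b v hk, hrho k hk]
    apply Equiv.ext
    intro i
    apply Fin.ext
    have := hpp (i:ℕ) i.isLt
    rwa [pv_eq, pv_eq] at this

lemma ins_inj2 {b b' : Bool} {v v' : Equiv.Perm (Fin (2*n+1))}
    (h : ins b v = ins b' v') : b = b' ∧ v = v' := by
  have h1 : pv (ins b v) 1 = pv (ins b' v') 1 := by rw [h]
  rw [pv_ins1, pv_ins1] at h1
  have hb : b = b' := by
    cases b <;> cases b' <;> first | rfl | (exfalso; unfold mz at h1; simp at h1 <;> omega)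
  subst hb
  refine ⟨rfl, ?_⟩
  apply Equiv.ext
  intro k
  apply Fin.ext
  have h2 : pv (ins b v) ((k:ℕ)+2) = pv (ins b v') ((k:ℕ)+2) := by rw [h]
  rw [pv_ins2 b v k.isLt, pv_ins2 b v' k.isLt] at h2
  have := rhoN_inj b (pv_lt v k.isLt) (pv_lt v' k.isLt) h2
  rwa [pv_eq, pv_eq] at this

theorem double (n : ℕ) (hn : 1 ≤ n) :
    Nat.card {w : Equiv.Perm (Fin (2*n+3)) // Mem w} =
      2 * Nat.card {w : Equiv.Perm (Fin (2*n+1)) // Mem w} := by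
  have e : (Bool × {v : Equiv.Perm (Fin (2*n+1)) // Mem v}) ≃
      {w : Equiv.Perm (Fin (2*n+3)) // Mem w} := by
    refine Equiv.ofBijective
      (fun p => ⟨ins p.1 p.2.1, ins_mem hn p.1 p.2.1 p.2.2⟩) ⟨?_, ?_⟩
    · rintro ⟨b, v, hv⟩ ⟨b', v', hv'⟩ h
      simp only [Subtype.mk.injEq] at h
      obtain ⟨hb, hveq⟩ := ins_inj2 h
      subst hb
      subst hveq
      rfl
    · rintro ⟨W, hW⟩
      obtain ⟨b, v, hv, hE⟩ := decode W hW
      exact ⟨⟨b, ⟨v, hv⟩⟩, Subtype.ext hE⟩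
  rw [← Nat.card_congr e, Nat.card_prod]
  congr 1
  rw [Nat.card_eq_fintype_card, Fintype.card_bool]

end core

instance {α β : Type*} [LT α] [LT β] [DecidableRel ((· < ·) : α → α → Prop)]
    [DecidableRel ((· < ·) : β → β → Prop)]
    {n k : ℕ} (w : Fin n → α) (p : Fin k → β) : Decidable (Contains w p) := by
  unfold Contains StrictMono; infer_instance

instance {n : ℕ} (w : Equiv.Perm (Fin n)) : Decidable (Avoids132 w) := by
  unfold Avoids132; infer_instance

instance {n k : ℕ} (w : Equiv.Perm (Fin n)) (p : Equiv.Perm (Fin k)) :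
    Decidable (ContainsP w p) := by
  unfold ContainsP; infer_instance

instance {m : ℕ} (w : Equiv.Perm (Fin m)) : Decidable (Alternating w) :=
  decidable_of_iff (∀ i : Fin m, ∀ h : (i:ℕ) + 1 < m,
    ((i:ℕ) % 2 = 0 → w ⟨i, by omega⟩ < w ⟨(i:ℕ) + 1, h⟩) ∧
    ((i:ℕ) % 2 = 1 → w ⟨(i:ℕ) + 1, h⟩ < w ⟨i, by omega⟩))
    ⟨fun H i h => H ⟨i, by omega⟩ h, fun H i h => H (i:ℕ) h⟩

instance {m : ℕ} (w : Equiv.Perm (Fin m)) : Decidable (Mem w) := by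
  unfold Mem; infer_instance

theorem memcard (n : ℕ) :
    Nat.card {w : Equiv.Perm (Fin (2*n+1)) // Mem w} = 2^(n-1) := by
  induction n with
  | zero =>
    rw [Nat.card_eq_fintype_card]
    decide
  | succ m ih =>
    rcases Nat.eq_zero_or_pos m with rfl | hm
    · rw [Nat.card_eq_fintype_card]
      decide
    · rw [show 2*(m+1)+1 = 2*m+3 from by ring, double m hm, ih]
      rw [show m + 1 - 1 = (m-1) + 1 from by omega, pow_succ]
      ring


/-- `a_{2n+1}(132, 1234) = ⌈2^{n-1}⌉` (which in ℕ is `2^(n-1)`,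
equal to `1` when `n = 0`). -/
theorem stmt16 (n : ℕ) :
    Nat.card {w : Equiv.Perm (Fin (2 * n + 1)) //
        Alternating w ∧ Avoids132 w ∧
          ¬ ContainsP w (1 : Equiv.Perm (Fin 4))} = 2 ^ (n - 1) := memcard n
end

section
/- For all n ≥ 0 and k ≥ 2, a_{2n+1}(132, q_k) = s_n(132, k(k−1)···21), where q_k = (2k−1)(2k)(2k−3)(2k−2)···3412 is the alternating pattern of length 2k. In particular for k = 2, the number of alternating 132-avoiding permutations of length 2n+1 avoiding 3412 is 1, and for k = 3, a_{2n+1}(132, 563412) = (n² − n + 2)/2 for n ≥ 1. -/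
open Equiv

/-- The pattern `q_k = (2k-1)(2k)(2k-3)(2k-2)⋯3412`, with 0-indexed values. -/
def qpat (k : ℕ) : Fin (2 * k) → ℕ := fun i =>
  if (i : ℕ) % 2 = 0 then 2 * k - (i : ℕ) - 2 else 2 * k - (i : ℕ)

/-- The decreasing pattern `k(k-1)⋯21`, with 0-indexed values. -/
def decpat (k : ℕ) : Fin k → ℕ := fun i => k - 1 - (i : ℕ)


section Helpers
open Finset

lemma card_filter_val_lt (n t : ℕ) (h : t ≤ n) :
    (Finset.univ.filter fun j : Fin n => (j : ℕ) < t).card = t := by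
  classical
  have key : (Finset.univ.filter fun j : Fin n => (j : ℕ) < t).card = (Finset.range t).card :=
    Finset.card_bij' (fun j _ => (j : ℕ)) (fun a ha => ⟨a, by simp at ha; omega⟩)
      (by intro a ha; simp at ha ⊢; omega) (by intro a ha; simp at ha ⊢; omega)
      (by intro a ha; simp) (by intro a ha; simp)
  simpa using key

lemma card_filter_val_interval (n p c : ℕ) (h : p + c ≤ n) :
    (Finset.univ.filter fun j : Fin n => p ≤ (j : ℕ) ∧ (j : ℕ) < p + c).card = c := by
  classical
  have key : (Finset.univ.filter fun j : Fin n => p ≤ (j : ℕ) ∧ (j : ℕ) < p + c).card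
      = (Finset.range c).card :=
    Finset.card_bij' (fun j _ => (j : ℕ) - p) (fun a ha => ⟨p + a, by simp at ha; omega⟩)
      (by intro a ha; simp at ha ⊢; omega) (by intro a ha; simp at ha ⊢; omega)
      (by intro a ha; simp [Fin.ext_iff] at ha ⊢; omega) (by intro a ha; simp at ha ⊢)
  simpa using key

lemma perm_val_card {m : ℕ} (σ : Equiv.Perm (Fin m)) (p : Fin m) :
    (σ p : ℕ) = (Finset.univ.filter fun q => σ q < σ p).card := by
  classical
  have h1 : (Finset.univ.filter fun q => σ q < σ p)
      = (Finset.univ.filter fun v => v < σ p).image σ.symm := by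
    ext q
    simp only [Finset.mem_filter, Finset.mem_image, Finset.mem_univ, true_and]
    constructor
    · intro hq; exact ⟨σ q, hq, by simp⟩
    · rintro ⟨v, hv, rfl⟩; simpa using hv
  rw [h1, Finset.card_image_of_injective _ σ.symm.injective]
  have : (Finset.univ.filter fun v : Fin m => v < σ p) = Finset.Iio (σ p) := by
    ext v; simp
  rw [this, Fin.card_Iio]

lemma perm_eq_of_order {m : ℕ} (σ τ : Equiv.Perm (Fin m))
    (h : ∀ p q, σ p < σ q ↔ τ p < τ q) : σ = τ := by
  classical
  ext p
  have h1 := perm_val_card σ p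
  have h2 := perm_val_card τ p
  have : (Finset.univ.filter fun q => σ q < σ p) = (Finset.univ.filter fun q => τ q < τ p) := by
    ext q; simp [h q p]
  have hv : (σ p : ℕ) = (τ p : ℕ) := by rw [h1, h2, this]
  exact hv

lemma exists_rank_perm {m : ℕ} (κ : Fin m → ℕ) (hκ : Function.Injective κ) :
    ∃ w : Equiv.Perm (Fin m), ∀ p q, w p < w q ↔ κ p < κ q := by
  classical
  set s : Finset ℕ := Finset.univ.image κ with hs
  have hcard : s.card = m := by
    rw [hs, Finset.card_image_of_injective _ hκ, Finset.card_univ, Fintype.card_fin]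
  let e := s.orderIsoOfFin hcard
  let φ : Fin m → Fin m := fun p => e.symm ⟨κ p, by simp [hs]⟩
  have hφinj : Function.Injective φ := by
    intro p q hpq
    have := e.symm.injective hpq
    exact hκ (Subtype.ext_iff.mp this)
  have hφbij : Function.Bijective φ := (Finite.injective_iff_bijective).mp hφinj
  refine ⟨Equiv.ofBijective φ hφbij, ?_⟩
  intro p q
  show φ p < φ q ↔ _
  unfold φ
  rw [e.symm.lt_iff_lt]
  exact Subtype.mk_lt_mk

end Helpers

section PatternConv

lemma fmk {m : ℕ} {a b : ℕ} (ha : a < m) (hb : b < m) (h : a = b) :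
    (⟨a, ha⟩ : Fin m) = ⟨b, hb⟩ := Fin.ext h

lemma lt_flip {α : Type*} [LinearOrder α] {a b : α} (h : a ≠ b) : a < b ↔ ¬ b < a := by
  constructor
  · exact fun h1 => h1.asymm
  · intro h1; rcases lt_trichotomy a b with h2|h2|h2
    · exact h2
    · exact absurd h2 h
    · exact absurd h2 h1

lemma contains132_iff {α : Type*} [LinearOrder α] {m : ℕ} (w : Fin m → α) :
    Contains w pat132 ↔ ∃ p q r : Fin m, p < q ∧ q < r ∧ w p < w r ∧ w r < w q := by
  constructor
  · rintro ⟨f, hf, hp⟩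
    refine ⟨f 0, f 1, f 2, hf (by decide), hf (by decide), ?_, ?_⟩
    · exact (hp 0 2).mp (by simp [pat132])
    · exact (hp 2 1).mp (by simp [pat132])
  · rintro ⟨p, q, r, hpq, hqr, h3, h4⟩
    refine ⟨![p, q, r], ?_, ?_⟩
    · intro a b hab
      fin_cases a <;> fin_cases b <;>
        first
          | exact absurd hab (by decide)
          | simpa using hpq
          | simpa using hqr
          | simpa using hpq.trans hqr
    · intro i j
      fin_cases i <;> fin_cases j <;>
        simp [pat132] <;>
        first
          | exact h3
          | exact h4
          | exact h3.trans h4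
          | exact h3.le
          | exact h4.le
          | exact (h3.trans h4).le

lemma containsDec_iff {α : Type*} [LinearOrder α] {m k : ℕ} (v : Fin m → α) :
    Contains v (decpat k) ↔
      ∃ g : Fin k → Fin m, StrictMono g ∧ ∀ t t' : Fin k, t < t' → v (g t') < v (g t) := by
  constructor
  · rintro ⟨f, hf, hp⟩
    refine ⟨f, hf, fun t t' htt => ?_⟩
    refine (hp t' t).mp ?_
    have h1 := t.isLt; have h2 := t'.isLt
    simp only [decpat]
    have : (t:ℕ) < (t':ℕ) := htt
    omega
  · rintro ⟨g, hg, hchain⟩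
    refine ⟨g, hg, fun i j => ?_⟩
    have h1 := i.isLt; have h2 := j.isLt
    have hd : decpat k i < decpat k j ↔ (j:ℕ) < (i:ℕ) := by
      simp only [decpat]; omega
    rw [hd]
    constructor
    · intro hji; exact hchain j i hji
    · intro hv
      rcases lt_trichotomy (j:ℕ) (i:ℕ) with h|h|h
      · exact h
      · exact absurd (congrArg v (congrArg g (Fin.ext h.symm))) (by intro he; rw [he] at hv; exact lt_irrefl _ hv)
      · exact absurd (hchain i j h) hv.asymm

lemma qpat_lt_iff (k : ℕ) (x y : Fin (2*k)) :
    qpat k x < qpat k y ↔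
      ((y:ℕ)/2 < (x:ℕ)/2 ∨ ((x:ℕ)/2 = (y:ℕ)/2 ∧ (x:ℕ)%2 = 0 ∧ (y:ℕ)%2 = 1)) := by
  have hx := x.isLt; have hy := y.isLt
  simp only [qpat]
  split_ifs <;> omega

end PatternConv


section Structure

variable {n : ℕ} {w : Equiv.Perm (Fin (2*n+1))}

lemma no132_triple (h132 : Avoids132 w) {p q r : Fin (2*n+1)}
    (hpq : p < q) (hqr : q < r) (h1 : w p < w r) (h2 : w r < w q) : False :=
  h132 ((contains132_iff (fun i => w i)).mpr ⟨p, q, r, hpq, hqr, h1, h2⟩)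

lemma alt_up (hA : Alternating w) (i : ℕ) (h : i < n) :
    w ⟨2*i, by omega⟩ < w ⟨2*i+1, by omega⟩ :=
  (hA (2*i) (by omega)).1 (by omega)

lemma alt_down (hA : Alternating w) (i : ℕ) (h : i + 1 ≤ n) :
    w ⟨2*i+2, by omega⟩ < w ⟨2*i+1, by omega⟩ :=
  (hA (2*i+1) (by omega)).2 (by omega)

lemma val_dec_adj (hA : Alternating w) (h132 : Avoids132 w) (j : ℕ) (h : j < n) :
    w ⟨2*j+2, by omega⟩ < w ⟨2*j, by omega⟩ := by
  rcases lt_trichotomy (w ⟨2*j+2, by omega⟩) (w ⟨2*j, by omega⟩) with hc|hc|hc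
  · exact hc
  · exfalso
    have := w.injective hc
    simp [Fin.ext_iff] at this
  · exfalso
    exact no132_triple h132 (p := ⟨2*j, by omega⟩) (q := ⟨2*j+1, by omega⟩)
      (r := ⟨2*j+2, by omega⟩) (by simp [Fin.lt_def]) (by simp [Fin.lt_def])
      hc (alt_down hA j (by omega))

lemma val_dec (hA : Alternating w) (h132 : Avoids132 w) (j j' : ℕ) (hjj : j < j') (h' : j' ≤ n) :
    w ⟨2*j', by omega⟩ < w ⟨2*j, by omega⟩ := by
  induction j' with
  | zero => omega
  | succ m ih =>
    rcases Nat.lt_or_ge j m with hm|hm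
    · have h1 := ih hm (by omega)
      have h2 : w ⟨2*(m+1), by omega⟩ < w ⟨2*m, by omega⟩ :=
        val_dec_adj hA h132 m (by omega)
      exact h2.trans h1
    · have hjm : j = m := by omega
      subst hjm
      exact val_dec_adj hA h132 j (by omega)

lemma val_dec_le (hA : Alternating w) (h132 : Avoids132 w) (j j' : ℕ) (hjj : j ≤ j') (h' : j' ≤ n) :
    w ⟨2*j', by omega⟩ ≤ w ⟨2*j, by omega⟩ := by
  rcases Nat.eq_or_lt_of_le hjj with h|h
  · subst h; exact le_refl _
  · exact (val_dec hA h132 j j' h h').le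

lemma vl_lt_iff (hA : Alternating w) (h132 : Avoids132 w) (j j' : ℕ) (hj : j ≤ n) (hj' : j' ≤ n) :
    w ⟨2*j, by omega⟩ < w ⟨2*j', by omega⟩ ↔ j' < j := by
  constructor
  · intro h
    by_contra hc
    have : w ⟨2*j', by omega⟩ ≤ w ⟨2*j, by omega⟩ := val_dec_le hA h132 j j' (by omega) hj'
    exact absurd h (not_lt.mpr this)
  · intro h; exact val_dec hA h132 j' j h hj

lemma valley_lt_peak_of_gt (hA : Alternating w) (h132 : Avoids132 w) (i j : ℕ)
    (hi : i < n) (hj : j ≤ n) (hij : i < j) :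
    w ⟨2*j, by omega⟩ < w ⟨2*i+1, by omega⟩ := by
  have h1 : w ⟨2*j, by omega⟩ ≤ w ⟨2*(i+1), by omega⟩ :=
    val_dec_le hA h132 (i+1) j (by omega) hj
  have h2 : w ⟨2*(i+1), by omega⟩ < w ⟨2*i+1, by omega⟩ := alt_down hA i (by omega)
  exact lt_of_le_of_lt h1 h2

lemma lemV (hA : Alternating w) (h132 : Avoids132 w) (i j : ℕ) (hi : i < n) (hj : j ≤ n) :
    w ⟨2*i+1, by omega⟩ < w ⟨2*j, by omega⟩ ↔
      ∃ l : Fin n, j ≤ (l:ℕ) ∧ (l:ℕ) < i ∧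
        w ⟨2*i+1, by omega⟩ < w ⟨2*(l:ℕ)+1, by have := l.isLt; omega⟩ := by
  constructor
  · intro h
    have hji : j < i := by
      by_contra hc
      have : w ⟨2*j, by omega⟩ < w ⟨2*i+1, by omega⟩ := by
        rcases Nat.eq_or_lt_of_le (Nat.le_of_not_lt hc) with h1|h1
        · subst h1
          first
            | exact alt_up hA i (by omega)
            | exact alt_up hA j (by omega)
        · exact valley_lt_peak_of_gt hA h132 i j hi hj h1
      exact absurd h this.asymm
    refine ⟨⟨j, by omega⟩, by simp, by simpa using hji, ?_⟩
    have h1 : w ⟨2*j, by omega⟩ < w ⟨2*j+1, by omega⟩ := alt_up hA j (by omega)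
    exact h.trans h1
  · rintro ⟨l, hjl, hli, hw⟩
    rcases lt_trichotomy (w ⟨2*i+1, by omega⟩) (w ⟨2*j, by omega⟩) with hc|hc|hc
    · exact hc
    · exfalso
      have := w.injective hc
      simp [Fin.ext_iff] at this
      omega
    · exfalso
      exact no132_triple h132 (p := ⟨2*j, by omega⟩) (q := ⟨2*(l:ℕ)+1, by have := l.isLt; omega⟩)
        (r := ⟨2*i+1, by omega⟩)
        (by simp [Fin.lt_def]; omega) (by simp [Fin.lt_def]; omega)
        hc hw

lemma pos_cases (p : Fin (2*n+1)) :
    (∃ i : Fin n, p = ⟨2*(i:ℕ)+1, by have := i.isLt; omega⟩) ∨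
    (∃ j : Fin (n+1), p = ⟨2*(j:ℕ), by have := j.isLt; omega⟩) := by
  have hp := p.isLt
  rcases Nat.mod_two_eq_zero_or_one (p:ℕ) with h|h
  · right
    exact ⟨⟨(p:ℕ)/2, by omega⟩, by apply Fin.ext; simp; omega⟩
  · left
    exact ⟨⟨(p:ℕ)/2, by omega⟩, by apply Fin.ext; simp; omega⟩

lemma determined {w' : Equiv.Perm (Fin (2*n+1))}
    (hA : Alternating w) (h132 : Avoids132 w)
    (hA' : Alternating w') (h132' : Avoids132 w')
    (hpk : ∀ i i' : Fin n,
      w ⟨2*(i:ℕ)+1, by have := i.isLt; omega⟩ < w ⟨2*(i':ℕ)+1, by have := i'.isLt; omega⟩ ↔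
      w' ⟨2*(i:ℕ)+1, by have := i.isLt; omega⟩ < w' ⟨2*(i':ℕ)+1, by have := i'.isLt; omega⟩) :
    w = w' := by
  have key : ∀ (i : ℕ) (j : ℕ) (hi : i < n) (hj : j ≤ n),
      (w ⟨2*i+1, by omega⟩ < w ⟨2*j, by omega⟩ ↔ w' ⟨2*i+1, by omega⟩ < w' ⟨2*j, by omega⟩) := by
    intro i j hi hj
    rw [lemV hA h132 i j hi hj, lemV hA' h132' i j hi hj]
    constructor
    · rintro ⟨l, h1, h2, h3⟩
      exact ⟨l, h1, h2, (hpk ⟨i, hi⟩ l).mp h3⟩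
    · rintro ⟨l, h1, h2, h3⟩
      exact ⟨l, h1, h2, (hpk ⟨i, hi⟩ l).mpr h3⟩
  apply perm_eq_of_order
  intro p q
  rcases pos_cases p with ⟨i, rfl⟩|⟨j, rfl⟩ <;> rcases pos_cases q with ⟨i', rfl⟩|⟨j', rfl⟩
  · exact hpk i i'
  · exact key i j' i.isLt (by have := j'.isLt; omega)
  · have hne : (⟨2*(j:ℕ), by have := j.isLt; omega⟩ : Fin (2*n+1)) ≠
        ⟨2*(i':ℕ)+1, by have := i'.isLt; omega⟩ := by
      simp [Fin.ext_iff]; omega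
    rw [lt_flip (fun h => hne (w.injective h)), lt_flip (fun h => hne (w'.injective h))]
    rw [key i' j i'.isLt (by have := j.isLt; omega)]
  · rw [vl_lt_iff hA h132 (j:ℕ) (j':ℕ) (by have := j.isLt; omega) (by have := j'.isLt; omega),
      vl_lt_iff hA' h132' (j:ℕ) (j':ℕ) (by have := j.isLt; omega) (by have := j'.isLt; omega)]

end Structure


section QPat

variable {n : ℕ} {w : Equiv.Perm (Fin (2*n+1))}

lemma q_to_dec (hA : Alternating w) (h132 : Avoids132 w) {k : ℕ}
    (hq : Contains (fun i => w i) (qpat k)) :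
    ∃ g : Fin k → Fin n, StrictMono g ∧ ∀ t t' : Fin k, t < t' →
      w ⟨2*((g t' : Fin n):ℕ)+1, by have := (g t').isLt; omega⟩ <
      w ⟨2*((g t : Fin n):ℕ)+1, by have := (g t).isLt; omega⟩ := by
  obtain ⟨f, hf, hp⟩ := hq
  have step1 : ∀ t : Fin k, ((f ⟨2*(t:ℕ)+1, by have := t.isLt; omega⟩ : Fin (2*n+1)) : ℕ) % 2 = 1 := by
    intro t
    have ht := t.isLt
    obtain ⟨x, hxdef⟩ : ∃ x, f ⟨2*(t:ℕ), by omega⟩ = x := ⟨_, rfl⟩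
    obtain ⟨y, hydef⟩ : ∃ y, f ⟨2*(t:ℕ)+1, by omega⟩ = y := ⟨_, rfl⟩
    rw [hydef]
    have hxy : x < y := by
      rw [← hxdef, ← hydef]
      exact hf (by rw [Fin.mk_lt_mk]; omega)
    have hxyv : (x:ℕ) < (y:ℕ) := hxy
    have hwxy : w x < w y := by
      rw [← hxdef, ← hydef]
      refine (hp ⟨2*(t:ℕ), by omega⟩ ⟨2*(t:ℕ)+1, by omega⟩).mp ?_
      rw [qpat_lt_iff]
      right
      simp
      omega
    by_contra hodd
    have hylt := y.isLt
    obtain ⟨j', hj'⟩ : ∃ j', (y:ℕ) = 2*j'+2 := ⟨((y:ℕ)-2)/2, by omega⟩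
    have hj'n : j' + 1 ≤ n := by omega
    have hb1 : 2*j'+1 < 2*n+1 := by omega
    have hb2 : 2*j'+2 < 2*n+1 := by omega
    have hdown : w ⟨2*j'+2, hb2⟩ < w ⟨2*j'+1, hb1⟩ := alt_down hA j' hj'n
    have e2 : w y = w ⟨2*j'+2, hb2⟩ := congrArg w (Fin.ext hj')
    rcases Nat.lt_trichotomy (x:ℕ) (2*j'+1) with hc|hc|hc
    · refine no132_triple h132 (p := x) (q := ⟨2*j'+1, hb1⟩) (r := ⟨2*j'+2, hb2⟩)
        hc (by rw [Fin.mk_lt_mk]; omega) ?_ hdown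
      rw [← e2]
      exact hwxy
    · have ex : w x = w ⟨2*j'+1, hb1⟩ := congrArg w (Fin.ext hc)
      rw [ex, e2] at hwxy
      exact absurd hwxy hdown.asymm
    · omega
  obtain ⟨g, hgspec⟩ : ∃ g : Fin k → Fin n, ∀ t : Fin k,
      (g t : ℕ) = ((f ⟨2*(t:ℕ)+1, by have := t.isLt; omega⟩ : Fin (2*n+1)) : ℕ)/2 := by
    refine ⟨fun t => ⟨((f ⟨2*(t:ℕ)+1, by have := t.isLt; omega⟩ : Fin (2*n+1)) : ℕ)/2, ?_⟩, fun t => rfl⟩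
    have h1 := step1 t
    have h2 := (f ⟨2*(t:ℕ)+1, by have := t.isLt; omega⟩).isLt
    omega
  have epk : ∀ t : Fin k, (⟨2*((g t : Fin n):ℕ)+1, by have := (g t).isLt; omega⟩ : Fin (2*n+1)) =
      f ⟨2*(t:ℕ)+1, by have := t.isLt; omega⟩ := by
    intro t
    apply Fin.ext
    have h1 := step1 t
    have h2 := hgspec t
    simp only []
    omega
  refine ⟨g, ?_, ?_⟩
  · intro t t' htt
    have hmono : f ⟨2*(t:ℕ)+1, by have := t.isLt; omega⟩ < f ⟨2*(t':ℕ)+1, by have := t'.isLt; omega⟩ := by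
      apply hf
      rw [Fin.mk_lt_mk]
      have : (t:ℕ) < (t':ℕ) := htt
      omega
    have hmv : ((f ⟨2*(t:ℕ)+1, by have := t.isLt; omega⟩ : Fin (2*n+1)) : ℕ) <
        ((f ⟨2*(t':ℕ)+1, by have := t'.isLt; omega⟩ : Fin (2*n+1)) : ℕ) := hmono
    have h1 := hgspec t
    have h2 := hgspec t'
    have h3 := step1 t
    have h4 := step1 t'
    show (g t : ℕ) < (g t' : ℕ)
    omega
  · intro t t' htt
    rw [epk t, epk t']
    refine (hp ⟨2*(t':ℕ)+1, by have := t'.isLt; omega⟩ ⟨2*(t:ℕ)+1, by have := t.isLt; omega⟩).mp ?_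
    rw [qpat_lt_iff]
    left
    simp
    have : (t:ℕ) < (t':ℕ) := htt
    omega

lemma dec_to_q (hA : Alternating w) (h132 : Avoids132 w) {k : ℕ} (g : Fin k → Fin n)
    (hg : StrictMono g)
    (hchain : ∀ t t' : Fin k, t < t' →
      w ⟨2*((g t' : Fin n):ℕ)+1, by have := (g t').isLt; omega⟩ <
      w ⟨2*((g t : Fin n):ℕ)+1, by have := (g t).isLt; omega⟩) :
    Contains (fun i => w i) (qpat k) := by
  refine ⟨fun x => ⟨2*((g ⟨(x:ℕ)/2, by have := x.isLt; omega⟩ : Fin n):ℕ) + (x:ℕ)%2, by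
    have := (g ⟨(x:ℕ)/2, by have := x.isLt; omega⟩).isLt; omega⟩, ?_, ?_⟩
  · intro x y hxy
    have hxy' : (x:ℕ) < (y:ℕ) := hxy
    simp only [Fin.lt_def]
    rcases Nat.lt_trichotomy ((x:ℕ)/2) ((y:ℕ)/2) with hc|hc|hc
    · have := hg (show (⟨(x:ℕ)/2, by have := x.isLt; omega⟩ : Fin k) < ⟨(y:ℕ)/2, by have := y.isLt; omega⟩
        from by simp [Fin.lt_def]; omega)
      have hv : ((g ⟨(x:ℕ)/2, by have := x.isLt; omega⟩ : Fin n):ℕ) <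
          ((g ⟨(y:ℕ)/2, by have := y.isLt; omega⟩ : Fin n):ℕ) := this
      omega
    · have : (⟨(x:ℕ)/2, by have := x.isLt; omega⟩ : Fin k) = ⟨(y:ℕ)/2, by have := y.isLt; omega⟩ :=
        Fin.ext hc
      rw [this]
      omega
    · omega
  · intro i j
    have hi := i.isLt; have hj := j.isLt
    rw [qpat_lt_iff]
    set s := (i:ℕ)/2 with hs
    set t := (j:ℕ)/2 with ht
    have main : ∀ a b : Fin (2*k), ((b:ℕ)/2 < (a:ℕ)/2 ∨ ((a:ℕ)/2 = (b:ℕ)/2 ∧ (a:ℕ)%2 = 0 ∧ (b:ℕ)%2 = 1)) →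
        w ⟨2*((g ⟨(a:ℕ)/2, by have := a.isLt; omega⟩ : Fin n):ℕ) + (a:ℕ)%2, by
          have := (g ⟨(a:ℕ)/2, by have := a.isLt; omega⟩).isLt; omega⟩ <
        w ⟨2*((g ⟨(b:ℕ)/2, by have := b.isLt; omega⟩ : Fin n):ℕ) + (b:ℕ)%2, by
          have := (g ⟨(b:ℕ)/2, by have := b.isLt; omega⟩).isLt; omega⟩ := by
      intro a b hab
      set sa := (⟨(a:ℕ)/2, by have := a.isLt; omega⟩ : Fin k) with hsa
      set sb := (⟨(b:ℕ)/2, by have := b.isLt; omega⟩ : Fin k) with hsb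
      change w ⟨2*((g sa : Fin n):ℕ) + (a:ℕ)%2, by have := (g sa).isLt; omega⟩ <
        w ⟨2*((g sb : Fin n):ℕ) + (b:ℕ)%2, by have := (g sb).isLt; omega⟩
      rcases hab with hab|⟨hab1, hab2, hab3⟩
      · -- b's pair is earlier : everything in a's pair is below everything in b's pair
        have hgg : g sb < g sa := hg (by simp [hsa, hsb, Fin.lt_def]; omega)
        have hgg' : ((g sb : Fin n):ℕ) < ((g sa : Fin n):ℕ) := hgg
        have hgalt := (g sa).isLt
        have hgblt := (g sb).isLt
        rcases Nat.mod_two_eq_zero_or_one (a:ℕ) with hpa|hpa <;>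
          rcases Nat.mod_two_eq_zero_or_one (b:ℕ) with hpb|hpb <;>
          simp only [hpa, hpb]
        · -- valley a vs valley b
          have := val_dec hA h132 ((g sb : Fin n):ℕ) ((g sa : Fin n):ℕ) hgg' (by omega)
          convert this using 3 <;> omega
        · -- valley a vs peak b
          have := valley_lt_peak_of_gt hA h132 ((g sb : Fin n):ℕ) ((g sa : Fin n):ℕ)
            (by omega) (by omega) hgg'
          convert this using 3 <;> omega
        · -- peak a vs valley b
          have := (lemV hA h132 ((g sa : Fin n):ℕ) ((g sb : Fin n):ℕ) (by omega) (by omega)).mpr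
            ⟨g sb, le_refl _, hgg', by
              have := hchain sb sa (by simp [hsa, hsb, Fin.lt_def]; omega)
              convert this using 2 <;> omega⟩
          convert this using 3 <;> omega
        · -- peak a vs peak b
          have := hchain sb sa (by simp [hsa, hsb, Fin.lt_def]; omega)
          convert this using 2 <;> omega
      · -- same pair, a valley, b peak
        have : sa = sb := Fin.ext hab1
        simp only [this]
        simp only [hab2, hab3]
        have := alt_up hA ((g sb : Fin n):ℕ) (g sb).isLt
        convert this using 3 <;> omega
    constructor
    · intro hcond
      exact main i j hcond
    · intro hlt
      by_contra hcond
      push_neg at hcond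
      rcases Nat.lt_trichotomy s t with hc|hc|hc
      · exact absurd (main j i (Or.inl hc)) hlt.asymm
      · rcases Nat.mod_two_eq_zero_or_one (i:ℕ) with hpi|hpi <;>
          rcases Nat.mod_two_eq_zero_or_one (j:ℕ) with hpj|hpj
        · -- same pair both valleys: i = j
          have : i = j := Fin.ext (by omega)
          rw [this] at hlt
          exact lt_irrefl _ hlt
        · exact (hcond.2 hc hpi) hpj
        · exact absurd (main j i (Or.inr ⟨hc.symm, hpj, hpi⟩)) hlt.asymm
        · have : i = j := Fin.ext (by omega)
          rw [this] at hlt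
          exact lt_irrefl _ hlt
      · exact absurd hc (by omega)

end QPat


section Construction

variable {n : ℕ}

/-- arithmetic helper -/
lemma mul_aux_lt (a b m r : ℕ) (hab : a < b) (hr : r < m) : a*m + r < b*m := by
  have h1 : (a+1)*m ≤ b*m := Nat.mul_le_mul (by omega) (le_refl m)
  have h2 : (a+1)*m = a*m + m := Nat.succ_mul a m
  omega

lemma mul_aux_lt' (a b m r r' : ℕ) (hab : a < b) (hr : r < m) (hr' : r' < m) :
    a*m + r < b*m + r' := by
  have := mul_aux_lt a b m r hab hr
  omega

lemma mul_aux_eq (a b m r r' : ℕ) (hr : r < m) (hr' : r' < m) (h : a*m + r = b*m + r') :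
    a = b ∧ r = r' := by
  rcases Nat.lt_trichotomy a b with hc|hc|hc
  · exact absurd h (Nat.ne_of_lt (mul_aux_lt' a b m r r' hc hr hr'))
  · subst hc; omega
  · exact absurd h.symm (Nat.ne_of_lt (mul_aux_lt' b a m r' r hc hr' hr))

def Sprop (u : Equiv.Perm (Fin n)) (j : ℕ) (i : Fin n) : Prop :=
  ∃ l : Fin n, j ≤ (l:ℕ) ∧ (l:ℕ) < (i:ℕ) ∧ u i < u l

lemma sprop_mono (u : Equiv.Perm (Fin n)) {j j' : ℕ} (h : j ≤ j') {i : Fin n}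
    (hS : Sprop u j' i) : Sprop u j i := by
  obtain ⟨l, h1, h2, h3⟩ := hS
  exact ⟨l, by omega, h2, h3⟩

lemma sep (u : Equiv.Perm (Fin n))
    (hu : ∀ a b c : Fin n, a < b → b < c → u a < u c → u c < u b → False)
    (j : ℕ) {i i' : Fin n} (hS : Sprop u j i) (hS' : ¬ Sprop u j i') : u i < u i' := by
  obtain ⟨l, hjl, hli, hul⟩ := hS
  rcases Nat.lt_trichotomy (i:ℕ) (i':ℕ) with h|h|h
  · by_contra hc
    push_neg at hc
    have hne : u i' ≠ u i := fun he => by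
      have := u.injective he
      rw [this] at h
      exact lt_irrefl _ h
    exact hS' ⟨i, by omega, h, lt_of_le_of_ne hc hne⟩
  · exact absurd (Fin.ext h : i = i') (fun he => hS' (he ▸ ⟨l, hjl, hli, hul⟩))
  · rcases Nat.lt_trichotomy ((l:ℕ)) ((i':ℕ)) with h2|h2|h2
    · have hne : u i' ≠ u l := fun he => by
        have := u.injective he
        rw [this] at h2
        exact lt_irrefl _ h2
      have h3 : ¬ (u i' < u l) := fun hx => hS' ⟨l, by omega, h2, hx⟩
      push_neg at h3
      exact hul.trans (lt_of_le_of_ne h3 hne.symm)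
    · have : l = i' := Fin.ext h2
      rw [← this]
      exact hul
    · by_contra hc
      push_neg at hc
      have hne : u i ≠ u i' := fun he => by
        have := u.injective he
        rw [this] at h
        exact lt_irrefl _ h
      have h4 : u i' < u i := lt_of_le_of_ne hc (fun he => hne he.symm)
      exact hu i' l i (by rw [Fin.lt_def]; omega) (by rw [Fin.lt_def]; omega) h4 hul

lemma compl_nonempty (u : Equiv.Perm (Fin n)) (j : ℕ) (hj : j < n) :
    ∃ i : Fin n, ¬ Sprop u j i := by
  classical
  have hne : (Finset.univ.filter (fun i : Fin n => j ≤ (i:ℕ))).Nonempty :=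
    ⟨⟨j, hj⟩, by simp⟩
  obtain ⟨b, hb, hmax⟩ := Finset.exists_max_image _ u hne
  refine ⟨b, ?_⟩
  rintro ⟨l, h1, h2, h3⟩
  have : u l ≤ u b := hmax l (by simp; omega)
  exact absurd h3 (not_lt.mpr this)

noncomputable def gval (u : Equiv.Perm (Fin n)) (j : ℕ) : ℕ :=
  sInf ((fun i => (u i : ℕ)) '' {i : Fin n | ¬ Sprop u j i})

lemma gval_mem (u : Equiv.Perm (Fin n)) (j : ℕ) (hj : j < n) :
    ∃ i : Fin n, ¬ Sprop u j i ∧ (u i : ℕ) = gval u j := by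
  obtain ⟨i0, hi0⟩ := compl_nonempty u j hj
  have hne : ((fun i => (u i : ℕ)) '' {i : Fin n | ¬ Sprop u j i}).Nonempty := ⟨_, ⟨i0, hi0, rfl⟩⟩
  obtain ⟨i, hi, hv⟩ := Nat.sInf_mem hne
  exact ⟨i, hi, hv⟩

lemma gval_le (u : Equiv.Perm (Fin n)) (j : ℕ) {i : Fin n} (h : ¬ Sprop u j i) :
    gval u j ≤ (u i : ℕ) :=
  Nat.sInf_le ⟨i, h, rfl⟩

lemma gval_anti (u : Equiv.Perm (Fin n)) {j j' : ℕ} (h : j ≤ j') (hj : j < n) :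
    gval u j' ≤ gval u j := by
  obtain ⟨i, hi, hv⟩ := gval_mem u j hj
  rw [← hv]
  exact gval_le u j' (fun hS => hi (sprop_mono u h hS))

noncomputable def kap (u : Equiv.Perm (Fin n)) : Fin (2*n+1) → ℕ := fun p =>
  if h : (p:ℕ) % 2 = 1 then (2 * (u ⟨(p:ℕ)/2, by have := p.isLt; omega⟩ : ℕ) + 2) * (n+2)
  else if (p:ℕ) = 2*n then 0
  else (2 * gval u ((p:ℕ)/2) + 1) * (n+2) + (n - (p:ℕ)/2)

lemma kap_peak (u : Equiv.Perm (Fin n)) (i : Fin n) :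
    kap u ⟨2*(i:ℕ)+1, by have := i.isLt; omega⟩ = (2*(u i : ℕ)+2)*(n+2) := by
  have hi := i.isLt
  have hcond : ((⟨2*(i:ℕ)+1, by omega⟩ : Fin (2*n+1)) : ℕ) % 2 = 1 := by
    show (2*(i:ℕ)+1) % 2 = 1
    omega
  simp only [kap]
  rw [dif_pos hcond]
  have he : (⟨((⟨2*(i:ℕ)+1, by omega⟩ : Fin (2*n+1)) : ℕ)/2, by have := i.isLt; omega⟩ : Fin n) = i :=
    Fin.ext (show (2*(i:ℕ)+1)/2 = (i:ℕ) by omega)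
  rw [he]

lemma kap_valley (u : Equiv.Perm (Fin n)) (j : ℕ) (hj : j < n) :
    kap u ⟨2*j, by omega⟩ = (2 * gval u j + 1)*(n+2) + (n - j) := by
  have hc1 : ¬ (((⟨2*j, by omega⟩ : Fin (2*n+1)) : ℕ) % 2 = 1) := by
    show ¬ (2*j % 2 = 1); omega
  have hc2 : ¬ (((⟨2*j, by omega⟩ : Fin (2*n+1)) : ℕ) = 2*n) := by
    show ¬ (2*j = 2*n); omega
  simp only [kap]
  rw [dif_neg hc1, if_neg hc2]
  show (2*gval u ((2*j)/2)+1)*(n+2) + (n - (2*j)/2) = _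
  rw [Nat.mul_div_cancel_left j (by norm_num : 0 < 2)]

lemma kap_last (u : Equiv.Perm (Fin n)) :
    kap u ⟨2*n, by omega⟩ = 0 := by
  have hc1 : ¬ (((⟨2*n, by omega⟩ : Fin (2*n+1)) : ℕ) % 2 = 1) := by
    show ¬ (2*n % 2 = 1); omega
  simp only [kap]
  rw [dif_neg hc1]
  simp

lemma kap_pp_iff (u : Equiv.Perm (Fin n)) (i i' : Fin n) :
    kap u ⟨2*(i:ℕ)+1, by have := i.isLt; omega⟩ < kap u ⟨2*(i':ℕ)+1, by have := i'.isLt; omega⟩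
      ↔ u i < u i' := by
  rw [kap_peak, kap_peak]
  rw [Nat.mul_lt_mul_right (by omega : 0 < n+2)]
  rw [Fin.lt_def]
  omega

lemma kap_pv_lt (u : Equiv.Perm (Fin n))
    (hu : ∀ a b c : Fin n, a < b → b < c → u a < u c → u c < u b → False)
    (j : ℕ) (hj : j ≤ n) (i : Fin n) (hS : Sprop u j i) :
    kap u ⟨2*(i:ℕ)+1, by have := i.isLt; omega⟩ < kap u ⟨2*j, by omega⟩ := by
  have hjn : j < n := by
    obtain ⟨l, h1, h2, _⟩ := hS
    have := i.isLt
    omega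
  rw [kap_peak, kap_valley u j hjn]
  obtain ⟨i0, hi0, hv⟩ := gval_mem u j hjn
  have hlt : (u i : ℕ) < gval u j := by
    rw [← hv]
    exact sep u hu j hS hi0
  have := mul_aux_lt (2*(u i : ℕ)+2) (2 * gval u j + 1) (n+2) 0 (by omega) (by omega)
  omega

lemma kap_vp_lt (u : Equiv.Perm (Fin n)) (j : ℕ) (hj : j ≤ n) (i : Fin n) (hS : ¬ Sprop u j i) :
    kap u ⟨2*j, by omega⟩ < kap u ⟨2*(i:ℕ)+1, by have := i.isLt; omega⟩ := by
  rcases Nat.eq_or_lt_of_le hj with he|hlt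
  · have e : (⟨2*j, by omega⟩ : Fin (2*n+1)) = ⟨2*n, by omega⟩ := Fin.ext (show 2*j = 2*n by omega)
    rw [e, kap_last, kap_peak]
    have : 0 < (2*(u i : ℕ)+2)*(n+2) := Nat.mul_pos (by omega) (by omega)
    omega
  · rw [kap_peak, kap_valley u j hlt]
    have hle : gval u j ≤ (u i : ℕ) := gval_le u j hS
    exact mul_aux_lt' (2 * gval u j + 1) (2*(u i : ℕ)+2) (n+2) (n-j) 0 (by omega) (by omega) (by omega)

lemma kap_pv_iff (u : Equiv.Perm (Fin n))
    (hu : ∀ a b c : Fin n, a < b → b < c → u a < u c → u c < u b → False)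
    (j : ℕ) (hj : j ≤ n) (i : Fin n) :
    (kap u ⟨2*(i:ℕ)+1, by have := i.isLt; omega⟩ < kap u ⟨2*j, by omega⟩ ↔ Sprop u j i) := by
  constructor
  · intro h
    by_contra hS
    exact absurd h (kap_vp_lt u j hj i hS).asymm
  · exact kap_pv_lt u hu j hj i

lemma kap_vv_lt (u : Equiv.Perm (Fin n)) (j j' : ℕ) (h : j < j') (hj' : j' ≤ n) :
    kap u ⟨2*j', by omega⟩ < kap u ⟨2*j, by omega⟩ := by
  have hjn : j < n := by omega
  rcases Nat.eq_or_lt_of_le hj' with he|hlt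
  · have e : (⟨2*j', by omega⟩ : Fin (2*n+1)) = ⟨2*n, by omega⟩ := Fin.ext (show 2*j' = 2*n by omega)
    rw [e, kap_last, kap_valley u j hjn]
    have : 0 < (2 * gval u j + 1)*(n+2) := Nat.mul_pos (by omega) (by omega)
    omega
  · rw [kap_valley u j hjn, kap_valley u j' hlt]
    have hle : gval u j' ≤ gval u j := gval_anti u (by omega) hjn
    rcases Nat.eq_or_lt_of_le hle with he|hlt2
    · rw [he]
      omega
    · exact mul_aux_lt' _ _ _ _ _ (by omega) (by omega) (by omega)

lemma kap_vv_iff (u : Equiv.Perm (Fin n)) (j j' : ℕ) (hj : j ≤ n) (hj' : j' ≤ n) :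
    kap u ⟨2*j, by omega⟩ < kap u ⟨2*j', by omega⟩ ↔ j' < j := by
  constructor
  · intro h
    rcases Nat.lt_trichotomy j' j with hc|hc|hc
    · exact hc
    · subst hc; exact absurd h (lt_irrefl _)
    · exact absurd h (kap_vv_lt u j j' hc hj').asymm
  · intro hc
    exact kap_vv_lt u j' j hc hj

lemma kap_inj (u : Equiv.Perm (Fin n))
    (hu : ∀ a b c : Fin n, a < b → b < c → u a < u c → u c < u b → False) :
    Function.Injective (kap u) := by
  intro p q h
  rcases pos_cases p with ⟨i, rfl⟩|⟨j, rfl⟩ <;> rcases pos_cases q with ⟨i', rfl⟩|⟨j', rfl⟩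
  · rw [kap_peak, kap_peak] at h
    obtain ⟨e1, e2⟩ := mul_aux_eq (2*(u i : ℕ)+2) (2*(u i' : ℕ)+2) (n+2) 0 0
      (by omega) (by omega) (by omega)
    have hui : (u i : ℕ) = (u i' : ℕ) := by omega
    have : u i = u i' := Fin.ext hui
    have := u.injective this
    rw [this]
  · exfalso
    have hj := j'.isLt
    rcases Nat.lt_trichotomy ((j':ℕ)) n with hlt|he|hgt
    · rw [kap_peak, kap_valley u (j':ℕ) hlt] at h
      obtain ⟨e1, e2⟩ := mul_aux_eq (2*(u i : ℕ)+2) (2*gval u (j':ℕ)+1) (n+2) 0 (n-(j':ℕ))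
        (by omega) (by omega) (by omega)
      omega
    · have e : (⟨2*(j':ℕ), by have := j'.isLt; omega⟩ : Fin (2*n+1)) = ⟨2*n, by omega⟩ :=
        Fin.ext (show 2*(j':ℕ) = 2*n by omega)
      rw [kap_peak, e, kap_last] at h
      have : 0 < (2*(u i : ℕ)+2)*(n+2) := Nat.mul_pos (by omega) (by omega)
      omega
    · omega
  · exfalso
    have hj := j.isLt
    rcases Nat.lt_trichotomy ((j:ℕ)) n with hlt|he|hgt
    · rw [kap_valley u (j:ℕ) hlt, kap_peak] at h
      obtain ⟨e1, e2⟩ := mul_aux_eq (2*gval u (j:ℕ)+1) (2*(u i' : ℕ)+2) (n+2) (n-(j:ℕ)) 0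
        (by omega) (by omega) (by omega)
      omega
    · have e : (⟨2*(j:ℕ), by have := j.isLt; omega⟩ : Fin (2*n+1)) = ⟨2*n, by omega⟩ :=
        Fin.ext (show 2*(j:ℕ) = 2*n by omega)
      rw [e, kap_last, kap_peak] at h
      have : 0 < (2*(u i' : ℕ)+2)*(n+2) := Nat.mul_pos (by omega) (by omega)
      omega
    · omega
  · have hj := j.isLt
    have hj' := j'.isLt
    have : ¬ ((j':ℕ) < (j:ℕ)) := fun hc => by
      have := kap_vv_lt u (j':ℕ) (j:ℕ) hc (by omega)
      omega
    have : ¬ ((j:ℕ) < (j':ℕ)) := fun hc => by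
      have := kap_vv_lt u (j:ℕ) (j':ℕ) hc (by omega)
      omega
    have heq : (j:ℕ) = (j':ℕ) := by omega
    exact Fin.ext (show 2*(j:ℕ) = 2*(j':ℕ) by omega)

theorem construct (u : Equiv.Perm (Fin n)) (hu132 : Avoids132 u) :
    ∃ w : Equiv.Perm (Fin (2*n+1)), Alternating w ∧ Avoids132 w ∧
      (∀ i i' : Fin n,
        w ⟨2*(i:ℕ)+1, by have := i.isLt; omega⟩ < w ⟨2*(i':ℕ)+1, by have := i'.isLt; omega⟩ ↔
        u i < u i') := by
  have hu : ∀ a b c : Fin n, a < b → b < c → u a < u c → u c < u b → False := by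
    intro a b c h1 h2 h3 h4
    exact hu132 ((contains132_iff (fun i => u i)).mpr ⟨a, b, c, h1, h2, h3, h4⟩)
  obtain ⟨w, hw⟩ := exists_rank_perm (kap u) (kap_inj u hu)
  have hPP : ∀ i i' : Fin n,
      (w ⟨2*(i:ℕ)+1, by have := i.isLt; omega⟩ < w ⟨2*(i':ℕ)+1, by have := i'.isLt; omega⟩ ↔
      u i < u i') := by
    intro i i'
    rw [hw]
    exact kap_pp_iff u i i'
  have hPV : ∀ (i : Fin n) (j : ℕ) (hj : j ≤ n),
      (w ⟨2*(i:ℕ)+1, by have := i.isLt; omega⟩ < w ⟨2*j, by omega⟩ ↔ Sprop u j i) := by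
    intro i j hj
    rw [hw]
    exact kap_pv_iff u hu j hj i
  have hVP : ∀ (i : Fin n) (j : ℕ) (hj : j ≤ n),
      (w ⟨2*j, by omega⟩ < w ⟨2*(i:ℕ)+1, by have := i.isLt; omega⟩ ↔ ¬ Sprop u j i) := by
    intro i j hj
    rw [hw]
    constructor
    · intro h hS
      exact absurd h (kap_pv_lt u hu j hj i hS).asymm
    · exact kap_vp_lt u j hj i
  have hVV : ∀ (j j' : ℕ) (hj : j ≤ n) (hj' : j' ≤ n),
      (w ⟨2*j, by omega⟩ < w ⟨2*j', by omega⟩ ↔ j' < j) := by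
    intro j j' hj hj'
    rw [hw]
    exact kap_vv_iff u j j' hj hj'
  refine ⟨w, ?_, ?_, hPP⟩
  · -- Alternating
    intro i h
    constructor
    · intro hpar
      obtain ⟨j, rfl⟩ : ∃ j, i = 2*j := ⟨i/2, by omega⟩
      have hjn : j < n := by omega
      have e2 : (⟨2*j+1, h⟩ : Fin (2*n+1)) = ⟨2*(((⟨j, hjn⟩ : Fin n)):ℕ)+1, by omega⟩ := rfl
      rw [e2]
      refine (hVP ⟨j, hjn⟩ j (by omega)).mpr ?_
      rintro ⟨l, h1, h2, h3⟩
      simp at h2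
      omega
    · intro hpar
      obtain ⟨j, rfl⟩ : ∃ j, i = 2*j+1 := ⟨i/2, by omega⟩
      have hjn : j < n := by omega
      have e1 : (⟨2*j+1, by omega⟩ : Fin (2*n+1)) = ⟨2*(((⟨j, hjn⟩ : Fin n)):ℕ)+1, by omega⟩ := rfl
      have e2 : (⟨2*j+1+1, h⟩ : Fin (2*n+1)) = ⟨2*(j+1), by omega⟩ := Fin.ext (show 2*j+1+1 = 2*(j+1) by omega)
      rw [e1, e2]
      refine (hVP ⟨j, hjn⟩ (j+1) (by omega)).mpr ?_
      rintro ⟨l, h1, h2, h3⟩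
      simp at h2
      omega
  · -- Avoids132
    intro hcont
    obtain ⟨p, q, r, hpq, hqr, h1, h2⟩ := (contains132_iff (fun i => w i)).mp hcont
    rcases pos_cases p with ⟨i, rfl⟩|⟨j, rfl⟩ <;> rcases pos_cases q with ⟨i', rfl⟩|⟨j', rfl⟩ <;>
      rcases pos_cases r with ⟨i'', rfl⟩|⟨j'', rfl⟩ <;>
      rw [Fin.mk_lt_mk] at hpq hqr
    · -- pk pk pk
      have g1 := (hPP i i'').mp h1
      have g2 := (hPP i'' i').mp h2
      exact hu i i' i'' (by rw [Fin.lt_def]; omega) (by rw [Fin.lt_def]; omega) g1 g2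
    · -- pk pk vl
      have g1 := (hPV i (j'':ℕ) (by have := j''.isLt; omega)).mp h1
      obtain ⟨l, hl1, hl2, hl3⟩ := g1
      omega
    · -- pk vl pk
      have g1 := (hPP i i'').mp h1
      have g2 := (hPV i'' (j':ℕ) (by have := j'.isLt; omega)).mp h2
      obtain ⟨l, hl1, hl2, hl3⟩ := g2
      exact hu i l i'' (by rw [Fin.lt_def]; omega) (by rw [Fin.lt_def]; omega) g1 hl3
    · -- pk vl vl
      have g1 := (hPV i (j'':ℕ) (by have := j''.isLt; omega)).mp h1
      obtain ⟨l, hl1, hl2, hl3⟩ := g1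
      omega
    · -- vl pk pk
      have g1 := (hVP i'' (j:ℕ) (by have := j.isLt; omega)).mp h1
      have g2 := (hPP i'' i').mp h2
      exact g1 ⟨i', by omega, by omega, g2⟩
    · -- vl pk vl
      have g1 := (hVV (j:ℕ) (j'':ℕ) (by have := j.isLt; omega) (by have := j''.isLt; omega)).mp h1
      omega
    · -- vl vl pk
      have g1 := (hVP i'' (j:ℕ) (by have := j.isLt; omega)).mp h1
      have g2 := (hPV i'' (j':ℕ) (by have := j'.isLt; omega)).mp h2
      exact g1 (sprop_mono u (by omega) g2)
    · -- vl vl vl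
      have g1 := (hVV (j:ℕ) (j'':ℕ) (by have := j.isLt; omega) (by have := j''.isLt; omega)).mp h1
      omega

end Construction


section Assembly

theorem part1 (n k : ℕ) :
    Nat.card {w : Equiv.Perm (Fin (2 * n + 1)) //
        Alternating w ∧ Avoids132 w ∧ ¬ Contains (fun i => w i) (qpat k)} =
      Nat.card {u : Equiv.Perm (Fin n) //
        Avoids132 u ∧ ¬ Contains (fun i => u i) (decpat k)} := by
  classical
  have hmap : ∀ u : {u : Equiv.Perm (Fin n) //
      Avoids132 u ∧ ¬ Contains (fun i => u i) (decpat k)},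
      ∃ w : {w : Equiv.Perm (Fin (2 * n + 1)) //
        Alternating w ∧ Avoids132 w ∧ ¬ Contains (fun i => w i) (qpat k)},
      ∀ i i' : Fin n,
        w.1 ⟨2*(i:ℕ)+1, by have := i.isLt; omega⟩ < w.1 ⟨2*(i':ℕ)+1, by have := i'.isLt; omega⟩ ↔
        u.1 i < u.1 i' := by
    rintro ⟨u, hu1, hu2⟩
    obtain ⟨w, hA, h132, hPP⟩ := construct u hu1
    have hqav : ¬ Contains (fun i => w i) (qpat k) := by
      intro hq
      obtain ⟨g, hg, hchain⟩ := q_to_dec hA h132 hq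
      refine hu2 ((containsDec_iff (fun i => u i)).mpr ⟨g, hg, fun t t' htt => ?_⟩)
      exact (hPP (g t') (g t)).mp (hchain t t' htt)
    exact ⟨⟨w, hA, h132, hqav⟩, hPP⟩
  set Ψ : {u : Equiv.Perm (Fin n) // Avoids132 u ∧ ¬ Contains (fun i => u i) (decpat k)} →
      {w : Equiv.Perm (Fin (2 * n + 1)) //
        Alternating w ∧ Avoids132 w ∧ ¬ Contains (fun i => w i) (qpat k)} :=
    fun u => (hmap u).choose with hΨdef
  have hΨ : ∀ u : {u : Equiv.Perm (Fin n) // Avoids132 u ∧ ¬ Contains (fun i => u i) (decpat k)},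
      ∀ i i' : Fin n,
        (Ψ u).1 ⟨2*(i:ℕ)+1, by have := i.isLt; omega⟩ <
          (Ψ u).1 ⟨2*(i':ℕ)+1, by have := i'.isLt; omega⟩ ↔
        u.1 i < u.1 i' := fun u => (hmap u).choose_spec
  have hbij : Function.Bijective Ψ := by
    constructor
    · intro u u' he
      have h1 := hΨ u
      have h2 := hΨ u'
      rw [he] at h1
      apply Subtype.ext
      apply perm_eq_of_order
      intro p q
      rw [← h1 p q, ← h2 p q]
    · rintro ⟨w, hA, h132, hq⟩
      have hinj : Function.Injective
          (fun i : Fin n => ((w ⟨2*(i:ℕ)+1, by have := i.isLt; omega⟩ : Fin (2*n+1)) : ℕ)) := by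
        intro i i' he
        simp only at he
        have : (⟨2*(i:ℕ)+1, by have := i.isLt; omega⟩ : Fin (2*n+1)) =
            ⟨2*(i':ℕ)+1, by have := i'.isLt; omega⟩ := w.injective (Fin.ext he)
        rw [Fin.mk.injEq] at this
        exact Fin.ext (by omega)
      obtain ⟨u, hu⟩ := exists_rank_perm _ hinj
      have huPP : ∀ i i' : Fin n, u i < u i' ↔
          w ⟨2*(i:ℕ)+1, by have := i.isLt; omega⟩ < w ⟨2*(i':ℕ)+1, by have := i'.isLt; omega⟩ := by
        intro i i'
        rw [hu]
        exact Iff.rfl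
      have hu132 : Avoids132 u := by
        intro hc
        obtain ⟨a, b, c, h1, h2, h3, h4⟩ := (contains132_iff (fun i => u i)).mp hc
        refine no132_triple h132 (p := ⟨2*(a:ℕ)+1, by have := a.isLt; omega⟩)
          (q := ⟨2*(b:ℕ)+1, by have := b.isLt; omega⟩)
          (r := ⟨2*(c:ℕ)+1, by have := c.isLt; omega⟩) ?_ ?_ ?_ ?_
        · rw [Fin.mk_lt_mk]
          have : (a:ℕ) < (b:ℕ) := h1
          omega
        · rw [Fin.mk_lt_mk]
          have : (b:ℕ) < (c:ℕ) := h2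
          omega
        · exact (huPP a c).mp h3
        · exact (huPP c b).mp h4
      have hudec : ¬ Contains (fun i => u i) (decpat k) := by
        intro hc
        obtain ⟨g, hg, hchain⟩ := (containsDec_iff (fun i => u i)).mp hc
        exact hq (dec_to_q hA h132 g hg (fun t t' htt => (huPP (g t') (g t)).mp (hchain t t' htt)))
      refine ⟨⟨u, hu132, hudec⟩, ?_⟩
      apply Subtype.ext
      have hPP2 := hΨ ⟨u, hu132, hudec⟩
      refine determined ?_ ?_ hA h132 ?_
      · exact (Ψ ⟨u, hu132, hudec⟩).2.1
      · exact (Ψ ⟨u, hu132, hudec⟩).2.2.1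
      · intro i i'
        rw [hPP2 i i', huPP i i']
  exact (Nat.card_eq_of_bijective Ψ hbij).symm

lemma strictMono_perm_eq_one {m : ℕ} (u : Equiv.Perm (Fin m)) (h : StrictMono (u : Fin m → Fin m)) :
    u = 1 := by
  apply perm_eq_of_order
  intro p q
  simp only [Equiv.Perm.one_apply]
  exact h.lt_iff_lt

lemma count_dec2 (n : ℕ) :
    Nat.card {u : Equiv.Perm (Fin n) //
      Avoids132 u ∧ ¬ Contains (fun i => u i) (decpat 2)} = 1 := by
  have hone : Avoids132 (1 : Equiv.Perm (Fin n)) ∧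
      ¬ Contains (fun i => (1 : Equiv.Perm (Fin n)) i) (decpat 2) := by
    constructor
    · intro hc
      obtain ⟨p, q, r, hpq, hqr, h1, h2⟩ := (contains132_iff _).mp hc
      simp only [Equiv.Perm.one_apply] at h1 h2
      exact absurd h2 hqr.asymm
    · intro hc
      obtain ⟨g, hg, hchain⟩ := (containsDec_iff _).mp hc
      have h1 := hchain 0 1 (by norm_num [Fin.lt_def])
      have h2 := hg (show (0 : Fin 2) < 1 by norm_num [Fin.lt_def])
      simp only [Equiv.Perm.one_apply] at h1
      exact absurd h1 h2.asymm
  have huniq : ∀ u : Equiv.Perm (Fin n),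
      Avoids132 u → ¬ Contains (fun i => u i) (decpat 2) → u = 1 := by
    intro u _ hdec
    apply strictMono_perm_eq_one
    intro p q hpq
    by_contra hc
    push_neg at hc
    have hne : u q ≠ u p := fun he => by
      have := u.injective he
      rw [this] at hpq
      exact lt_irrefl _ hpq
    have hlt : u q < u p := lt_of_le_of_ne hc hne
    apply hdec
    refine (containsDec_iff (fun i => u i)).mpr ⟨![p, q], ?_, ?_⟩
    · intro a b hab
      fin_cases a <;> fin_cases b <;>
        first
          | exact absurd hab (by decide)
          | simpa using hpq
    · intro t t' htt
      fin_cases t <;> fin_cases t' <;>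
        first
          | exact absurd htt (by decide)
          | simpa using hlt
  rw [Nat.card_eq_one_iff_unique]
  constructor
  · constructor
    rintro ⟨x, hx1, hx2⟩ ⟨y, hy1, hy2⟩
    apply Subtype.ext
    show x = y
    rw [huniq x hx1 hx2, huniq y hy1 hy2]
  · exact ⟨⟨1, hone⟩⟩

end Assembly


section K3

/-- the block permutation: positions `[0, b-a)` get values `a+1+i`, positions
`[b-a, b]` get values `i-(b-a)`, the rest are fixed. -/
def bfun (n a b : ℕ) : Fin n → Fin n := fun i =>
  if h : (i:ℕ) < b - a ∧ a < b ∧ b < n then ⟨a+1+(i:ℕ), by omega⟩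
  else if (i:ℕ) < b+1 then ⟨(i:ℕ) - (b-a), by have := i.isLt; omega⟩
  else ⟨(i:ℕ), i.isLt⟩

lemma bfun_val (n a b : ℕ) (hab : a < b) (hb : b < n) (i : Fin n) :
    (bfun n a b i : ℕ) =
      if (i:ℕ) < b - a then a+1+(i:ℕ) else if (i:ℕ) < b+1 then (i:ℕ) - (b-a) else (i:ℕ) := by
  unfold bfun
  split_ifs with h1 h2 h3 h4 h5 <;> first | rfl | omega

lemma bfun_inj (n a b : ℕ) (hab : a < b) (hb : b < n) : Function.Injective (bfun n a b) := by
  intro i j h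
  have hv : (bfun n a b i : ℕ) = (bfun n a b j : ℕ) := congrArg Fin.val h
  rw [bfun_val n a b hab hb, bfun_val n a b hab hb] at hv
  have hi := i.isLt
  have hj := j.isLt
  apply Fin.ext
  split_ifs at hv <;> omega

noncomputable def bperm (n a b : ℕ) (hab : a < b) (hb : b < n) : Equiv.Perm (Fin n) :=
  Equiv.ofBijective _ ((Finite.injective_iff_bijective).mp (bfun_inj n a b hab hb))

lemma bperm_val (n a b : ℕ) (hab : a < b) (hb : b < n) (i : Fin n) :
    ((bperm n a b hab hb) i : ℕ) =
      if (i:ℕ) < b - a then a+1+(i:ℕ) else if (i:ℕ) < b+1 then (i:ℕ) - (b-a) else (i:ℕ) :=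
  bfun_val n a b hab hb i

lemma bperm_avoids132 (n a b : ℕ) (hab : a < b) (hb : b < n) :
    Avoids132 (bperm n a b hab hb) := by
  intro hc
  obtain ⟨p, q, r, hpq, hqr, h1, h2⟩ := (contains132_iff _).mp hc
  have v1 : ((bperm n a b hab hb) p : ℕ) < ((bperm n a b hab hb) r : ℕ) := h1
  have v2 : ((bperm n a b hab hb) r : ℕ) < ((bperm n a b hab hb) q : ℕ) := h2
  rw [bperm_val, bperm_val] at v1
  rw [bperm_val, bperm_val] at v2
  have hpq' : (p:ℕ) < (q:ℕ) := hpq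
  have hqr' : (q:ℕ) < (r:ℕ) := hqr
  have := p.isLt; have := q.isLt; have := r.isLt
  split_ifs at v1 v2 <;> omega

lemma bperm_avoids321 (n a b : ℕ) (hab : a < b) (hb : b < n) :
    ¬ Contains (fun i => (bperm n a b hab hb) i) (decpat 3) := by
  intro hc
  obtain ⟨g, hg, hchain⟩ := (containsDec_iff _).mp hc
  have h01 := hchain 0 1 (by norm_num [Fin.lt_def])
  have h12 := hchain 1 2 (by norm_num [Fin.lt_def])
  have hg01 : g 0 < g 1 := hg (by norm_num [Fin.lt_def])
  have hg12 : g 1 < g 2 := hg (by norm_num [Fin.lt_def])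
  have v1 : ((bperm n a b hab hb) (g 1) : ℕ) < ((bperm n a b hab hb) (g 0) : ℕ) := h01
  have v2 : ((bperm n a b hab hb) (g 2) : ℕ) < ((bperm n a b hab hb) (g 1) : ℕ) := h12
  rw [bperm_val, bperm_val] at v1
  rw [bperm_val, bperm_val] at v2
  have hg01' : ((g 0 : Fin n):ℕ) < ((g 1 : Fin n):ℕ) := hg01
  have hg12' : ((g 1 : Fin n):ℕ) < ((g 2 : Fin n):ℕ) := hg12
  have := (g 0).isLt; have := (g 1).isLt; have := (g 2).isLt
  split_ifs at v1 v2 <;> omega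

lemma bperm_ne_one (n a b : ℕ) (hab : a < b) (hb : b < n) : bperm n a b hab hb ≠ 1 := by
  intro he
  have h0 : ((bperm n a b hab hb) ⟨0, by omega⟩ : ℕ) = a+1 := by
    rw [bperm_val]
    simp
    omega
  rw [he] at h0
  simp at h0

lemma bperm_inj_params (n a b a' b' : ℕ) (hab : a < b) (hb : b < n) (hab' : a' < b') (hb' : b' < n)
    (h : bperm n a b hab hb = bperm n a' b' hab' hb') : a = a' ∧ b = b' := by
  have h0 : ((bperm n a b hab hb) ⟨0, by omega⟩ : ℕ) = ((bperm n a' b' hab' hb') ⟨0, by omega⟩ : ℕ) := by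
    rw [h]
  rw [bperm_val, bperm_val] at h0
  simp at h0
  have ha : a = a' := by
    split_ifs at h0 <;> omega
  subst ha
  have h1 : ((bperm n a b hab hb) ⟨b - a, by omega⟩ : ℕ) =
      ((bperm n a b' hab' hb') ⟨b - a, by omega⟩ : ℕ) := by rw [h]
  rw [bperm_val, bperm_val] at h1
  simp at h1
  refine ⟨rfl, ?_⟩
  split_ifs at h1 <;> omega

end K3


section Char3

lemma char3 {n : ℕ} (u : Equiv.Perm (Fin n))
    (hu : ∀ x y z : Fin n, (x:ℕ) < (y:ℕ) → (y:ℕ) < (z:ℕ) →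
      (u x:ℕ) < (u z:ℕ) → (u z:ℕ) < (u y:ℕ) → False)
    (hd : ∀ x y z : Fin n, (x:ℕ) < (y:ℕ) → (y:ℕ) < (z:ℕ) →
      (u z:ℕ) < (u y:ℕ) → (u y:ℕ) < (u x:ℕ) → False)
    (hne : u ≠ 1) :
    ∃ (a b : ℕ) (hab : a < b) (hb : b < n), u = bperm n a b hab hb := by
  have hn : 0 < n := by
    by_contra h
    push_neg at h
    exact hne (Equiv.ext fun i => absurd i.isLt (by omega))
  obtain ⟨pfin, hpfin⟩ : ∃ pf : Fin n, u.symm ⟨0, hn⟩ = pf := ⟨_, rfl⟩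
  have hup : u pfin = ⟨0, hn⟩ := by rw [← hpfin]; exact u.apply_symm_apply _
  have hupv : (u pfin : ℕ) = 0 := by rw [hup]
  have hpn := pfin.isLt
  have hval0 : ∀ q : Fin n, (u q : ℕ) = 0 → q = pfin := by
    intro q hq
    have : u q = ⟨0, hn⟩ := Fin.ext hq
    have := congrArg u.symm this
    rwa [u.symm_apply_apply, hpfin] at this
  have hvalpos : ∀ q : Fin n, q ≠ pfin → 0 < (u q : ℕ) := by
    intro q hq
    rcases Nat.eq_zero_or_pos (u q : ℕ) with h|h
    · exact absurd (hval0 q h) hq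
    · exact h
  have hinjval : ∀ q q' : Fin n, (u q : ℕ) = (u q' : ℕ) → q = q' := by
    intro q q' h
    exact u.injective (Fin.ext h)
  -- G1 : increasing before pfin
  have G1 : ∀ x y : Fin n, (x:ℕ) < (y:ℕ) → (y:ℕ) < (pfin:ℕ) → (u x : ℕ) < (u y : ℕ) := by
    intro x y hxy hyp
    by_contra hc
    push_neg at hc
    have hne2 : (u y : ℕ) ≠ (u x : ℕ) := fun he => by
      have := hinjval y x he
      rw [this] at hxy
      exact lt_irrefl _ hxy
    have hlt : (u y : ℕ) < (u x : ℕ) := lt_of_le_of_ne hc hne2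
    have hy0 : 0 < (u y : ℕ) := hvalpos y (fun he => by rw [he] at hyp; exact lt_irrefl _ hyp)
    exact hd x y pfin hxy hyp (by omega) hlt
  -- G2 : increasing from pfin on
  have G2 : ∀ x y : Fin n, (pfin:ℕ) ≤ (x:ℕ) → (x:ℕ) < (y:ℕ) → (u x : ℕ) < (u y : ℕ) := by
    intro x y hpx hxy
    have hy0 : 0 < (u y : ℕ) := hvalpos y (fun he => by
      rw [he] at hxy
      omega)
    rcases Nat.eq_or_lt_of_le hpx with he|hlt
    · have : x = pfin := Fin.ext he.symm
      rw [this, hupv]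
      exact hy0
    · by_contra hc
      push_neg at hc
      have hne2 : (u y : ℕ) ≠ (u x : ℕ) := fun he => by
        have := hinjval y x he
        rw [this] at hxy
        exact lt_irrefl _ hxy
      have hlt2 : (u y : ℕ) < (u x : ℕ) := lt_of_le_of_ne hc hne2
      exact hu pfin x y hlt hxy (by omega) hlt2
  -- p ≥ 1
  have hp1 : 1 ≤ (pfin:ℕ) := by
    by_contra hc
    push_neg at hc
    apply hne
    apply strictMono_perm_eq_one
    intro x y hxy
    have : (u x : ℕ) < (u y : ℕ) := G2 x y (by omega) hxy
    exact this
  have hc1 : 1 ≤ (u ⟨0, hn⟩ : ℕ) := hvalpos ⟨0, hn⟩ (fun he => by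
    have : (0:ℕ) = (pfin:ℕ) := congrArg Fin.val he
    omega)
  -- S4 : lower bounds before pfin
  have S4 : ∀ x : ℕ, ∀ hx : x < (pfin:ℕ), (u ⟨0, hn⟩ : ℕ) + x ≤ (u ⟨x, by omega⟩ : ℕ) := by
    intro x
    induction x with
    | zero =>
      intro hx
      have e : (⟨0, by omega⟩ : Fin n) = ⟨0, hn⟩ := rfl
      rw [e]
      omega
    | succ m ih =>
      intro hx
      have h1 := ih (by omega)
      have h2 : (u ⟨m, by omega⟩ : ℕ) < (u ⟨m+1, by omega⟩ : ℕ) :=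
        G1 ⟨m, by omega⟩ ⟨m+1, by omega⟩ (by show m < m+1; omega)
          (by show m+1 < (pfin:ℕ); omega)
      omega
  have hcpn : (u ⟨0, hn⟩ : ℕ) + (pfin:ℕ) ≤ n := by
    have h1 := S4 ((pfin:ℕ)-1) (by omega)
    have h2 := (u ⟨(pfin:ℕ)-1, by omega⟩).isLt
    omega
  -- S5 : the small values after pfin
  have S5 : ∀ t : ℕ, ∀ ht : t < (u ⟨0, hn⟩ : ℕ), (u ⟨(pfin:ℕ) + t, by omega⟩ : ℕ) = t := by
    intro t
    induction t with
    | zero =>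
      intro ht
      have e : (⟨(pfin:ℕ) + 0, by omega⟩ : Fin n) = pfin := Fin.ext (show (pfin:ℕ) + 0 = (pfin:ℕ) by omega)
      rw [e, hupv]
    | succ m ih =>
      intro ht
      have h1 := ih (by omega)
      obtain ⟨q, huq⟩ : ∃ qq : Fin n, (u qq : ℕ) = m+1 :=
        ⟨u.symm ⟨m+1, by omega⟩, by rw [u.apply_symm_apply]⟩
      have hq1 : (pfin:ℕ) ≤ (q:ℕ) := by
        by_contra hcq
        push_neg at hcq
        have h2 := S4 (q:ℕ) (by omega)
        have e : (⟨(q:ℕ), by omega⟩ : Fin n) = q := Fin.ext rfl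
        rw [e] at h2
        omega
      have hq2 : (pfin:ℕ) + m < (q:ℕ) := by
        rcases Nat.lt_trichotomy ((q:ℕ)) ((pfin:ℕ) + m) with hcq|hcq|hcq
        · have := G2 q ⟨(pfin:ℕ)+m, by omega⟩ hq1 (by show (q:ℕ) < (pfin:ℕ)+m; omega)
          omega
        · have : q = ⟨(pfin:ℕ)+m, by omega⟩ := Fin.ext hcq
          rw [this] at huq
          omega
        · exact hcq
      have hb : (pfin:ℕ) + (m+1) < n := by
        have := q.isLt
        omega
      have h3 : (u ⟨(pfin:ℕ) + (m+1), by omega⟩ : ℕ) ≤ (u q : ℕ) := by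
        rcases Nat.eq_or_lt_of_le (show (pfin:ℕ) + (m+1) ≤ (q:ℕ) by omega) with he|hlt
        · have : (⟨(pfin:ℕ) + (m+1), by omega⟩ : Fin n) = q := Fin.ext he
          rw [this]
        · exact le_of_lt (G2 ⟨(pfin:ℕ)+(m+1), by omega⟩ q (by show (pfin:ℕ) ≤ (pfin:ℕ)+(m+1); omega) hlt)
      have h4 : (u ⟨(pfin:ℕ) + m, by omega⟩ : ℕ) < (u ⟨(pfin:ℕ) + (m+1), by omega⟩ : ℕ) :=
        G2 ⟨(pfin:ℕ) + m, by omega⟩ ⟨(pfin:ℕ) + (m+1), by omega⟩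
          (by show (pfin:ℕ) ≤ (pfin:ℕ)+m; omega) (by show (pfin:ℕ)+m < (pfin:ℕ)+(m+1); omega)
      omega
  -- S6 : the values before pfin via counting
  have S6 : ∀ x : ℕ, ∀ hx : x < (pfin:ℕ), (u ⟨x, by omega⟩ : ℕ) = (u ⟨0, hn⟩ : ℕ) + x := by
    intro x hx
    classical
    have hcard := perm_val_card u ⟨x, by omega⟩
    have hseteq : (Finset.univ.filter fun q => u q < u ⟨x, by omega⟩)
        = (Finset.univ.filter fun q : Fin n =>
            (q:ℕ) < x ∨ ((pfin:ℕ) ≤ (q:ℕ) ∧ (q:ℕ) < (pfin:ℕ) + (u ⟨0, hn⟩ : ℕ))) := by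
      ext q
      simp only [Finset.mem_filter, Finset.mem_univ, true_and]
      constructor
      · intro hlt
        have hlt' : (u q : ℕ) < (u ⟨x, by omega⟩ : ℕ) := hlt
        rcases Nat.lt_trichotomy ((q:ℕ)) ((pfin:ℕ)) with h1|h1|h1
        · left
          rcases Nat.lt_trichotomy ((q:ℕ)) x with h2|h2|h2
          · exact h2
          · exfalso
            have : q = ⟨x, by omega⟩ := Fin.ext h2
            rw [this] at hlt'
            exact lt_irrefl _ hlt'
          · exfalso
            have := G1 ⟨x, by omega⟩ q h2 h1
            omega
        · right
          constructor
          · omega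
          · by_contra hge
            push_neg at hge
            have : q = pfin := Fin.ext h1
            rw [this] at hge
            omega
        · by_cases h2 : (q:ℕ) < (pfin:ℕ) + (u ⟨0, hn⟩ : ℕ)
          · right; omega
          · exfalso
            push_neg at h2
            have hc2 : (u ⟨0, hn⟩ : ℕ) ≤ (u q : ℕ) := by
              have h5 := S5 ((u ⟨0, hn⟩ : ℕ) - 1) (by omega)
              have h6 : (u ⟨(pfin:ℕ) + ((u ⟨0, hn⟩ : ℕ) - 1), by omega⟩ : ℕ) < (u q : ℕ) :=
                G2 ⟨(pfin:ℕ) + ((u ⟨0, hn⟩ : ℕ) - 1), by omega⟩ q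
                  (by show (pfin:ℕ) ≤ (pfin:ℕ) + ((u ⟨0, hn⟩ : ℕ) - 1); omega)
                  (by show (pfin:ℕ) + ((u ⟨0, hn⟩ : ℕ) - 1) < (q:ℕ); omega)
              omega
            have hS4 := S4 x hx
            rcases Nat.eq_zero_or_pos x with hx0|hx0
            · subst hx0
              have e : (⟨0, by omega⟩ : Fin n) = ⟨0, hn⟩ := rfl
              rw [e] at hlt'
              omega
            · have hqne : (u ⟨0, hn⟩ : ℕ) ≠ (u q : ℕ) := fun he => by
                have := hinjval _ _ he
                have : (0:ℕ) = (q:ℕ) := congrArg Fin.val this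
                omega
              exact hu ⟨0, hn⟩ ⟨x, by omega⟩ q (by show (0:ℕ) < x; omega)
                (by show x < (q:ℕ); omega) (by omega) hlt'
      · intro h
        rcases h with h|⟨h1, h2⟩
        · exact G1 q ⟨x, by omega⟩ h hx
        · have h5 := S5 ((q:ℕ) - (pfin:ℕ)) (by omega)
          have e : (⟨(pfin:ℕ) + ((q:ℕ) - (pfin:ℕ)), by omega⟩ : Fin n) = q :=
            Fin.ext (show (pfin:ℕ) + ((q:ℕ) - (pfin:ℕ)) = (q:ℕ) by omega)
          rw [e] at h5
          have hS4 := S4 x hx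
          have : (u q : ℕ) < (u ⟨x, by omega⟩ : ℕ) := by omega
          exact this
    rw [hseteq] at hcard
    rw [Finset.filter_or] at hcard
    rw [Finset.card_union_of_disjoint] at hcard
    · rw [card_filter_val_lt n x (by omega),
        card_filter_val_interval n (pfin:ℕ) (u ⟨0, hn⟩ : ℕ) (by omega)] at hcard
      omega
    · rw [Finset.disjoint_left]
      intro q hq1 hq2
      simp only [Finset.mem_filter, Finset.mem_univ, true_and] at hq1 hq2
      omega
  -- S7 : identity on the tail
  have hlow : ∀ x : ℕ, ∀ hx : (pfin:ℕ) + (u ⟨0, hn⟩ : ℕ) ≤ x, ∀ hx2 : x < n,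
      (pfin:ℕ) + (u ⟨0, hn⟩ : ℕ) ≤ (u ⟨x, hx2⟩ : ℕ) := by
    intro x hx hx2
    by_contra hc
    push_neg at hc
    rcases Nat.lt_or_ge ((u ⟨x, hx2⟩ : ℕ)) ((u ⟨0, hn⟩ : ℕ)) with h1|h1
    · have h5 := S5 ((u ⟨x, hx2⟩ : ℕ)) h1
      have := hinjval _ _ h5
      have h7 : ((pfin:ℕ) + (u ⟨x, hx2⟩ : ℕ) : ℕ) = x := congrArg Fin.val this
      omega
    · have h6 := S6 ((u ⟨x, hx2⟩ : ℕ) - (u ⟨0, hn⟩ : ℕ)) (by omega)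
      have := hinjval _ _ (show (u ⟨(u ⟨x, hx2⟩ : ℕ) - (u ⟨0, hn⟩ : ℕ), by omega⟩ : ℕ) = (u ⟨x, hx2⟩ : ℕ) by omega)
      have h7 : ((u ⟨x, hx2⟩ : ℕ) - (u ⟨0, hn⟩ : ℕ) : ℕ) = x := congrArg Fin.val this
      omega
  have Sup : ∀ t : ℕ, ∀ h : (pfin:ℕ) + (u ⟨0, hn⟩ : ℕ) + t < n,
      (pfin:ℕ) + (u ⟨0, hn⟩ : ℕ) + t ≤ (u ⟨(pfin:ℕ) + (u ⟨0, hn⟩ : ℕ) + t, h⟩ : ℕ) := by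
    intro t
    induction t with
    | zero =>
      intro h
      have := hlow ((pfin:ℕ) + (u ⟨0, hn⟩ : ℕ)) (by omega) (by omega)
      have e : (⟨(pfin:ℕ) + (u ⟨0, hn⟩ : ℕ), by omega⟩ : Fin n)
          = ⟨(pfin:ℕ) + (u ⟨0, hn⟩ : ℕ) + 0, h⟩ :=
        Fin.ext (show (pfin:ℕ) + (u ⟨0, hn⟩ : ℕ) = (pfin:ℕ) + (u ⟨0, hn⟩ : ℕ) + 0 by omega)
      rw [e] at this
      omega
    | succ m ih =>
      intro h
      have h1 := ih (by omega)
      have h2 : (u ⟨(pfin:ℕ) + (u ⟨0, hn⟩ : ℕ) + m, by omega⟩ : ℕ)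
          < (u ⟨(pfin:ℕ) + (u ⟨0, hn⟩ : ℕ) + (m+1), by omega⟩ : ℕ) :=
        G2 ⟨(pfin:ℕ) + (u ⟨0, hn⟩ : ℕ) + m, by omega⟩
          ⟨(pfin:ℕ) + (u ⟨0, hn⟩ : ℕ) + (m+1), by omega⟩
          (by show (pfin:ℕ) ≤ (pfin:ℕ) + (u ⟨0, hn⟩ : ℕ) + m; omega)
          (by show (pfin:ℕ) + (u ⟨0, hn⟩ : ℕ) + m < (pfin:ℕ) + (u ⟨0, hn⟩ : ℕ) + (m+1); omega)
      omega
  have Sdown : ∀ t : ℕ, ∀ h : t < n, ∀ h2 : (pfin:ℕ) + (u ⟨0, hn⟩ : ℕ) ≤ n-1-t,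
      (u ⟨n-1-t, by omega⟩ : ℕ) ≤ n-1-t := by
    intro t
    induction t with
    | zero =>
      intro h h2
      have := (u ⟨n-1-0, by omega⟩).isLt
      omega
    | succ m ih =>
      intro h h2
      have h1 := ih (by omega) (by omega)
      have h3 : (u ⟨n-1-(m+1), by omega⟩ : ℕ) < (u ⟨n-1-m, by omega⟩ : ℕ) :=
        G2 ⟨n-1-(m+1), by omega⟩ ⟨n-1-m, by omega⟩
          (by show (pfin:ℕ) ≤ n-1-(m+1); omega) (by show n-1-(m+1) < n-1-m; omega)
      omega
  have S7 : ∀ x : ℕ, ∀ hx : (pfin:ℕ) + (u ⟨0, hn⟩ : ℕ) ≤ x, ∀ hx2 : x < n,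
      (u ⟨x, hx2⟩ : ℕ) = x := by
    intro x hx hx2
    have h1 := Sup (x - ((pfin:ℕ) + (u ⟨0, hn⟩ : ℕ))) (by omega)
    have e1 : (⟨(pfin:ℕ) + (u ⟨0, hn⟩ : ℕ) + (x - ((pfin:ℕ) + (u ⟨0, hn⟩ : ℕ))), by omega⟩ : Fin n)
        = ⟨x, hx2⟩ :=
      Fin.ext (show (pfin:ℕ) + (u ⟨0, hn⟩ : ℕ) + (x - ((pfin:ℕ) + (u ⟨0, hn⟩ : ℕ))) = x by omega)
    rw [e1] at h1
    have h2 := Sdown (n-1-x) (by omega) (by omega)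
    have e2 : (⟨n-1-(n-1-x), by omega⟩ : Fin n) = ⟨x, hx2⟩ :=
      Fin.ext (show n-1-(n-1-x) = x by omega)
    rw [e2] at h2
    omega
  -- final: u is the block permutation
  refine ⟨(u ⟨0, hn⟩ : ℕ) - 1, (pfin:ℕ) + (u ⟨0, hn⟩ : ℕ) - 1, by omega, by omega, ?_⟩
  apply Equiv.ext
  intro i
  apply Fin.ext
  rw [bperm_val]
  have hi := i.isLt
  split_ifs with h1 h2
  · have hx : (i:ℕ) < (pfin:ℕ) := by omega
    have h6 := S6 (i:ℕ) hx
    have e : (⟨(i:ℕ), by omega⟩ : Fin n) = i := Fin.ext rfl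
    rw [e] at h6
    omega
  · have h5 := S5 ((i:ℕ) - (pfin:ℕ)) (by omega)
    have e : (⟨(pfin:ℕ) + ((i:ℕ) - (pfin:ℕ)), by omega⟩ : Fin n) = i :=
      Fin.ext (show (pfin:ℕ) + ((i:ℕ) - (pfin:ℕ)) = (i:ℕ) by omega)
    rw [e] at h5
    omega
  · have h7 := S7 (i:ℕ) (by omega) hi
    have e : (⟨(i:ℕ), hi⟩ : Fin n) = i := Fin.ext rfl
    rw [e] at h7
    omega

end Char3


section Count3

lemma triples_of_avoids132 {n : ℕ} (u : Equiv.Perm (Fin n)) (h : Avoids132 u) :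
    ∀ x y z : Fin n, (x:ℕ) < (y:ℕ) → (y:ℕ) < (z:ℕ) →
      (u x:ℕ) < (u z:ℕ) → (u z:ℕ) < (u y:ℕ) → False := by
  intro x y z h1 h2 h3 h4
  exact h ((contains132_iff (fun i => u i)).mpr ⟨x, y, z, h1, h2, h3, h4⟩)

lemma triples_of_avoids321 {n : ℕ} (u : Equiv.Perm (Fin n))
    (h : ¬ Contains (fun i => u i) (decpat 3)) :
    ∀ x y z : Fin n, (x:ℕ) < (y:ℕ) → (y:ℕ) < (z:ℕ) →
      (u z:ℕ) < (u y:ℕ) → (u y:ℕ) < (u x:ℕ) → False := by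
  intro x y z h1 h2 h3 h4
  apply h
  refine (containsDec_iff (fun i => u i)).mpr ⟨![x, y, z], ?_, ?_⟩
  · intro a b hab
    fin_cases a <;> fin_cases b <;>
      first
        | exact absurd hab (by decide)
        | (show x < y; exact h1)
        | (show y < z; exact h2)
        | (show x < z; exact lt_trans h1 h2)
  · intro t t' htt
    fin_cases t <;> fin_cases t' <;>
      first
        | exact absurd htt (by decide)
        | (show u y < u x; exact h4)
        | (show u z < u y; exact h3)
        | (show u z < u x; exact lt_trans h3 h4)

lemma id_avoids132 (n : ℕ) : Avoids132 (1 : Equiv.Perm (Fin n)) := by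
  intro hc
  obtain ⟨p, q, r, hpq, hqr, h1, h2⟩ := (contains132_iff _).mp hc
  simp only [Equiv.Perm.one_apply] at h1 h2
  exact absurd h2 hqr.asymm

lemma id_avoids_dec {n k : ℕ} (hk : 2 ≤ k) :
    ¬ Contains (fun i => (1 : Equiv.Perm (Fin n)) i) (decpat k) := by
  intro hc
  obtain ⟨g, hg, hchain⟩ := (containsDec_iff _).mp hc
  have h1 := hchain ⟨0, by omega⟩ ⟨1, by omega⟩ (by show (0:ℕ) < 1; omega)
  have h2 := hg (show (⟨0, by omega⟩ : Fin k) < ⟨1, by omega⟩ from by show (0:ℕ) < 1; omega)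
  simp only [Equiv.Perm.one_apply] at h1
  exact absurd h1 h2.asymm

lemma count_dec3 (n : ℕ) (hn : 1 ≤ n) :
    Nat.card {u : Equiv.Perm (Fin n) //
      Avoids132 u ∧ ¬ Contains (fun i => u i) (decpat 3)} = (n^2 - n + 2)/2 := by
  classical
  have hb_lt : ∀ pr : {pr : Fin n × Fin n // pr.1 < pr.2}, ((pr.1.1 : ℕ)) < ((pr.1.2 : ℕ)) :=
    fun pr => pr.2
  let F : Option {pr : Fin n × Fin n // pr.1 < pr.2} →
      {u : Equiv.Perm (Fin n) // Avoids132 u ∧ ¬ Contains (fun i => u i) (decpat 3)} :=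
    fun o => match o with
      | none => ⟨1, id_avoids132 n, id_avoids_dec (by omega)⟩
      | some pr => ⟨bperm n (pr.1.1 : ℕ) (pr.1.2 : ℕ) (hb_lt pr) (pr.1.2.isLt),
          bperm_avoids132 _ _ _ _ _, bperm_avoids321 _ _ _ _ _⟩
  have hbij : Function.Bijective F := by
    constructor
    · intro o o' he
      match o, o' with
      | none, none => rfl
      | none, some pr =>
        exfalso
        have : (1 : Equiv.Perm (Fin n)) = bperm n (pr.1.1 : ℕ) (pr.1.2 : ℕ) (hb_lt pr) (pr.1.2.isLt) :=
          congrArg Subtype.val he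
        exact bperm_ne_one _ _ _ _ _ this.symm
      | some pr, none =>
        exfalso
        have : bperm n (pr.1.1 : ℕ) (pr.1.2 : ℕ) (hb_lt pr) (pr.1.2.isLt) = (1 : Equiv.Perm (Fin n)) :=
          congrArg Subtype.val he
        exact bperm_ne_one _ _ _ _ _ this
      | some pr, some pr' =>
        have h1 : bperm n (pr.1.1 : ℕ) (pr.1.2 : ℕ) (hb_lt pr) (pr.1.2.isLt)
            = bperm n (pr'.1.1 : ℕ) (pr'.1.2 : ℕ) (hb_lt pr') (pr'.1.2.isLt) :=
          congrArg Subtype.val he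
        obtain ⟨ha, hb⟩ := bperm_inj_params _ _ _ _ _ _ _ _ _ h1
        congr 1
        exact Subtype.ext (Prod.ext (Fin.ext ha) (Fin.ext hb))
    · rintro ⟨u, h132, hd3⟩
      by_cases hu1 : u = 1
      · refine ⟨none, ?_⟩
        apply Subtype.ext
        exact hu1.symm
      · obtain ⟨a, b, hab, hb, hEq⟩ := char3 u (triples_of_avoids132 u h132)
          (triples_of_avoids321 u hd3) hu1
        refine ⟨some ⟨(⟨a, by omega⟩, ⟨b, hb⟩), by show a < b; exact hab⟩, ?_⟩
        apply Subtype.ext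
        exact hEq.symm
  have h1 : Nat.card {u : Equiv.Perm (Fin n) //
      Avoids132 u ∧ ¬ Contains (fun i => u i) (decpat 3)}
      = Nat.card (Option {pr : Fin n × Fin n // pr.1 < pr.2}) :=
    (Nat.card_eq_of_bijective F hbij).symm
  have hX : Nat.card {pr : Fin n × Fin n // pr.1 < pr.2} = n*(n-1)/2 := by
    have e : {pr : Fin n × Fin n // pr.1 < pr.2} ≃ (Σ b : Fin n, Fin (b:ℕ)) :=
      { toFun := fun pr => ⟨pr.1.2, ⟨(pr.1.1 : ℕ), pr.2⟩⟩
        invFun := fun s => ⟨(⟨(s.2:ℕ), by have := s.2.isLt; have := s.1.isLt; omega⟩, s.1),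
          by show ((s.2:ℕ)) < ((s.1:ℕ)); exact s.2.isLt⟩
        left_inv := fun pr => rfl
        right_inv := fun s => rfl }
    rw [Nat.card_congr e, Nat.card_eq_fintype_card, Fintype.card_sigma]
    simp only [Fintype.card_fin]
    have hsum : (∑ x : Fin n, (x:ℕ)) = ∑ i ∈ Finset.range n, i :=
      Fin.sum_univ_eq_sum_range (fun i => i) n
    rw [hsum]
    exact Finset.sum_range_id n
  have hOpt : Nat.card (Option {pr : Fin n × Fin n // pr.1 < pr.2})
      = Nat.card {pr : Fin n × Fin n // pr.1 < pr.2} + 1 := by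
    rw [Nat.card_eq_fintype_card, Nat.card_eq_fintype_card, Fintype.card_option]
  rw [h1, hOpt, hX]
  have hsq : n^2 = n*n := sq n
  have h2 : n*(n-1) + n = n*n := by
    have h3 : (n-1) + 1 = n := by omega
    calc n*(n-1) + n = n*((n-1)+1) := by rw [Nat.mul_succ]
    _ = n*n := by rw [h3]
  have heven : Even (n*(n-1)) := by
    rcases n with _|m
    · simp
    · rw [Nat.mul_comm]
      exact Nat.even_mul_succ_self m
  obtain ⟨t, ht⟩ := heven
  omega

end Count3

/-- `a_{2n+1}(132, q_k) = s_n(132, k(k-1)⋯21)` for `k ≥ 2`; in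
particular `a_{2n+1}(132, 3412) = 1` and `a_{2n+1}(132, 563412) = (n²-n+2)/2`
for `n ≥ 1`. -/
theorem stmt17 (n k : ℕ) (hk : 2 ≤ k) :
    (Nat.card {w : Equiv.Perm (Fin (2 * n + 1)) //
        Alternating w ∧ Avoids132 w ∧ ¬ Contains (fun i => w i) (qpat k)} =
      Nat.card {w : Equiv.Perm (Fin n) //
        Avoids132 w ∧ ¬ Contains (fun i => w i) (decpat k)}) ∧
    Nat.card {w : Equiv.Perm (Fin (2 * n + 1)) //
        Alternating w ∧ Avoids132 w ∧ ¬ Contains (fun i => w i) (qpat 2)} = 1 ∧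
    (1 ≤ n →
      Nat.card {w : Equiv.Perm (Fin (2 * n + 1)) //
          Alternating w ∧ Avoids132 w ∧ ¬ Contains (fun i => w i) (qpat 3)} =
        (n ^ 2 - n + 2) / 2) := by
  refine ⟨part1 n k, ?_, ?_⟩
  · rw [part1 n 2, count_dec2 n]
  · intro hn
    rw [part1 n 3, count_dec3 n hn]
end
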